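/- arXiv:1706.02197 — 8 statements merged into one kernel-verified Lean document; each statement's English description precedes it below -/
import Mathlib

section
/- Let f, g : ℕ → ℝ be sequences with f(n) ≥ 0 and g(n) ≥ 0 for all n, satisfying f(n+1) ≤ f(n)² + g(n+1) for all n ≥ 0, f(0) ≤ 1/9, and ∑_{n=1}^∞ g(n) ≤ 1/81. Then ∑_{n=1}^∞ (f(n) + g(n)) ≤ 5/81. -/
/-- If `f, g : ℕ → ℝ` are nonnegative, `f(n+1) ≤ f(n)² + g(n+1)` for all `n`,
`f(0) ≤ 1/9` and `∑_{n≥1} g(n) ≤ 1/81`, then `∑_{n≥1} (f(n) + g(n)) ≤ 5/81`. -/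
theorem multiscale_sum_bound (f g : ℕ → ℝ)
    (hf : ∀ n, 0 ≤ f n) (hg : ∀ n, 0 ≤ g n)
    (hrec : ∀ n, f (n + 1) ≤ f n ^ 2 + g (n + 1))
    (hf0 : f 0 ≤ 1 / 9)
    (hgsum : Summable (fun n : ℕ => g (n + 1)))
    (hgle : ∑' n : ℕ, g (n + 1) ≤ 1 / 81) :
    Summable (fun n : ℕ => f (n + 1) + g (n + 1)) ∧
      ∑' n : ℕ, (f (n + 1) + g (n + 1)) ≤ 5 / 81 := by
  -- each g(n+1) is at most the tsum, hence ≤ 1/81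
  have hgn : ∀ n, g (n + 1) ≤ 1 / 81 := fun n =>
    le_trans (Summable.le_tsum hgsum n (fun m _ => hg (m + 1))) hgle
  -- f n ≤ 1/9 for all n
  have hf9 : ∀ n, f n ≤ 1 / 9 := by
    intro n
    induction n with
    | zero => exact hf0
    | succ k ih =>
      calc f (k + 1) ≤ f k ^ 2 + g (k + 1) := hrec k
        _ ≤ (1/9) ^ 2 + 1/81 := by
            gcongr <;> first | exact hf k | exact ih | exact hgn k
        _ ≤ 1 / 9 := by norm_num
  -- f(n+1) ≤ 2/81
  have hf2 : ∀ n, f (n + 1) ≤ 2 / 81 := by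
    intro n
    calc f (n + 1) ≤ f n ^ 2 + g (n + 1) := hrec n
      _ ≤ (1/9) ^ 2 + 1/81 := by
          gcongr <;> first | exact hf n | exact hf9 n | exact hgn n
      _ = 2 / 81 := by norm_num
  -- f(n+2) ≤ (2/81) f(n+1) + g(n+2)
  have hlin : ∀ n, f (n + 2) ≤ (2/81) * f (n + 1) + g (n + 2) := by
    intro n
    calc f (n + 2) ≤ f (n + 1) ^ 2 + g (n + 2) := hrec (n + 1)
      _ ≤ (2/81) * f (n + 1) + g (n + 2) := by
          have : f (n + 1) ^ 2 ≤ (2/81) * f (n + 1) := by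
            have := hf2 n
            nlinarith [hf (n + 1)]
          linarith
  -- partial sums of g(n+2) bounded by 1/81
  have hgpart : ∀ N : ℕ, ∑ n ∈ Finset.range N, g (n + 2) ≤ 1 / 81 := by
    intro N
    have h1 : ∑ n ∈ Finset.range N, g (n + 2) ≤ ∑ n ∈ Finset.range (N + 1), g (n + 1) := by
      rw [Finset.sum_range_succ']
      have : (fun n => g (n + 1)) ∘ Nat.succ = fun n => g (n + 2) := rfl
      simp only [ge_iff_le]
      have := hg 1
      calc ∑ n ∈ Finset.range N, g (n + 2)
          ≤ ∑ n ∈ Finset.range N, g (n + 2) + g (0 + 1) := by linarith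
        _ = ∑ i ∈ Finset.range N, g (i + 1 + 1) + g (0 + 1) := rfl
    exact le_trans h1 (le_trans (Summable.sum_le_tsum _ (fun m _ => hg (m + 1)) hgsum) hgle)
  -- partial sums of f(n+1) bounded by 3/79
  have hfpart : ∀ N : ℕ, ∑ n ∈ Finset.range N, f (n + 1) ≤ 3 / 79 := by
    intro N
    induction N with
    | zero => norm_num
    | succ k ih =>
      rw [Finset.sum_range_succ']
      have hstep : ∑ i ∈ Finset.range k, f (i + 1 + 1)
          ≤ (2/81) * ∑ i ∈ Finset.range k, f (i + 1) + ∑ i ∈ Finset.range k, g (i + 2) := by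
        rw [Finset.mul_sum, ← Finset.sum_add_distrib]
        exact Finset.sum_le_sum fun i _ => hlin i
      have h1 := hgpart k
      have h2 := hf2 0
      have hfs : (0:ℝ) ≤ ∑ i ∈ Finset.range k, f (i + 1) :=
        Finset.sum_nonneg fun i _ => hf (i + 1)
      calc ∑ i ∈ Finset.range k, f (i + 1 + 1) + f (0 + 1)
          ≤ ((2/81) * ∑ i ∈ Finset.range k, f (i + 1) + ∑ i ∈ Finset.range k, g (i + 2))
              + 2/81 := by gcongr
        _ ≤ (2/81) * (3/79) + 1/81 + 2/81 := by gcongr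
        _ ≤ 3 / 79 := by norm_num
  -- summability
  have hfsum : Summable (fun n : ℕ => f (n + 1)) :=
    summable_of_sum_range_le (fun n => hf (n + 1)) hfpart
  refine ⟨hfsum.add hgsum, ?_⟩
  rw [Summable.tsum_add hfsum hgsum]
  have hft : ∑' n : ℕ, f (n + 1) ≤ 3 / 79 := Summable.tsum_le_of_sum_range_le hfsum hfpart
  linarith
end

section
/- Let f, g : ℕ → ℝ be sequences with f(n) ≥ 0 and g(n) ≥ 0 for all n, satisfying f(n+1) ≤ f(n)² + g(n+1) for all n ≥ 0, f(0) ≤ 1/9, and ∑_{n=1}^∞ g(n) ≤ 1/81. Then for every n ≥ 1, f(n) ≤ 9^{-(n+1)} + ∑_{k=1}^{n} 9^{-(n-k)} · g(k). -/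
/-- If `f, g : ℕ → ℝ` are nonnegative, `f(n+1) ≤ f(n)² + g(n+1)` for all `n`,
`f(0) ≤ 1/9` and `∑_{n≥1} g(n) ≤ 1/81`, then for every `n ≥ 1`,
`f(n) ≤ 9^{-(n+1)} + ∑_{k=1}^{n} 9^{-(n-k)} · g(k)`. -/
theorem multiscale_iterated_bound (f g : ℕ → ℝ)
    (hf : ∀ n, 0 ≤ f n) (hg : ∀ n, 0 ≤ g n)
    (hrec : ∀ n, f (n + 1) ≤ f n ^ 2 + g (n + 1))
    (hf0 : f 0 ≤ 1 / 9)
    (hgsum : Summable (fun n : ℕ => g (n + 1)))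
    (hgle : ∑' n : ℕ, g (n + 1) ≤ 1 / 81) :
    ∀ n : ℕ, 1 ≤ n →
      f n ≤ ((9 : ℝ) ^ (n + 1))⁻¹ + ∑ k ∈ Finset.Icc 1 n, ((9 : ℝ) ^ (n - k))⁻¹ * g k := by
  -- partial sums of g are bounded by 1/81
  have hgpart : ∀ n : ℕ, ∑ k ∈ Finset.Icc 1 n, g k ≤ 1 / 81 := by
    intro n
    have heq : ∑ k ∈ Finset.Icc 1 n, g k = ∑ j ∈ Finset.range n, g (j + 1) := by
      rw [Finset.range_eq_Ico, ← Finset.Ico_add_one_right_eq_Icc]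
      rw [Finset.sum_Ico_eq_sum_range]
      simp [add_comm]
    rw [heq]
    exact le_trans (Summable.sum_le_tsum _ (fun i _ => hg _) hgsum) hgle
  have hwt : ∀ n : ℕ, ∑ k ∈ Finset.Icc 1 n, ((9 : ℝ) ^ (n - k))⁻¹ * g k ≤ 1 / 81 := by
    intro n
    refine le_trans (Finset.sum_le_sum (fun k _ => ?_)) (hgpart n)
    have h1 : (1 : ℝ) ≤ (9 : ℝ) ^ (n - k) := one_le_pow₀ (by norm_num)
    have : ((9 : ℝ) ^ (n - k))⁻¹ ≤ 1 := by
      rw [inv_le_one_iff₀]; right; exact h1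
    calc ((9 : ℝ) ^ (n - k))⁻¹ * g k ≤ 1 * g k := mul_le_mul_of_nonneg_right this (hg k)
      _ = g k := one_mul _
  intro n hn
  induction n, hn using Nat.le_induction with
  | base =>
      have h1 := hrec 0
      have : f 0 ^ 2 ≤ 1 / 81 := by nlinarith [hf 0]
      simp only [Finset.Icc_self, Finset.sum_singleton]
      norm_num
      linarith [h1]
  | succ n hn ih =>
      -- f n ≤ 1/9
      have hpow : ((9 : ℝ) ^ (n + 1))⁻¹ ≤ 1 / 81 := by
        rw [inv_le_comm₀ (by positivity) (by norm_num)]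
        calc (1 / 81 : ℝ)⁻¹ = (9 : ℝ) ^ 2 := by norm_num
          _ ≤ (9 : ℝ) ^ (n + 1) := pow_le_pow_right₀ (by norm_num) (by omega)
      have hfn : f n ≤ 1 / 9 := by
        have := hwt n
        linarith [ih]
      have hsq : f n ^ 2 ≤ (1 / 9) * f n := by nlinarith [hf n]
      have step : f (n + 1) ≤ (1 / 9) * f n + g (n + 1) := by
        have := hrec n
        linarith
      have step2 : f (n + 1) ≤ (1 / 9) * (((9 : ℝ) ^ (n + 1))⁻¹
          + ∑ k ∈ Finset.Icc 1 n, ((9 : ℝ) ^ (n - k))⁻¹ * g k) + g (n + 1) := by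
        have := mul_le_mul_of_nonneg_left ih (by norm_num : (0:ℝ) ≤ 1/9)
        linarith
      refine step2.trans (le_of_eq ?_)
      rw [Finset.sum_Icc_succ_top (by omega : 1 ≤ n + 1)]
      have hlast : ((9 : ℝ) ^ (n + 1 - (n + 1)))⁻¹ * g (n + 1) = g (n + 1) := by
        simp
      rw [hlast]
      have hsum : ∑ k ∈ Finset.Icc 1 n, ((9 : ℝ) ^ (n + 1 - k))⁻¹ * g k
          = (1 / 9) * ∑ k ∈ Finset.Icc 1 n, ((9 : ℝ) ^ (n - k))⁻¹ * g k := by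
        rw [Finset.mul_sum]
        refine Finset.sum_congr rfl (fun k hk => ?_)
        have hk' : k ≤ n := (Finset.mem_Icc.mp hk).2
        have : n + 1 - k = (n - k) + 1 := by omega
        rw [this, pow_succ]
        rw [mul_inv]
        ring
      rw [hsum]
      have : ((9 : ℝ) ^ (n + 1 + 1))⁻¹ = (1 / 9) * ((9 : ℝ) ^ (n + 1))⁻¹ := by
        rw [pow_succ, mul_inv]; ring
      rw [this]
      ring
end

section
/- Let d ≥ 2 and suppose A ⊆ ℝ^d is closed, connected, and unbounded, and that ℝ^d \ A has an unbounded connected component. Then the topological frontier (boundary) ∂A of A contains an unbounded connected subset; equivalently, ∂A has an unbounded connected component. -/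
open Bornology Metric Set

noncomputable section

namespace FrontierAux

/-- An integer-valued function continuous on a preconnected set takes equal values. -/
lemma int_valued_eq {X : Type*} [TopologicalSpace X] {s : Set X} (hs : IsPreconnected s)
    {h : X → ℝ} (hc : ContinuousOn h s) (hint : ∀ x ∈ s, ∃ n : ℤ, h x = n)
    {a b : X} (ha : a ∈ s) (hb : b ∈ s) : h a = h b := by
  have key : ∀ a b : X, a ∈ s → b ∈ s → h a < h b → False := by
    intro a b ha hb hlt
    obtain ⟨na, hna⟩ := hint a ha
    obtain ⟨nb, hnb⟩ := hint b hb
    have h1 : na < nb := by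
      rw [hna, hnb] at hlt; exact_mod_cast hlt
    have h1' : (na : ℝ) + 1 ≤ nb := by exact_mod_cast h1
    have hmem : h a + 1/2 ∈ Icc (h a) (h b) := by
      constructor
      · linarith
      · rw [hna, hnb]; linarith
    obtain ⟨c, hcs, hcv⟩ := hs.intermediate_value ha hb hc hmem
    obtain ⟨n, hn⟩ := hint c hcs
    rw [hn, hna] at hcv
    have h2 : ((2*(n - na) : ℤ) : ℝ) = 1 := by push_cast; linarith
    have h3 : (2*(n - na) : ℤ) = 1 := by exact_mod_cast h2
    omega
  rcases lt_trichotomy (h a) (h b) with h' | h' | h'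
  · exact absurd (key a b ha hb h') (by simp)
  · exact h'
  · exact absurd (key b a hb ha h') (by simp)

lemma prod_div_telescope (F : ℕ → ℂ) (hF : ∀ j, F j ≠ 0) (m : ℕ) :
    ∏ j ∈ Finset.range m, F (j+1) / F j = F m / F 0 := by
  induction m with
  | zero => simp [div_self (hF 0)]
  | succ k ih =>
    rw [Finset.prod_range_succ, ih]
    rw [div_mul_div_comm, mul_comm (F k) (F (k+1))]
    rw [mul_div_mul_right (F (k+1)) (F 0) (hF k)]

variable {E : Type*} [NormedAddCommGroup E] [NormedSpace ℝ E]

/-- quotient in the slit plane when numerator is close to denominator -/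
lemma div_mem_slitPlane {a b : ℂ} (hb : b ≠ 0)
    (h : ‖a - b‖ < ‖b‖) : a / b ∈ Complex.slitPlane := by
  have hbpos : 0 < ‖b‖ := by
    simpa [norm_pos_iff] using hb
  have h1 : ‖a/b - 1‖ < 1 := by
    have : a/b - 1 = (a - b)/b := by field_simp
    rw [this, norm_div, div_lt_one hbpos]
    exact h
  rw [Complex.mem_slitPlane_iff]
  left
  have h2 : (a/b).re = 1 + (a/b - 1).re := by simp
  have h3 := Complex.abs_re_le_norm (a/b - 1)
  have h4 : -(1:ℝ) < (a/b - 1).re := by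
    have := neg_abs_le (a/b - 1).re
    have := lt_of_le_of_lt h3 h1
    linarith [abs_le.1 (le_of_lt (lt_of_le_of_lt h3 h1))]
  linarith


variable [ProperSpace E]

lemma lift_ball {f : E → ℂ} (hf : Continuous f) (hf0 : ∀ x, f x ≠ 0) (n : ℕ) :
    ∃ g : E → ℂ, ContinuousOn g (closedBall 0 (n+1)) ∧
      (∀ x ∈ closedBall 0 (n+1), Complex.exp (g x) = f x) ∧ g 0 = Complex.log (f 0) := by
  set K := closedBall (0:E) (n+1) with hKdef
  have hKc : IsCompact K := isCompact_closedBall 0 _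
  have hK0 : (0:E) ∈ K := mem_closedBall_self (by positivity)
  obtain ⟨z, hzK, hz⟩ := hKc.exists_isMinOn ⟨0, hK0⟩
    ((continuous_norm.comp hf).continuousOn)
  set c := ‖f z‖ with hc
  have hcpos : 0 < c := norm_pos_iff.2 (hf0 z)
  obtain ⟨δ, hδpos, hδ⟩ := (Metric.uniformContinuousOn_iff.1
    (hKc.uniformContinuousOn_of_continuous hf.continuousOn)) c hcpos
  obtain ⟨N, hN⟩ := exists_nat_gt (((n:ℝ)+1)/δ)
  have hNpos : 0 < (N:ℝ) := lt_of_le_of_lt (by positivity) hN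
  have hstep : ((n:ℝ)+1)/N < δ := by
    rw [div_lt_iff₀ hNpos]
    rw [div_lt_iff₀ hδpos] at hN
    nlinarith
  set pt : ℕ → E → E := fun j x => ((j:ℝ)/N) • x with hptdef
  have hptK : ∀ (j:ℕ), j ≤ N → ∀ x ∈ K, pt j x ∈ K := by
    intro j hj x hx
    rw [hKdef, mem_closedBall_zero_iff] at *
    rw [hptdef]
    simp only [norm_smul, Real.norm_eq_abs]
    have h1 : |(j:ℝ)/N| ≤ 1 := by
      rw [abs_of_nonneg (by positivity), div_le_one hNpos]
      exact_mod_cast hj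
    calc |(j:ℝ)/N| * ‖x‖ ≤ 1 * ‖x‖ := by
          exact mul_le_mul_of_nonneg_right h1 (norm_nonneg _)
      _ = ‖x‖ := one_mul _
      _ ≤ (n:ℝ)+1 := hx
  have hdist : ∀ (j:ℕ), ∀ x ∈ K, dist (pt (j+1) x) (pt j x) < δ := by
    intro j x hx
    rw [hKdef, mem_closedBall_zero_iff] at hx
    rw [dist_eq_norm, hptdef]
    have heq : (((j:ℝ)+1)/(N:ℝ)) • x - (((j:ℝ))/(N:ℝ)) • x = ((1:ℝ)/(N:ℝ)) • x := by
      rw [← sub_smul]; congr 1; field_simp; ring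
    simp only [Nat.cast_add, Nat.cast_one]
    rw [heq, norm_smul, Real.norm_eq_abs, abs_of_nonneg (by positivity)]
    calc (1:ℝ)/N * ‖x‖ ≤ 1/N * ((n:ℝ)+1) := by
          exact mul_le_mul_of_nonneg_left hx (by positivity)
      _ = ((n:ℝ)+1)/N := by ring
      _ < δ := hstep
  have hratio : ∀ (j:ℕ), j < N → ∀ x ∈ K,
      f (pt (j+1) x) / f (pt j x) ∈ Complex.slitPlane := by
    intro j hj x hx
    apply div_mem_slitPlane (hf0 _)
    have h1 := hδ _ (hptK (j+1) hj x hx) _ (hptK j (le_of_lt hj) x hx) (hdist j x hx)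
    rw [Complex.dist_eq] at h1
    calc ‖f (pt (j+1) x) - f (pt j x)‖ < c := h1
      _ ≤ ‖f (pt j x)‖ := by
          exact isMinOn_iff.1 hz _ (hptK j (le_of_lt hj) x hx)
  refine ⟨fun x => (∑ j ∈ Finset.range N,
      Complex.log (f (pt (j+1) x) / f (pt j x))) + Complex.log (f 0), ?_, ?_, ?_⟩
  · apply ContinuousOn.add _ continuousOn_const
    apply continuousOn_finset_sum
    intro j hj
    rw [Finset.mem_range] at hj
    apply ContinuousOn.clog
    · apply ContinuousOn.div
      · exact (hf.comp (continuous_const_smul _)).continuousOn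
      · exact (hf.comp (continuous_const_smul _)).continuousOn
      · intro x hx; exact hf0 _
    · intro x hx; exact hratio j hj x hx
  · intro x hx
    rw [Complex.exp_add, Complex.exp_sum, Complex.exp_log (hf0 0)]
    have hexplog : ∀ j : ℕ, Complex.exp (Complex.log (f (pt (j+1) x) / f (pt j x)))
        = f (pt (j+1) x) / f (pt j x) := fun j =>
      Complex.exp_log (div_ne_zero (hf0 _) (hf0 _))
    simp only [hexplog]
    rw [show (∏ j ∈ Finset.range N, f (pt (j+1) x) / f (pt j x))
        = f (pt N x) / f (pt 0 x)
      from prod_div_telescope (fun j => f (pt j x)) (fun j => hf0 _) N]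
    have hN0 : pt N x = x := by
      rw [hptdef]; simp only []; rw [div_self (ne_of_gt hNpos), one_smul]
    have h00 : pt 0 x = 0 := by rw [hptdef]; simp
    rw [hN0, h00, div_mul_cancel₀ _ (hf0 0)]
  · have : ∀ j : ℕ, f (pt (j+1) 0) / f (pt j 0) = 1 := by
      intro j
      rw [hptdef]
      simp only [smul_zero]
      exact div_self (hf0 0)
    simp [this, Complex.log_one]

lemma exists_lift {f : E → ℂ} (hf : Continuous f) (hf0 : ∀ x, f x ≠ 0) :
    ∃ g : E → ℂ, Continuous g ∧ ∀ x, Complex.exp (g x) = f x := by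
  choose g hgc hge hg0 using lift_ball hf hf0
  have compat : ∀ m k : ℕ, m ≤ k → ∀ x ∈ closedBall (0:E) (m+1), g m x = g k x := by
    intro m k hmk x hx
    have hsub : closedBall (0:E) (m+1) ⊆ closedBall 0 (k+1) :=
      closedBall_subset_closedBall (by exact_mod_cast Nat.add_le_add_right hmk 1)
    set φ : E → ℝ := fun y => (g m y - g k y).im / (2 * Real.pi) with hφdef
    have hexp1 : ∀ y ∈ closedBall (0:E) (m+1), Complex.exp (g m y - g k y) = 1 := by
      intro y hy
      rw [Complex.exp_sub, hge m y hy, hge k y (hsub hy), div_self (hf0 y)]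
    have him : ∀ (w : ℂ) (j : ℤ), w = j * (2 * Real.pi * Complex.I) →
        w.im / (2 * Real.pi) = j := by
      intro w j hw
      rw [hw]
      simp [Complex.mul_im, Complex.mul_re]
    have hφint : ∀ y ∈ closedBall (0:E) (m+1), ∃ j : ℤ, φ y = j := by
      intro y hy
      obtain ⟨j, hj⟩ := Complex.exp_eq_one_iff.1 (hexp1 y hy)
      exact ⟨j, him _ j hj⟩
    have hφcont : ContinuousOn φ (closedBall (0:E) (m+1)) := by
      apply ContinuousOn.div_const
      exact Complex.continuous_im.comp_continuousOn ((hgc m).sub ((hgc k).mono hsub))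
    have hx0 : (0:E) ∈ closedBall (0:E) (m+1) := mem_closedBall_self (by positivity)
    have hconst : φ x = φ 0 :=
      int_valued_eq (convex_closedBall (0:E) ((m:ℝ)+1)).isPreconnected hφcont hφint hx hx0
    have hφ0 : φ 0 = 0 := by
      rw [hφdef]; simp [hg0 m, hg0 k]
    obtain ⟨j, hj⟩ := Complex.exp_eq_one_iff.1 (hexp1 x hx)
    have hφx : φ x = j := him _ j hj
    have hj0 : (j:ℝ) = 0 := by rw [← hφx, hconst, hφ0]
    have hjc : (j:ℂ) = 0 := by exact_mod_cast hj0
    have : g m x - g k x = 0 := by rw [hj, hjc, zero_mul]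
    exact sub_eq_zero.1 this
  have hmem : ∀ x : E, x ∈ closedBall (0:E) (⌈‖x‖⌉₊+1) := by
    intro x
    rw [mem_closedBall_zero_iff]
    calc ‖x‖ ≤ (⌈‖x‖⌉₊ : ℝ) := Nat.le_ceil _
      _ ≤ (⌈‖x‖⌉₊ : ℝ) + 1 := by linarith
  refine ⟨fun x => g ⌈‖x‖⌉₊ x, ?_, fun x => hge _ x (hmem x)⟩
  rw [continuous_iff_continuousAt]
  intro x₀
  set m := ⌈‖x₀‖⌉₊ + 1 with hmdef
  have hEq : ∀ x ∈ ball x₀ 1, g ⌈‖x‖⌉₊ x = g m x := by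
    intro x hx
    have hd : ‖x - x₀‖ < 1 := by
      rw [← dist_eq_norm]; exact mem_ball.1 hx
    have hxn : ‖x‖ ≤ ‖x₀‖ + 1 := by
      have := norm_sub_norm_le x x₀
      linarith
    have hle : ⌈‖x‖⌉₊ ≤ m := by
      calc ⌈‖x‖⌉₊ ≤ ⌈‖x₀‖ + 1⌉₊ := Nat.ceil_mono hxn
        _ = m := by rw [Nat.ceil_add_one (norm_nonneg _)]
    exact compat _ m hle x (hmem x)
  have hx₀m : x₀ ∈ ball (0:E) (m+1) := by
    rw [mem_ball_zero_iff]
    calc ‖x₀‖ ≤ (⌈‖x₀‖⌉₊ : ℝ) := Nat.le_ceil _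
      _ < (m:ℝ) + 1 := by rw [hmdef]; push_cast; linarith
  have hcm : ContinuousAt (g m) x₀ :=
    (hgc m).continuousAt (mem_nhds_iff.2 ⟨ball (0:E) (m+1),
      fun z hz => ball_subset_closedBall hz, isOpen_ball, by exact_mod_cast hx₀m⟩)
  apply ContinuousAt.congr hcm
  exact Filter.eventuallyEq_of_mem (ball_mem_nhds x₀ one_pos) (fun x hx => (hEq x hx).symm)

lemma pair_aux (hrank : 1 < Module.rank ℝ E) {R : ℝ} (hR : 0 ≤ R) {x y : E}
    (hx : x ∈ (closedBall (0:E) R)ᶜ) (hy : y ∈ (closedBall (0:E) R)ᶜ)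
    (hxy : ‖x‖ ≤ ‖y‖) :
    ∃ t ⊆ (closedBall (0:E) R)ᶜ, x ∈ t ∧ y ∈ t ∧ IsPreconnected t := by
  have hxR : R < ‖x‖ := by
    by_contra h
    exact hx (mem_closedBall_zero_iff.2 (not_lt.1 h))
  have hyR : R < ‖y‖ := lt_of_lt_of_le hxR hxy
  have hx0 : 0 < ‖x‖ := lt_of_le_of_lt hR hxR
  have hdiv : 1 ≤ ‖y‖/‖x‖ := (one_le_div hx0).2 hxy
  refine ⟨sphere (0:E) ‖y‖ ∪ (fun c : ℝ => c • x) '' Icc 1 (‖y‖/‖x‖), ?_, ?_, ?_, ?_⟩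
  · rintro z (hz | ⟨c, hc, rfl⟩)
    · intro hmem
      rw [mem_sphere_zero_iff_norm] at hz
      rw [mem_closedBall_zero_iff, hz] at hmem
      exact absurd hmem (not_le.2 hyR)
    · intro hmem
      rw [mem_closedBall_zero_iff, norm_smul, Real.norm_eq_abs,
        abs_of_nonneg (le_trans zero_le_one hc.1)] at hmem
      nlinarith [hc.1]
  · exact Or.inr ⟨1, ⟨le_refl 1, hdiv⟩, one_smul ℝ x⟩
  · exact Or.inl (mem_sphere_zero_iff_norm.2 rfl)
  · apply IsPreconnected.union ((‖y‖/‖x‖) • x)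
    · rw [mem_sphere_zero_iff_norm, norm_smul, Real.norm_eq_abs,
        abs_of_nonneg (by positivity)]
      field_simp
    · exact ⟨‖y‖/‖x‖, ⟨hdiv, le_rfl⟩, rfl⟩
    · exact isPreconnected_sphere hrank 0 ‖y‖
    · exact isPreconnected_Icc.image _ (continuous_id.smul continuous_const).continuousOn
lemma compl_ball_preconnected (hrank : 1 < Module.rank ℝ E) {R : ℝ} (hR : 0 ≤ R) :
    IsPreconnected ((closedBall (0:E) R)ᶜ) := by
  apply isPreconnected_of_forall_pair
  intro x hx y hy
  rcases le_total ‖x‖ ‖y‖ with h | h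
  · exact pair_aux hrank hR hx hy h
  · obtain ⟨t, ht, h1, h2, h3⟩ := pair_aux hrank hR hy hx h
    exact ⟨t, ht, h2, h1, h3⟩

lemma mem_comp_of_mem_closure {α : Type*} [TopologicalSpace α] [LocallyConnectedSpace α]
    {s : Set α} (hs : IsOpen s) {z y : α} (hy : y ∈ s)
    (hyc : y ∈ closure (connectedComponentIn s z)) : y ∈ connectedComponentIn s z := by
  have hopen : IsOpen (connectedComponentIn s y) := hs.connectedComponentIn
  have hy' : y ∈ connectedComponentIn s y := mem_connectedComponentIn hy
  obtain ⟨w, hw1, hw2⟩ := _root_.mem_closure_iff.1 hyc _ hopen hy'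
  have e1 := connectedComponentIn_eq hw1
  have e2 := connectedComponentIn_eq hw2
  rw [e2, ← e1]
  exact hy'

end FrontierAux

open FrontierAux

/-- If `A ⊆ ℝ^d` (`d ≥ 2`) is closed, connected and unbounded, and the complement of `A`
has an unbounded connected component, then the frontier of `A` contains an unbounded
connected subset. -/
theorem frontier_has_unbounded_component
    (d : ℕ) (hd : 2 ≤ d) (A : Set (EuclideanSpace ℝ (Fin d)))
    (hAclosed : IsClosed A) (hAconn : IsConnected A) (hAunb : ¬ IsBounded A)
    (hcomp : ∃ x ∈ Aᶜ, ¬ IsBounded (connectedComponentIn Aᶜ x)) :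
    ∃ C : Set (EuclideanSpace ℝ (Fin d)),
      C ⊆ frontier A ∧ IsConnected C ∧ ¬ IsBounded C := by
  classical
  obtain ⟨x, hxAc, hUunb⟩ := hcomp
  set U := connectedComponentIn Aᶜ x with hUdef
  have hAopen : IsOpen Aᶜ := hAclosed.isOpen_compl
  have hUopen : IsOpen U := hAopen.connectedComponentIn
  have hUpre : IsPreconnected U := isPreconnected_connectedComponentIn
  have hUsub : U ⊆ Aᶜ := connectedComponentIn_subset _ _
  have hrank : 1 < Module.rank ℝ (EuclideanSpace ℝ (Fin d)) := by
    have h1 : Module.rank ℝ (EuclideanSpace ℝ (Fin d)) = d := by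
      rw [← Module.finrank_eq_rank, finrank_euclideanSpace_fin]
    rw [h1]
    exact_mod_cast show 1 < d by omega
  have hfrU_A : ∀ y ∈ closure U \ U, y ∈ A := by
    intro y hy
    by_contra hyA
    exact hy.2 (mem_comp_of_mem_closure hAopen (hyA : y ∈ Aᶜ) hy.1)
  have hfr_eq : frontier U = closure U \ U := hUopen.frontier_eq
  have hfrsubA : frontier U ⊆ frontier A := by
    intro y hy
    rw [hfr_eq] at hy
    have hyA : y ∈ A := hfrU_A y hy
    have hyc : y ∈ closure Aᶜ := closure_mono hUsub hy.1
    rw [hAclosed.frontier_eq]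
    refine ⟨hyA, ?_⟩
    rw [closure_compl] at hyc
    exact hyc
  -- unboundedness of the frontier
  have hfr_unb : ¬ IsBounded (frontier U) := by
    intro hb
    obtain ⟨R, hR⟩ := (isBounded_iff_subset_closedBall (0 : EuclideanSpace ℝ (Fin d))).1 hb
    set R' := max R 0 with hR'def
    have hsub : frontier U ⊆ closedBall 0 R' :=
      hR.trans (closedBall_subset_closedBall (le_max_left _ _))
    have hpre := compl_ball_preconnected (E := EuclideanSpace ℝ (Fin d)) hrank
      (le_max_right R 0)
    have hUn : ¬ U ⊆ closedBall (0 : EuclideanSpace ℝ (Fin d)) R' :=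
      fun h => hUunb ((isBounded_closedBall).subset h)
    have hAn : ¬ A ⊆ closedBall (0 : EuclideanSpace ℝ (Fin d)) R' :=
      fun h => hAunb ((isBounded_closedBall).subset h)
    obtain ⟨uu, huuU, huun⟩ := not_subset.1 hUn
    obtain ⟨aa, haaA, haan⟩ := not_subset.1 hAn
    have hVsub : (closedBall (0 : EuclideanSpace ℝ (Fin d)) R')ᶜ ⊆ U ∪ (closure U)ᶜ := by
      intro z hz
      by_cases h1 : z ∈ U
      · exact Or.inl h1
      · by_cases h2 : z ∈ closure U
        · exact absurd (hsub (hfr_eq ▸ (⟨h2, h1⟩ : z ∈ closure U \ U))) hz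
        · exact Or.inr h2
    have h1 : ((closedBall (0 : EuclideanSpace ℝ (Fin d)) R')ᶜ ∩ U).Nonempty :=
      ⟨uu, huun, huuU⟩
    have h2 : ((closedBall (0 : EuclideanSpace ℝ (Fin d)) R')ᶜ ∩ (closure U)ᶜ).Nonempty := by
      refine ⟨aa, haan, fun hc => ?_⟩
      have haU : aa ∉ U := fun hU => hUsub hU haaA
      exact haan (hsub (hfr_eq ▸ (⟨hc, haU⟩ : aa ∈ closure U \ U)))
    obtain ⟨z, hz1, hz2, hz3⟩ :=
      hpre U (closure U)ᶜ hUopen isClosed_closure.isOpen_compl hVsub h1 h2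
    exact hz3 (subset_closure hz2)
  have hfr_ne : (frontier U).Nonempty := by
    rcases Set.eq_empty_or_nonempty (frontier U) with h | h
    · rw [h] at hfr_unb; exact absurd Bornology.isBounded_empty hfr_unb
    · exact h
  -- the complement of U is preconnected
  obtain ⟨a₀, ha₀⟩ := hAconn.nonempty
  have hAUc : A ⊆ Uᶜ := fun z hz hU => hUsub hU hz
  have hWclosure : ∀ z ∈ Aᶜ, z ∉ U → closure (connectedComponentIn Aᶜ z) ⊆ Uᶜ := by
    intro z hz hzU w hw hwU
    have hwAc : w ∈ Aᶜ := hUsub hwU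
    have hwW : w ∈ connectedComponentIn Aᶜ z := mem_comp_of_mem_closure hAopen hwAc hw
    have e1 := connectedComponentIn_eq hwW
    have e2 := connectedComponentIn_eq hwU
    have : z ∈ U := by
      rw [hUdef, e2, ← e1]
      exact mem_connectedComponentIn hz
    exact hzU this
  have hUc_pre : IsPreconnected (Uᶜ) := by
    apply isPreconnected_of_forall a₀
    intro z hz
    by_cases hzA : z ∈ A
    · exact ⟨A, hAUc, ha₀, hzA, hAconn.isPreconnected⟩
    · have hzAc : z ∈ Aᶜ := hzA
      have hWz : z ∈ connectedComponentIn Aᶜ z := mem_connectedComponentIn hzAc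
      have hWopen : IsOpen (connectedComponentIn Aᶜ z) := hAopen.connectedComponentIn
      have hWfr : (frontier (connectedComponentIn Aᶜ z)).Nonempty := by
        by_contra h
        rw [not_nonempty_iff_eq_empty] at h
        rcases isClopen_iff.1 (isClopen_iff_frontier_eq_empty.2 h) with h' | h'
        · rw [h'] at hWz; exact hWz
        · have : a₀ ∈ connectedComponentIn Aᶜ z := h' ▸ mem_univ a₀
          exact (connectedComponentIn_subset Aᶜ z this) ha₀
      obtain ⟨y, hy⟩ := hWfr
      rw [hWopen.frontier_eq] at hy
      have hyA : y ∈ A := by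
        by_contra hyA
        exact hy.2 (mem_comp_of_mem_closure hAopen hyA hy.1)
      refine ⟨A ∪ closure (connectedComponentIn Aᶜ z), ?_, Or.inl ha₀,
        Or.inr (subset_closure hWz), ?_⟩
      · exact union_subset hAUc (hWclosure z hzAc hz)
      · exact IsPreconnected.union y hyA hy.1 hAconn.isPreconnected
          (isPreconnected_connectedComponentIn.closure)
  -- preconnectedness of the frontier (unicoherence argument)
  have hfr_pre : IsPreconnected (frontier U) := by
    by_contra hnc
    rw [isPreconnected_iff_subset_of_disjoint] at hnc
    push_neg at hnc
    obtain ⟨o₁, o₂, ho₁, ho₂, hcover, hdisjE, hn1, hn2⟩ := hnc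
    set P := frontier U \ o₂ with hPdef
    set Q := frontier U \ o₁ with hQdef
    have hPc : IsClosed P := isClosed_frontier.sdiff ho₂
    have hQc : IsClosed Q := isClosed_frontier.sdiff ho₁
    have hdisj : Disjoint P Q := by
      rw [Set.disjoint_left]
      rintro z ⟨hz1, hz2⟩ ⟨_, hz4⟩
      rcases hcover hz1 with h | h
      · exact hz4 h
      · exact hz2 h
    obtain ⟨p, hpfr, hpo⟩ := not_subset.1 hn2
    obtain ⟨q, hqfr, hqo⟩ := not_subset.1 hn1
    have hpP : p ∈ P := ⟨hpfr, hpo⟩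
    have hqQ : q ∈ Q := ⟨hqfr, hqo⟩
    obtain ⟨u, hu0, hu1, _⟩ := exists_continuous_zero_one_of_isClosed hPc hQc hdisj
    have huPQ : ∀ a ∈ frontier U, u a = 0 ∨ u a = 1 := by
      intro a ha
      by_cases h2 : a ∈ o₂
      · have h1 : a ∉ o₁ := by
          intro h1
          exact (eq_empty_iff_forall_notMem.1 hdisjE a) ⟨ha, h1, h2⟩
        right
        simpa using hu1 ⟨ha, h1⟩
      · left
        simpa using hu0 ⟨ha, h2⟩
    have hval : ∀ a ∈ frontier U,
        Complex.exp (↑(Real.pi * u a) * Complex.I)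
          = Complex.exp (-↑(Real.pi * u a) * Complex.I) := by
      intro a ha
      rcases huPQ a ha with h | h
      · rw [h]; norm_num
      · rw [h, mul_one, neg_mul, Complex.exp_neg, Complex.exp_pi_mul_I]
        norm_num
    set F : EuclideanSpace ℝ (Fin d) → ℂ := fun y =>
      if y ∈ closure U then Complex.exp (↑(Real.pi * u y) * Complex.I)
      else Complex.exp (-↑(Real.pi * u y) * Complex.I) with hFdef
    have hFcont : Continuous F := by
      rw [hFdef]
      apply Continuous.if
      · intro a ha
        have ha' : a ∈ frontier (closure U) := ha
        exact hval a (frontier_closure_subset ha')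
      · exact ((Complex.continuous_ofReal.comp
          (continuous_const.mul u.continuous)).mul continuous_const).cexp
      · exact (((Complex.continuous_ofReal.comp
          (continuous_const.mul u.continuous)).neg).mul continuous_const).cexp
    have hF0 : ∀ y, F y ≠ 0 := by
      intro y
      simp only [hFdef]
      by_cases h : y ∈ closure U <;> simp [h, Complex.exp_ne_zero]
    obtain ⟨g, hgcont, hgexp⟩ := exists_lift hFcont hF0
    have him : ∀ (w : ℂ) (j : ℤ), w = ↑j * (2 * ↑Real.pi * Complex.I) →
        w.im / (2 * Real.pi) = j := by
      intro w j hw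
      rw [hw]
      simp [Complex.mul_im, Complex.mul_re]
    set ψ₁ : EuclideanSpace ℝ (Fin d) → ℝ :=
      fun y => ((g y).im - Real.pi * u y) / (2 * Real.pi) with hψ₁def
    set ψ₂ : EuclideanSpace ℝ (Fin d) → ℝ :=
      fun y => ((g y).im + Real.pi * u y) / (2 * Real.pi) with hψ₂def
    have hint1 : ∀ y ∈ closure U, ∃ j : ℤ, ψ₁ y = j := by
      intro y hy
      have hFy : F y = Complex.exp (↑(Real.pi * u y) * Complex.I) := by
        simp only [hFdef]; exact if_pos hy
      have hexp : Complex.exp (g y - ↑(Real.pi * u y) * Complex.I) = 1 := by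
        rw [Complex.exp_sub, hgexp, hFy, div_self (Complex.exp_ne_zero _)]
      obtain ⟨j, hj⟩ := Complex.exp_eq_one_iff.1 hexp
      refine ⟨j, ?_⟩
      have h2 := him _ j hj
      rw [show (g y - ↑(Real.pi * u y) * Complex.I).im
          = (g y).im - Real.pi * u y by simp] at h2
      exact h2
    have hFUc : ∀ y ∈ Uᶜ, F y = Complex.exp (-↑(Real.pi * u y) * Complex.I) := by
      intro y hy
      by_cases h : y ∈ closure U
      · have hyfr : y ∈ frontier U := hfr_eq ▸ (⟨h, hy⟩ : y ∈ closure U \ U)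
        simp only [hFdef]
        rw [if_pos h]
        exact hval y hyfr
      · simp only [hFdef]; exact if_neg h
    have hint2 : ∀ y ∈ Uᶜ, ∃ j : ℤ, ψ₂ y = j := by
      intro y hy
      have hexp : Complex.exp (g y + ↑(Real.pi * u y) * Complex.I) = 1 := by
        rw [Complex.exp_add, hgexp, hFUc y hy, ← Complex.exp_add, neg_mul,
          neg_add_cancel, Complex.exp_zero]
      obtain ⟨j, hj⟩ := Complex.exp_eq_one_iff.1 hexp
      refine ⟨j, ?_⟩
      have h2 := him _ j hj
      rw [show (g y + ↑(Real.pi * u y) * Complex.I).im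
          = (g y).im + Real.pi * u y by simp] at h2
      exact h2
    have hψ₁cont : ContinuousOn ψ₁ (closure U) :=
      (((Complex.continuous_im.comp hgcont).sub
        (continuous_const.mul u.continuous)).div_const _).continuousOn
    have hψ₂cont : ContinuousOn ψ₂ (Uᶜ) :=
      (((Complex.continuous_im.comp hgcont).add
        (continuous_const.mul u.continuous)).div_const _).continuousOn
    have hfrclU : frontier U ⊆ closure U := by
      rw [hfr_eq]; exact diff_subset
    have hfrUc : frontier U ⊆ Uᶜ := by
      rw [hfr_eq]; intro z hz; exact hz.2
    have e1 : ψ₁ p = ψ₁ q :=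
      int_valued_eq hUpre.closure hψ₁cont hint1 (hfrclU hpfr) (hfrclU hqfr)
    have e2 : ψ₂ p = ψ₂ q :=
      int_valued_eq hUc_pre hψ₂cont hint2 (hfrUc hpfr) (hfrUc hqfr)
    have hup : u p = 0 := by have := hu0 hpP; simpa using this
    have huq : u q = 1 := by have := hu1 hqQ; simpa using this
    simp only [hψ₁def] at e1
    simp only [hψ₂def] at e2
    simp only [hup, huq] at e1 e2
    have hpi : (2 * Real.pi) ≠ 0 := by positivity
    field_simp at e1 e2
    have hpipos := Real.pi_pos
    linarith
  exact ⟨frontier U, hfrsubA, ⟨hfr_ne, hfr_pre⟩, hfr_unb⟩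

end
end

section
/- Let d ≥ 2, let A ⊆ ℝ^d be closed, connected and unbounded, and let B be an unbounded connected component of ℝ^d \ A. Then the set (closure of B) \ B is connected, unbounded, and contained in the frontier ∂A of A. -/
open Bornology

open Complex Metric Set Finset


section Lift

/-- A continuous function taking integer values on a preconnected set is constant. -/
lemma const_of_int_valued {X : Type*} [TopologicalSpace X] {s : Set X} (hs : IsPreconnected s)
    {h : X → ℝ} (hc : ContinuousOn h s) (hint : ∀ x ∈ s, ∃ k : ℤ, h x = k)
    {x y : X} (hx : x ∈ s) (hy : y ∈ s) : h x = h y := by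
  by_contra hne
  wlog hlt : h x < h y generalizing x y
  · exact this hy hx (Ne.symm hne) (lt_of_le_of_ne (not_lt.1 hlt) (Ne.symm hne))
  have himg : IsPreconnected (h '' s) := hs.image h hc
  have hsub : Icc (h x) (h y) ⊆ h '' s :=
    himg.Icc_subset ⟨x, hx, rfl⟩ ⟨y, hy, rfl⟩
  obtain ⟨m, hm⟩ := hint x hx
  obtain ⟨n, hn⟩ := hint y hy
  have hmn : (m : ℝ) + 1 ≤ n := by
    have : m < n := by exact_mod_cast hm ▸ hn ▸ hlt
    exact_mod_cast this
  have hmem : (m : ℝ) + 1/2 ∈ Icc (h x) (h y) := by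
    constructor
    · rw [hm]; linarith
    · rw [hn]; linarith
  obtain ⟨z, hz, hzeq⟩ := hsub hmem
  obtain ⟨k, hk⟩ := hint z hz
  rw [hk] at hzeq
  have h2 : (2 * k : ℝ) = 2 * m + 1 := by push_cast; linarith
  have h3 : (2 * k : ℤ) = 2 * m + 1 := by exact_mod_cast h2
  omega

lemma exists_int_of_exp_eq {a b : ℝ} (h : Complex.exp (a * I) = Complex.exp (b * I)) :
    ∃ k : ℤ, a = b + 2 * Real.pi * k := by
  rw [Complex.exp_eq_exp_iff_exists_int] at h
  obtain ⟨n, hn⟩ := h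
  refine ⟨n, ?_⟩
  have h1 : (a : ℂ) = (b : ℂ) + n * (2 * Real.pi) :=
    mul_right_cancel₀ I_ne_zero (by rw [hn]; ring)
  have h2 : (a : ℂ) = ((b + 2 * Real.pi * n : ℝ) : ℂ) := by push_cast; linear_combination h1
  exact_mod_cast h2

/-- Uniqueness of lifts on a preconnected set, given agreement at one point. -/
lemma lift_unique {X : Type*} [TopologicalSpace X] {s : Set X} (hs : IsPreconnected s)
    {g h : X → ℝ} (hg : ContinuousOn g s) (hh : ContinuousOn h s)
    (heq : ∀ x ∈ s, Complex.exp (g x * I) = Complex.exp (h x * I))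
    {x₀ : X} (hx₀ : x₀ ∈ s) (h₀ : g x₀ = h x₀) {x : X} (hx : x ∈ s) : g x = h x := by
  have key : ∀ y ∈ s, ∃ k : ℤ, (g y - h y) / (2 * Real.pi) = k := by
    intro y hy
    obtain ⟨k, hk⟩ := exists_int_of_exp_eq (heq y hy)
    refine ⟨k, ?_⟩
    have hpi : (2 * Real.pi) ≠ 0 := by positivity
    field_simp
    linarith [hk]
  have := const_of_int_valued hs (ContinuousOn.div_const (hg.sub hh) _) key hx hx₀
  rw [Pi.sub_apply, Pi.sub_apply, h₀, sub_self, zero_div] at this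
  have hpi : (2 * Real.pi) ≠ 0 := by positivity
  have h2 : g x - h x = 0 := by
    have := (div_eq_zero_iff.1 this).resolve_right hpi
    linarith
  linarith

end Lift
lemma telescope_prod {h : ℕ → ℂ} (hne : ∀ k, h k ≠ 0) (n : ℕ) :
    ∏ k ∈ Finset.range n, h (k+1) / h k = h n / h 0 := by
  induction n with
  | zero => simp [div_self (hne 0)]
  | succ n ih =>
    rw [Finset.prod_range_succ, ih]
    rw [div_mul_div_comm]
    rw [div_eq_div_iff (by exact mul_ne_zero (hne 0) (hne n)) (hne 0)]
    ring

lemma slit_of_close {w : ℂ} (habs : ‖w‖ = 1) (hclose : ‖w - 1‖ < 1) :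
    w ∈ Complex.slitPlane := by
  rw [Complex.mem_slitPlane_iff]
  left
  have h1 : Complex.normSq (w - 1) < 1 := by
    rw [← Complex.sq_norm]
    nlinarith [norm_nonneg (w-1)]
  have h2 : Complex.normSq w = 1 := by rw [Complex.normSq_eq_norm_sq, habs]; norm_num
  have e1 : Complex.normSq (w - 1) = Complex.normSq w - 2 * w.re + 1 := by
    simp only [Complex.normSq_apply, Complex.sub_re, Complex.sub_im, Complex.one_re,
      Complex.one_im]
    ring
  rw [e1, h2] at h1
  linarith

lemma exp_arg_of_abs_one {z : ℂ} (h : ‖z‖ = 1) : Complex.exp (z.arg * I) = z := by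
  have := Complex.norm_mul_exp_arg_mul_I z
  rw [h] at this
  simpa using this

variable {E : Type*} [NormedAddCommGroup E] [NormedSpace ℝ E] [ProperSpace E]

lemma exists_lift_on_ball (f : E → ℂ) (hf : Continuous f) (habs : ∀ x, ‖f x‖ = 1)
    (R : ℝ) :
    ∃ g : E → ℝ, ContinuousOn g (closedBall 0 R) ∧
      (∀ x ∈ closedBall 0 R, f x = Complex.exp (g x * I)) ∧ g 0 = (f 0).arg := by
  have hne : ∀ x, f x ≠ 0 := by
    intro x h
    have := habs x
    rw [h] at this
    simp at this
  have huc : UniformContinuousOn f (closedBall 0 R) :=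
    (isCompact_closedBall 0 R).uniformContinuousOn_of_continuous hf.continuousOn
  rw [Metric.uniformContinuousOn_iff] at huc
  obtain ⟨δ, hδ, hucf⟩ := huc 1 one_pos
  obtain ⟨n, hn⟩ := exists_nat_gt (R / δ)
  set N : ℕ := n + 1 with hN
  have hNpos : (0:ℝ) < N := by positivity
  have hRN : R / N < δ := by
    rcases le_or_gt R 0 with h | h
    · calc R / N ≤ 0 := div_nonpos_of_nonpos_of_nonneg h hNpos.le
        _ < δ := hδ
    · rw [div_lt_iff₀ hNpos]
      have h1 : R / δ < (N : ℝ) := hn.trans_le (by exact_mod_cast Nat.le_succ n)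
      have := (div_lt_iff₀ hδ).1 h1
      linarith
  set u : ℕ → E → E := fun k x => ((k:ℝ)/N) • x with hu
  set w : ℕ → E → ℂ := fun k x => f (u (k+1) x) / f (u k x) with hw
  have humem : ∀ k, k ≤ N → ∀ x ∈ closedBall 0 R, u k x ∈ closedBall 0 R := by
    intro k hk x hx
    rw [mem_closedBall_zero_iff] at hx ⊢
    have hcoef : (0:ℝ) ≤ (k:ℝ)/N := by positivity
    have hcoef1 : (k:ℝ)/N ≤ 1 := by
      rw [div_le_one hNpos]
      exact_mod_cast hk
    calc ‖((k:ℝ)/N) • x‖ = ((k:ℝ)/N) * ‖x‖ := by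
          rw [norm_smul, Real.norm_eq_abs, _root_.abs_of_nonneg hcoef]
      _ ≤ 1 * ‖x‖ := by apply mul_le_mul_of_nonneg_right hcoef1 (norm_nonneg x)
      _ ≤ R := by rw [one_mul]; exact hx
  have habsw : ∀ k, ∀ x, ‖w k x‖ = 1 := by
    intro k x
    simp only [hw, norm_div, habs]
    norm_num
  have hwclose : ∀ x ∈ closedBall 0 R, ∀ k < N, ‖w k x - 1‖ < 1 := by
    intro x hx k hk
    have hd : dist (u (k+1) x) (u k x) < δ := by
      rw [dist_eq_norm]
      have : u (k+1) x - u k x = (1/(N:ℝ)) • x := by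
        rw [hu]
        simp only
        rw [← sub_smul]
        congr 1
        push_cast
        field_simp
        ring
      rw [this, norm_smul, Real.norm_eq_abs, _root_.abs_of_nonneg (by positivity : (0:ℝ) ≤ 1/(N:ℝ))]
      rw [mem_closedBall_zero_iff] at hx
      calc 1/(N:ℝ) * ‖x‖ ≤ 1/(N:ℝ) * R := by
            apply mul_le_mul_of_nonneg_left hx (by positivity)
        _ = R / N := by ring
        _ < δ := hRN
    have hdist : dist (f (u (k+1) x)) (f (u k x)) < 1 :=
      hucf _ (humem _ (by omega) x hx) _ (humem _ (by omega) x hx) hd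
    have : w k x - 1 = (f (u (k+1) x) - f (u k x)) / f (u k x) := by
      rw [hw]
      simp only
      rw [div_sub_one (hne _)]
    rw [this, norm_div, habs, div_one, ← Complex.dist_eq]
    exact hdist
  refine ⟨fun x => (f 0).arg + ∑ k ∈ Finset.range N, (w k x).arg, ?_, ?_, ?_⟩
  · apply continuousOn_const.add
    apply continuousOn_finset_sum
    intro k hk
    rw [Finset.mem_range] at hk
    have hwcont : ContinuousOn (w k) (closedBall 0 R) := by
      apply ContinuousOn.div
      · exact (hf.comp (continuous_const_smul _)).continuousOn
      · exact (hf.comp (continuous_const_smul _)).continuousOn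
      · exact fun x _ => hne _
    intro x hx
    exact (Complex.continuousAt_arg (slit_of_close (habsw k x)
      (hwclose x hx k hk))).comp_continuousWithinAt (hwcont x hx)
  · intro x hx
    have hcast : ((((f 0).arg + ∑ k ∈ Finset.range N, (w k x).arg : ℝ)) : ℂ) * I
        = ((f 0).arg : ℂ) * I + ∑ k ∈ Finset.range N, (((w k x).arg : ℂ) * I) := by
      push_cast
      rw [add_mul, Finset.sum_mul]
    rw [hcast, Complex.exp_add, Complex.exp_sum]
    have hterm : ∀ k ∈ Finset.range N, Complex.exp (((w k x).arg : ℂ) * I) = w k x :=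
      fun k _ => exp_arg_of_abs_one (habsw k x)
    rw [Finset.prod_congr rfl hterm, exp_arg_of_abs_one (habs 0)]
    have hprod : ∏ k ∈ Finset.range N, w k x = f x / f 0 := by
      have ht := telescope_prod (h := fun k => f (u k x)) (fun k => hne _) N
      have huN : u N x = x := by
        rw [hu]; simp only; rw [div_self hNpos.ne', one_smul]
      have hu0 : u 0 x = 0 := by
        rw [hu]; simp
      rw [huN, hu0] at ht
      exact ht
    rw [hprod]
    rw [mul_comm, div_mul_cancel₀ _ (hne 0)]
  · have hw0 : ∀ k, w k 0 = 1 := by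
      intro k
      simp only [hw, hu, smul_zero]
      exact div_self (hne _)
    simp [hw0, Complex.arg_one]

lemma exists_lift (f : E → ℂ) (hf : Continuous f) (habs : ∀ x, ‖f x‖ = 1) :
    ∃ g : E → ℝ, Continuous g ∧ ∀ x, f x = Complex.exp (g x * I) := by
  choose g hgc hglift hg0 using fun m : ℕ => exists_lift_on_ball f hf habs (m+1)
  have hagree : ∀ (m m' : ℕ) (x : E), ‖x‖ ≤ m+1 → ‖x‖ ≤ m'+1 → g m x = g m' x := by
    intro m m' x hm hm'
    set s := closedBall (0:E) (min ((m:ℝ)+1) ((m':ℝ)+1)) with hs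
    have hsub1 : s ⊆ closedBall 0 ((m:ℝ)+1) := closedBall_subset_closedBall (min_le_left _ _)
    have hsub2 : s ⊆ closedBall 0 ((m':ℝ)+1) := closedBall_subset_closedBall (min_le_right _ _)
    have h0s : (0:E) ∈ s := by
      rw [hs, mem_closedBall_zero_iff, norm_zero]
      exact le_min (by positivity) (by positivity)
    have hxs : x ∈ s := by
      rw [hs, mem_closedBall_zero_iff]
      exact le_min hm hm'
    exact lift_unique (convex_closedBall _ _).isPreconnected
      ((hgc m).mono hsub1) ((hgc m').mono hsub2)
      (fun y hy => by rw [← hglift m y (hsub1 hy), ← hglift m' y (hsub2 hy)])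
      h0s ((hg0 m).trans (hg0 m').symm) hxs
  refine ⟨fun x => g ⌈‖x‖⌉₊ x, ?_, ?_⟩
  · rw [continuous_iff_continuousAt]
    intro x₀
    set m := ⌈‖x₀‖⌉₊ + 1 with hm
    have hx₀m : ‖x₀‖ < (m:ℝ) := by
      calc ‖x₀‖ ≤ (⌈‖x₀‖⌉₊ : ℝ) := Nat.le_ceil _
        _ < (m:ℝ) := by rw [hm]; exact_mod_cast Nat.lt_succ_self _
    have hev : ∀ y ∈ ball x₀ 1, g ⌈‖y‖⌉₊ y = g m y := by
      intro y hy
      apply hagree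
      · calc ‖y‖ ≤ (⌈‖y‖⌉₊ : ℝ) := Nat.le_ceil _
          _ ≤ (⌈‖y‖⌉₊ : ℝ) + 1 := by linarith
      · have hyx : ‖y‖ < ‖x₀‖ + 1 := by
          have := norm_sub_norm_le y x₀
          rw [← dist_eq_norm] at this
          rw [mem_ball] at hy
          linarith
        calc ‖y‖ ≤ ‖x₀‖ + 1 := hyx.le
          _ ≤ (m:ℝ) + 1 := by linarith
    have hcm : ContinuousAt (g m) x₀ := by
      apply (hgc m).continuousAt
      apply closedBall_mem_nhds_of_mem
      rw [mem_ball_zero_iff]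
      linarith
    apply hcm.congr
    exact Filter.eventuallyEq_of_mem (ball_mem_nhds x₀ one_pos) (fun y hy => (hev y hy).symm)
  · intro x
    apply hglift
    rw [mem_closedBall_zero_iff]
    calc ‖x‖ ≤ (⌈‖x‖⌉₊ : ℝ) := Nat.le_ceil _
      _ ≤ (⌈‖x‖⌉₊ : ℝ) + 1 := by linarith

/-- Unicoherence: if a finite-dimensional real normed space is covered by two closed
preconnected sets, their intersection is preconnected. -/
theorem unicoherence [NormalSpace E] {F G : Set E} (hF : IsClosed F) (hG : IsClosed G)
    (hFc : IsPreconnected F) (hGc : IsPreconnected G) (hunion : F ∪ G = univ) :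
    IsPreconnected (F ∩ G) := by
  classical
  by_contra hnc
  rw [IsPreconnected] at hnc
  push_neg at hnc
  obtain ⟨U, V, hU, hV, hcover, hne1, hne2, hempty⟩ := hnc
  set s := F ∩ G with hs
  have hsclosed : IsClosed s := hF.inter hG
  have hsUV : ∀ x, x ∈ s → x ∈ U → x ∈ V → False := by
    intro x hx hxU hxV
    exact Set.eq_empty_iff_forall_notMem.1 hempty x ⟨hx, hxU, hxV⟩
  set P := s \ V with hP
  set Q := s \ U with hQ
  have hPne : P.Nonempty := by
    obtain ⟨p, hps, hpU⟩ := hne1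
    exact ⟨p, hps, fun hpV => hsUV p hps hpU hpV⟩
  have hQne : Q.Nonempty := by
    obtain ⟨q, hqs, hqV⟩ := hne2
    exact ⟨q, hqs, fun hqU => hsUV q hqs hqU hqV⟩
  have hPclosed : IsClosed P := hsclosed.sdiff hV
  have hQclosed : IsClosed Q := hsclosed.sdiff hU
  have hdisj : Disjoint P Q := by
    rw [Set.disjoint_left]
    rintro x ⟨hxs, hxV⟩ ⟨_, hxU⟩
    rcases hcover hxs with h | h
    · exact hxU h
    · exact hxV h
  have hPQ : ∀ x ∈ s, x ∈ P ∨ x ∈ Q := by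
    intro x hxs
    rcases hcover hxs with h | h
    · exact Or.inl ⟨hxs, fun hv => hsUV x hxs h hv⟩
    · exact Or.inr ⟨hxs, fun hu => hsUV x hxs hu h⟩
  obtain ⟨uu, hu0, hu1, -⟩ := exists_continuous_zero_one_of_isClosed hPclosed hQclosed hdisj
  set f : E → ℂ := fun x =>
    if x ∈ F then Complex.exp ((Real.pi * uu x : ℝ) * I)
    else Complex.exp ((-(Real.pi * uu x) : ℝ) * I) with hf
  have hGcomp : Fᶜ ⊆ G := by
    intro x hx
    rcases (hunion ▸ Set.mem_univ x) with h | h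
    · exact absurd h hx
    · exact h
  have hfrontier : frontier F ⊆ s := by
    intro a ha
    constructor
    · exact hF.frontier_subset ha
    · have h2 : a ∈ closure Fᶜ := by
        rw [frontier_eq_closure_inter_closure] at ha
        exact ha.2
      have : closure Fᶜ ⊆ G := by
        rw [← hG.closure_eq]
        exact closure_mono hGcomp
      exact this h2
  have hflip : ∀ a ∈ s, Complex.exp ((Real.pi * uu a : ℝ) * I)
      = Complex.exp ((-(Real.pi * uu a) : ℝ) * I) := by
    intro a ha
    rcases hPQ a ha with h | h
    · rw [hu0 h]
      norm_num
    · rw [hu1 h]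
      push_cast
      rw [neg_mul, Complex.exp_neg]
      norm_num [Complex.exp_pi_mul_I]
  have hfc : Continuous f := by
    rw [hf]
    apply Continuous.if
    · intro a ha
      exact hflip a (hfrontier ha)
    · exact Complex.continuous_exp.comp ((Complex.continuous_ofReal.comp
        (continuous_const.mul uu.continuous)).mul continuous_const)
    · exact Complex.continuous_exp.comp ((Complex.continuous_ofReal.comp
        ((continuous_const.mul uu.continuous).neg)).mul continuous_const)
  have habs : ∀ x, ‖f x‖ = 1 := by
    intro x
    simp only [hf]
    by_cases h : x ∈ F
    · rw [if_pos h]; exact Complex.norm_exp_ofReal_mul_I _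
    · rw [if_neg h]; exact Complex.norm_exp_ofReal_mul_I _
  obtain ⟨g, hgc, hglift⟩ := exists_lift f hfc habs
  set π := Real.pi
  have hπ : (2 * π) ≠ 0 := by positivity
  set cF : E → ℝ := fun x => (g x - π * uu x) / (2 * π) with hcF
  set cG : E → ℝ := fun x => (g x + π * uu x) / (2 * π) with hcG
  have hintF : ∀ x ∈ F, ∃ k : ℤ, cF x = k := by
    intro x hx
    have hexp : Complex.exp (g x * I) = Complex.exp ((π * uu x : ℝ) * I) := by
      rw [← hglift x]
      simp only [hf, if_pos hx]
    obtain ⟨k, hk⟩ := exists_int_of_exp_eq hexp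
    refine ⟨k, ?_⟩
    rw [hcF]
    rw [div_eq_iff hπ]
    linarith
  have hintG : ∀ x ∈ G, ∃ k : ℤ, cG x = k := by
    intro x hx
    by_cases hxF : x ∈ F
    · -- x ∈ F ∩ G = s, so uu x ∈ {0, 1} and both formulas agree mod ℤ
      have hexp : Complex.exp (g x * I) = Complex.exp ((-(π * uu x) : ℝ) * I) := by
        rw [← hglift x]
        simp only [hf, if_pos hxF]
        exact hflip x ⟨hxF, hx⟩
      obtain ⟨k, hk⟩ := exists_int_of_exp_eq hexp
      refine ⟨k, ?_⟩
      rw [hcG]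
      rw [div_eq_iff hπ]
      linarith
    · have hexp : Complex.exp (g x * I) = Complex.exp ((-(π * uu x) : ℝ) * I) := by
        rw [← hglift x]
        simp only [hf, if_neg hxF]
      obtain ⟨k, hk⟩ := exists_int_of_exp_eq hexp
      refine ⟨k, ?_⟩
      rw [hcG]
      rw [div_eq_iff hπ]
      linarith
  have hcFcont : ContinuousOn cF F :=
    (((hgc.sub (continuous_const.mul uu.continuous)).div_const _)).continuousOn
  have hcGcont : ContinuousOn cG G :=
    (((hgc.add (continuous_const.mul uu.continuous)).div_const _)).continuousOn
  obtain ⟨p, hp⟩ := hPne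
  obtain ⟨q, hq⟩ := hQne
  have hpF : p ∈ F := hp.1.1
  have hqF : q ∈ F := hq.1.1
  have hpG : p ∈ G := hp.1.2
  have hqG : q ∈ G := hq.1.2
  have hup : uu p = 0 := hu0 hp
  have huq : uu q = 1 := hu1 hq
  have eF : cF p = cF q := const_of_int_valued hFc hcFcont hintF hpF hqF
  have eG : cG p = cG q := const_of_int_valued hGc hcGcont hintG hpG hqG
  rw [hcF] at eF
  rw [hcG] at eG
  simp only [hup, huq] at eF eG
  have e1 : g p = g q - π := by
    rw [div_left_inj' hπ] at eF
    linarith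
  have e2 : g p = g q + π := by
    rw [div_left_inj' hπ] at eG
    linarith
  have : π = 0 := by linarith
  exact absurd this (by positivity)

lemma segment_ray_subset {x : E} {r c : ℝ} (hx : r < ‖x‖) (hc : 1 ≤ c) :
    segment ℝ x (c • x) ⊆ (closedBall (0:E) r)ᶜ := by
  intro z hz
  rw [segment_eq_image'] at hz
  obtain ⟨θ, hθ, rfl⟩ := hz
  obtain ⟨hθ0, hθ1⟩ := hθ
  have hz' : x + θ • (c • x - x) = (1 + θ * (c - 1)) • x := by module
  have hcoef : (1:ℝ) ≤ 1 + θ * (c - 1) := by nlinarith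
  simp only [mem_compl_iff, mem_closedBall_zero_iff, not_le]
  rw [hz', norm_smul, Real.norm_eq_abs, _root_.abs_of_nonneg (by linarith : (0:ℝ) ≤ 1 + θ * (c - 1))]
  nlinarith [norm_nonneg x]

lemma isPreconnected_compl_closedBall (hrank : 1 < Module.rank ℝ E) {r : ℝ} (hr : 0 ≤ r) :
    IsPreconnected ((closedBall (0:E) r)ᶜ) := by
  apply isPreconnected_of_forall_pair
  intro x hx y hy
  rw [mem_compl_iff, mem_closedBall_zero_iff, not_le] at hx hy
  set R : ℝ := max ‖x‖ ‖y‖ with hR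
  have hxpos : 0 < ‖x‖ := lt_of_le_of_lt hr hx
  have hypos : 0 < ‖y‖ := lt_of_le_of_lt hr hy
  have hcx : 1 ≤ R / ‖x‖ := by
    rw [le_div_iff₀ hxpos, one_mul]
    exact le_max_left _ _
  have hcy : 1 ≤ R / ‖y‖ := by
    rw [le_div_iff₀ hypos, one_mul]
    exact le_max_right _ _
  have hRpos : 0 ≤ R := le_max_of_le_left hxpos.le
  have hnx : ‖(R / ‖x‖) • x‖ = R := by
    rw [norm_smul, Real.norm_eq_abs, _root_.abs_of_nonneg (by positivity)]
    field_simp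
  have hny : ‖(R / ‖y‖) • y‖ = R := by
    rw [norm_smul, Real.norm_eq_abs, _root_.abs_of_nonneg (by positivity)]
    field_simp
  have hsphere : sphere (0:E) R ⊆ (closedBall (0:E) r)ᶜ := by
    intro z hz
    rw [mem_sphere_zero_iff_norm] at hz
    rw [mem_compl_iff, mem_closedBall_zero_iff, not_le, hz]
    exact lt_of_lt_of_le hx (le_max_left _ _)
  refine ⟨segment ℝ x ((R / ‖x‖) • x) ∪ (sphere 0 R ∪ segment ℝ y ((R / ‖y‖) • y)), ?_, ?_, ?_, ?_⟩
  · apply Set.union_subset (segment_ray_subset hx hcx)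
    apply Set.union_subset hsphere (segment_ray_subset hy hcy)
  · exact Or.inl (left_mem_segment ℝ _ _)
  · exact Or.inr (Or.inr (left_mem_segment ℝ _ _))
  · apply IsPreconnected.union ((R / ‖x‖) • x)
    · exact right_mem_segment ℝ _ _
    · exact Or.inl (by rw [mem_sphere_zero_iff_norm]; exact hnx)
    · exact (convex_segment _ _).isPreconnected
    · apply IsPreconnected.union ((R / ‖y‖) • y)
      · rw [mem_sphere_zero_iff_norm]; exact hny
      · exact right_mem_segment ℝ _ _
      · exact (isConnected_sphere hrank 0 hRpos).isPreconnected
      · exact (convex_segment _ _).isPreconnected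

lemma closure_component_inter {Ω : Set E} [LocallyConnectedSpace E] (hΩ : IsOpen Ω) {x : E}
    (hx : x ∈ Ω) : closure (connectedComponentIn Ω x) ∩ Ω ⊆ connectedComponentIn Ω x := by
  rintro y ⟨hyc, hyΩ⟩
  have hCopen : IsOpen (connectedComponentIn Ω y) := hΩ.connectedComponentIn
  obtain ⟨z, hzC, hzB⟩ := mem_closure_iff_nhds.1 hyc _
    (hCopen.mem_nhds (mem_connectedComponentIn hyΩ))
  have h1 : connectedComponentIn Ω y = connectedComponentIn Ω z := connectedComponentIn_eq hzC
  have h2 : connectedComponentIn Ω x = connectedComponentIn Ω z := connectedComponentIn_eq hzB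
  rw [h2, ← h1]
  exact mem_connectedComponentIn hyΩ


/-- Let `A ⊆ ℝ^d` (`d ≥ 2`) be closed, connected and unbounded, and let `B` be an
unbounded connected component of `ℝ^d \ A`. Then `closure B \ B` is connected,
unbounded, and contained in the frontier of `A`. -/
theorem closure_diff_self_connected_unbounded
    (d : ℕ) (hd : 2 ≤ d) (A B : Set (EuclideanSpace ℝ (Fin d)))
    (hAclosed : IsClosed A) (hAconn : IsConnected A) (hAunb : ¬ IsBounded A)
    (x : EuclideanSpace ℝ (Fin d)) (hx : x ∈ Aᶜ)
    (hB : B = connectedComponentIn Aᶜ x) (hBunb : ¬ IsBounded B) :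
    IsConnected (closure B \ B) ∧ ¬ IsBounded (closure B \ B) ∧
      closure B \ B ⊆ frontier A := by
  have hrank : 1 < Module.rank ℝ (EuclideanSpace ℝ (Fin d)) := by
    have h1 : Module.rank ℝ (EuclideanSpace ℝ (Fin d)) = (d : Cardinal) := by
      rw [← Module.finrank_eq_rank, finrank_euclideanSpace_fin]
    rw [h1]
    exact_mod_cast hd.trans_lt' one_lt_two
  have hAne : A.Nonempty := hAconn.nonempty
  have hAopen : IsOpen Aᶜ := hAclosed.isOpen_compl
  have hBopen : IsOpen B := hB ▸ hAopen.connectedComponentIn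
  have hBconn : IsPreconnected B := hB ▸ isPreconnected_connectedComponentIn
  have hBsub : B ⊆ Aᶜ := hB ▸ connectedComponentIn_subset _ _
  have hBne : B.Nonempty := ⟨x, hB ▸ mem_connectedComponentIn hx⟩
  have hkey : closure B ∩ Aᶜ ⊆ B := by
    rw [hB]
    exact closure_component_inter hAopen hx
  have hfrA : closure B \ B ⊆ A := by
    rintro y ⟨hy1, hy2⟩
    by_contra h
    exact hy2 (hkey ⟨hy1, h⟩)
  have hsubfr : closure B \ B ⊆ frontier A := by
    intro y hy
    rw [frontier_eq_closure_inter_closure]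
    exact ⟨subset_closure (hfrA hy), closure_mono hBsub hy.1⟩
  have hunb : ¬ IsBounded (closure B \ B) := by
    intro hbdd
    obtain ⟨r, hr⟩ := (isBounded_iff_subset_closedBall 0).1 hbdd
    set r' : ℝ := max r 0 with hr'def
    have hr0 : (0:ℝ) ≤ r' := le_max_right _ _
    have hr2 : closure B \ B ⊆ closedBall 0 r' :=
      hr.trans (closedBall_subset_closedBall (le_max_left _ _))
    have hU : IsPreconnected ((closedBall (0 : EuclideanSpace ℝ (Fin d)) r')ᶜ) :=
      isPreconnected_compl_closedBall hrank hr0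
    have hcov : (closedBall (0 : EuclideanSpace ℝ (Fin d)) r')ᶜ ⊆ B ∪ (closure B)ᶜ := by
      intro z hz
      by_cases hzB : z ∈ closure B
      · left
        by_contra hzB'
        exact hz (hr2 ⟨hzB, hzB'⟩)
      · exact Or.inr hzB
    have hne1 : ((closedBall (0 : EuclideanSpace ℝ (Fin d)) r')ᶜ ∩ B).Nonempty := by
      by_contra h
      rw [Set.not_nonempty_iff_eq_empty] at h
      apply hBunb
      apply (isBounded_closedBall (x := (0 : EuclideanSpace ℝ (Fin d))) (r := r')).subset
      intro b hb
      by_contra hb'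
      exact Set.eq_empty_iff_forall_notMem.1 h b ⟨hb', hb⟩
    have hne2 : ((closedBall (0 : EuclideanSpace ℝ (Fin d)) r')ᶜ ∩ (closure B)ᶜ).Nonempty := by
      obtain ⟨a, haA, ha'⟩ : ∃ a ∈ A, a ∉ closedBall (0 : EuclideanSpace ℝ (Fin d)) r' := by
        by_contra h
        push_neg at h
        exact hAunb ((isBounded_closedBall).subset h)
      refine ⟨a, ha', fun hac => ?_⟩
      have haB : a ∉ B := fun hab => hBsub hab haA
      exact ha' (hr2 ⟨hac, haB⟩)
    obtain ⟨z, -, hz1, hz2⟩ := hU _ _ hBopen isClosed_closure.isOpen_compl hcov hne1 hne2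
    exact hz2 (subset_closure hz1)
  have hne : (closure B \ B).Nonempty := by
    by_contra h
    rw [Set.not_nonempty_iff_eq_empty] at h
    rw [h] at hunb
    exact hunb Bornology.isBounded_empty
  have hGc : IsPreconnected (Bᶜ : Set (EuclideanSpace ℝ (Fin d))) := by
    obtain ⟨a₀, ha₀⟩ := hAne
    set 𝒮 : Set (Set (EuclideanSpace ℝ (Fin d))) :=
      insert A ((fun y => A ∪ closure (connectedComponentIn Aᶜ y)) '' (Aᶜ ∩ Bᶜ)) with h𝒮
    have hdisjAB : ∀ {z}, z ∈ A → z ∉ B := fun hz hzB => hBsub hzB hz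
    have hCcl : ∀ y ∈ Aᶜ, closure (connectedComponentIn Aᶜ y) \ connectedComponentIn Aᶜ y ⊆ A := by
      intro y hy
      rintro z ⟨hz1, hz2⟩
      by_contra h
      exact hz2 (closure_component_inter hAopen hy ⟨hz1, h⟩)
    have h1 : ∀ S ∈ 𝒮, a₀ ∈ S := by
      rintro S (rfl | ⟨y, hy, rfl⟩)
      · exact ha₀
      · exact Or.inl ha₀
    have h2 : ∀ S ∈ 𝒮, IsPreconnected S := by
      rintro S (rfl | ⟨y, hy, rfl⟩)
      · exact hAconn.isPreconnected
      · have hCne : (connectedComponentIn Aᶜ y).Nonempty :=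
          ⟨y, mem_connectedComponentIn hy.1⟩
        have hCneu : connectedComponentIn Aᶜ y ≠ Set.univ := by
          intro h
          have := connectedComponentIn_subset Aᶜ y
          rw [h] at this
          exact (this (Set.mem_univ a₀)) ha₀
        obtain ⟨z, hz⟩ := nonempty_frontier_iff.2 ⟨hCne, hCneu⟩
        have hzA : z ∈ A := by
          apply hCcl y hy.1
          rw [← (hAopen.connectedComponentIn).frontier_eq]
          exact hz
        have hzcl : z ∈ closure (connectedComponentIn Aᶜ y) := frontier_subset_closure hz
        exact IsPreconnected.union z hzA hzcl hAconn.isPreconnected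
          isPreconnected_connectedComponentIn.closure
    have h3 : ⋃₀ 𝒮 = Bᶜ := by
      apply Set.Subset.antisymm
      · rintro z ⟨S, (rfl | ⟨y, hy, rfl⟩), hzS⟩
        · exact hdisjAB hzS
        · rcases hzS with h | h
          · exact hdisjAB h
          · rcases (em (z ∈ connectedComponentIn Aᶜ y)) with hc | hc
            · intro hzB
              have e1 : connectedComponentIn Aᶜ y = connectedComponentIn Aᶜ z :=
                connectedComponentIn_eq hc
              have e2 : connectedComponentIn Aᶜ x = connectedComponentIn Aᶜ z :=
                connectedComponentIn_eq (hB ▸ hzB)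
              apply hy.2
              rw [hB, e2, ← e1]
              exact mem_connectedComponentIn hy.1
            · exact hdisjAB (hCcl y hy.1 ⟨h, hc⟩)
      · intro z hz
        by_cases hzA : z ∈ A
        · exact ⟨A, Or.inl rfl, hzA⟩
        · refine ⟨A ∪ closure (connectedComponentIn Aᶜ z), Or.inr ⟨z, ⟨hzA, hz⟩, rfl⟩, ?_⟩
          exact Or.inr (subset_closure (mem_connectedComponentIn hzA))
    rw [← h3]
    exact isPreconnected_sUnion a₀ _ h1 h2
  have huniv : closure B ∪ Bᶜ = Set.univ := by
    rw [Set.eq_univ_iff_forall]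
    intro z
    by_cases h : z ∈ B
    · exact Or.inl (subset_closure h)
    · exact Or.inr h
  have hFGc : IsPreconnected (closure B ∩ Bᶜ) :=
    unicoherence isClosed_closure hBopen.isClosed_compl hBconn.closure hGc huniv
  refine ⟨⟨hne, ?_⟩, hunb, hsubfr⟩
  rw [Set.diff_eq]
  exact hFGc
end

section
/- Let d ≥ 1, let ξ ⊆ ℝ^d and L ⊆ ℝ^d be arbitrary subsets, and let A be the union of L together with all connected components of ξ that intersect L. Then the frontier ∂A of A is disjoint from the interior of ξ: ∂A ∩ int(ξ) = ∅. -/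
/-- Let `ξ, L ⊆ ℝ^d` (`d ≥ 1`) and let `A` be the union of `L` together with all connected
components of `ξ` that intersect `L`. Then the frontier of `A` is disjoint from the
interior of `ξ`. -/
theorem frontier_cluster_disjoint_interior
    (d : ℕ) (hd : 1 ≤ d) (ξ L : Set (EuclideanSpace ℝ (Fin d)))
    (A : Set (EuclideanSpace ℝ (Fin d)))
    (hA : A = L ∪ ⋃ x ∈ {x | x ∈ ξ ∧ (connectedComponentIn ξ x ∩ L).Nonempty},
      connectedComponentIn ξ x) :
    frontier A ∩ interior ξ = ∅ := by
  rw [Set.eq_empty_iff_forall_notMem]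
  rintro y ⟨hyF, hyI⟩
  set U := connectedComponentIn (interior ξ) y with hU
  have hUopen : IsOpen U := isOpen_interior.connectedComponentIn
  have hyU : y ∈ U := mem_connectedComponentIn hyI
  have hUξ : U ⊆ ξ := (connectedComponentIn_subset _ _).trans interior_subset
  have hUpre : IsPreconnected U := isPreconnected_connectedComponentIn
  have hyc : y ∈ closure A := hyF.1
  obtain ⟨z, hzU, hzA⟩ : (U ∩ A).Nonempty := mem_closure_iff.mp hyc U hUopen hyU
  have hUA : U ⊆ A := by
    rw [hA] at hzA ⊢
    rcases hzA with hzL | hzA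
    · intro w hw
      have hwcomp : U ⊆ connectedComponentIn ξ w :=
        hUpre.subset_connectedComponentIn hw hUξ
      exact Or.inr (Set.mem_biUnion ⟨hUξ hw, ⟨z, hwcomp hzU, hzL⟩⟩
        (mem_connectedComponentIn (hUξ hw)))
    · simp only [Set.mem_iUnion, Set.mem_setOf_eq] at hzA
      obtain ⟨x, ⟨hxξ, hxL⟩, hzx⟩ := hzA
      have hcz : connectedComponentIn ξ z = connectedComponentIn ξ x :=
        (connectedComponentIn_eq hzx).symm
      have hzcomp : U ⊆ connectedComponentIn ξ z :=
        hUpre.subset_connectedComponentIn hzU hUξ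
      intro w hw
      exact Or.inr (Set.mem_biUnion ⟨hxξ, hxL⟩ (hcz ▸ hzcomp hw))
  exact hyF.2 (interior_maximal hUA hUopen hyU)
end

section
/- Let a₁ < a₂ and b₁ < b₂ be real numbers and let R = [a₁,a₂] × [b₁,b₂] ⊆ ℝ². Let γ₁, γ₂ : [0,1] → ℝ² be continuous maps with ranges contained in R, such that γ₁(0) lies on the left edge {a₁} × [b₁,b₂], γ₁(1) lies on the right edge {a₂} × [b₁,b₂], γ₂(0) lies on the bottom edge [a₁,a₂] × {b₁}, and γ₂(1) lies on the top edge [a₁,a₂] × {b₂}. Then the ranges of γ₁ and γ₂ intersect: range(γ₁) ∩ range(γ₂) ≠ ∅. -/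
namespace CrossAux

/-- turning number between two quadrant labels: the representative of `y - x` mod 4
lying in `{-1,0,1,2}`. -/
def dd (x y : ℤ) : ℤ := (y - x + 1) % 4 - 1

/-- quadrant label from sign booleans -/
def lab (s t : Bool) : ℤ :=
  if t then (if s then 0 else 1) else (if s then 3 else 2)

lemma cell_zero (s00 s10 s01 s11 t00 t10 t01 t11 : Bool)
    (hc : (s00 = s10 ∧ s00 = s01 ∧ s00 = s11) ∨ (t00 = t10 ∧ t00 = t01 ∧ t00 = t11)) :
    dd (lab s00 t00) (lab s10 t10) + dd (lab s10 t10) (lab s11 t11)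
      - dd (lab s01 t01) (lab s11 t11) - dd (lab s00 t00) (lab s01 t01) = 0 := by
  revert hc
  revert s00 s10 s01 s11 t00 t10 t01 t11
  decide

lemma dd_bot (s s' : Bool) :
    dd (lab s true) (lab s' true) = (if s' then 0 else 1) - (if s then 0 else 1) := by
  revert s s'; decide

lemma dd_top (s s' : Bool) :
    dd (lab s false) (lab s' false) = (if s' then 3 else 2) - (if s then 3 else 2) := by
  revert s s'; decide

lemma dd_left (t t' : Bool) :
    dd (lab false t) (lab false t') = (if t' then 1 else 2) - (if t then 1 else 2) := by
  revert t t'; decide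

lemma dd_right (t t' : Bool) :
    dd (lab true t) (lab true t') = (if t' then 4 else 3) - (if t then 4 else 3) := by
  revert t t'; decide

lemma discrete_miranda (n : ℕ) (S T : ℕ → ℕ → Bool)
    (hS0 : ∀ j ≤ n, S 0 j = false) (hSn : ∀ j ≤ n, S n j = true)
    (hT0 : ∀ i ≤ n, T i 0 = true) (hTn : ∀ i ≤ n, T i n = false) :
    ∃ i j, i < n ∧ j < n ∧
      ¬(S i j = S (i+1) j ∧ S i j = S i (j+1) ∧ S i j = S (i+1) (j+1)) ∧
      ¬(T i j = T (i+1) j ∧ T i j = T i (j+1) ∧ T i j = T (i+1) (j+1)) := by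
  rcases Nat.eq_zero_or_pos n with hn | hn
  · subst hn
    have h1 := hS0 0 le_rfl
    have h2 := hSn 0 le_rfl
    rw [h1] at h2; exact absurd h2 (by decide)
  by_contra hcon
  push_neg at hcon
  have hcell : ∀ i j, i < n → j < n →
      (S i j = S (i+1) j ∧ S i j = S i (j+1) ∧ S i j = S (i+1) (j+1)) ∨
      (T i j = T (i+1) j ∧ T i j = T i (j+1) ∧ T i j = T (i+1) (j+1)) := by
    intro i j hi hj
    by_cases hS : S i j = S (i+1) j ∧ S i j = S i (j+1) ∧ S i j = S (i+1) (j+1)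
    · exact Or.inl hS
    · exact Or.inr (hcon i j hi hj (fun h1 h2 h3 => hS ⟨h1, h2, h3⟩))
  set A : ℕ → ℕ → ℤ := fun i j => lab (S i j) (T i j) with hA
  set dh : ℕ → ℕ → ℤ := fun i j => dd (A i j) (A (i+1) j) with hdh
  set dv : ℕ → ℕ → ℤ := fun i j => dd (A i j) (A i (j+1)) with hdv
  -- the total winding is zero, cell by cell
  have hW0 : ∑ i ∈ Finset.range n, ∑ j ∈ Finset.range n,
      ((dh i j - dh i (j+1)) + (dv (i+1) j - dv i j)) = 0 := by
    apply Finset.sum_eq_zero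
    intro i hi
    apply Finset.sum_eq_zero
    intro j hj
    have := cell_zero (S i j) (S (i+1) j) (S i (j+1)) (S (i+1) (j+1))
      (T i j) (T (i+1) j) (T i (j+1)) (T (i+1) (j+1))
      (hcell i j (Finset.mem_range.mp hi) (Finset.mem_range.mp hj))
    simp only [hdh, hdv, hA]
    linarith [this]
  -- telescope the total winding to the boundary
  have hsplit : ∑ i ∈ Finset.range n, ∑ j ∈ Finset.range n,
      ((dh i j - dh i (j+1)) + (dv (i+1) j - dv i j))
      = (∑ i ∈ Finset.range n, (dh i 0 - dh i n))
        + (∑ j ∈ Finset.range n, (dv n j - dv 0 j)) := by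
    have e1 : ∑ i ∈ Finset.range n, ∑ j ∈ Finset.range n,
        ((dh i j - dh i (j+1)) + (dv (i+1) j - dv i j))
        = ∑ i ∈ Finset.range n, ∑ j ∈ Finset.range n, (dh i j - dh i (j+1))
          + ∑ i ∈ Finset.range n, ∑ j ∈ Finset.range n, (dv (i+1) j - dv i j) := by
      simp only [Finset.sum_add_distrib]
    rw [e1, Finset.sum_comm (s := Finset.range n) (t := Finset.range n)
      (f := fun i j => dv (i+1) j - dv i j)]
    congr 1
    · exact Finset.sum_congr rfl fun i _ => Finset.sum_range_sub' (fun j => dh i j) n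
    · exact Finset.sum_congr rfl fun j _ => Finset.sum_range_sub (fun i => dv i j) n
  -- the four boundary sums
  have hbot : ∑ i ∈ Finset.range n, dh i 0 = -1 := by
    have e : ∀ i ∈ Finset.range n, dh i 0
        = (fun k => (if S k 0 then (0:ℤ) else 1)) (i+1)
          - (fun k => (if S k 0 then (0:ℤ) else 1)) i := by
      intro i hi
      have hi' := Finset.mem_range.mp hi
      simp only [hdh, hA, hT0 i hi'.le, hT0 (i+1) hi']
      exact dd_bot _ _
    rw [Finset.sum_congr rfl e,
      Finset.sum_range_sub (fun k => (if S k 0 then (0:ℤ) else 1)) n]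
    simp [hSn 0 (Nat.zero_le n), hS0 0 (Nat.zero_le n)]
  have htop : ∑ i ∈ Finset.range n, dh i n = 1 := by
    have e : ∀ i ∈ Finset.range n, dh i n
        = (fun k => (if S k n then (3:ℤ) else 2)) (i+1)
          - (fun k => (if S k n then (3:ℤ) else 2)) i := by
      intro i hi
      have hi' := Finset.mem_range.mp hi
      simp only [hdh, hA, hTn i hi'.le, hTn (i+1) hi']
      exact dd_top _ _
    rw [Finset.sum_congr rfl e,
      Finset.sum_range_sub (fun k => (if S k n then (3:ℤ) else 2)) n]
    simp [hSn n le_rfl, hS0 n le_rfl]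
  have hleft : ∑ j ∈ Finset.range n, dv 0 j = 1 := by
    have e : ∀ j ∈ Finset.range n, dv 0 j
        = (fun k => (if T 0 k then (1:ℤ) else 2)) (j+1)
          - (fun k => (if T 0 k then (1:ℤ) else 2)) j := by
      intro j hj
      have hj' := Finset.mem_range.mp hj
      simp only [hdv, hA, hS0 j hj'.le, hS0 (j+1) hj']
      exact dd_left _ _
    rw [Finset.sum_congr rfl e,
      Finset.sum_range_sub (fun k => (if T 0 k then (1:ℤ) else 2)) n]
    simp [hT0 0 (Nat.zero_le n), hTn 0 (Nat.zero_le n)]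
  have hright : ∑ j ∈ Finset.range n, dv n j = -1 := by
    have e : ∀ j ∈ Finset.range n, dv n j
        = (fun k => (if T n k then (4:ℤ) else 3)) (j+1)
          - (fun k => (if T n k then (4:ℤ) else 3)) j := by
      intro j hj
      have hj' := Finset.mem_range.mp hj
      simp only [hdv, hA, hSn j hj'.le, hSn (j+1) hj']
      exact dd_right _ _
    rw [Finset.sum_congr rfl e,
      Finset.sum_range_sub (fun k => (if T n k then (4:ℤ) else 3)) n]
    simp [hT0 n le_rfl, hTn n le_rfl]
  rw [hsplit, Finset.sum_sub_distrib, Finset.sum_sub_distrib,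
    hbot, htop, hleft, hright] at hW0
  norm_num at hW0

set_option maxHeartbeats 2000000 in
lemma approx (a₁ a₂ b₁ b₂ : ℝ)
    (γ₁ γ₂ : ℝ → ℝ × ℝ)
    (h₁c : ContinuousOn γ₁ (Set.Icc 0 1)) (h₂c : ContinuousOn γ₂ (Set.Icc 0 1))
    (h₁r : γ₁ '' Set.Icc 0 1 ⊆ Set.Icc (a₁, b₁) (a₂, b₂))
    (h₂r : γ₂ '' Set.Icc 0 1 ⊆ Set.Icc (a₁, b₁) (a₂, b₂))
    (h₁0 : (γ₁ 0).1 = a₁) (h₁1 : (γ₁ 1).1 = a₂)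
    (h₂0 : (γ₂ 0).2 = b₁) (h₂1 : (γ₂ 1).2 = b₂)
    (ε : ℝ) (hε : 0 < ε) :
    ∃ s ∈ Set.Icc (0:ℝ) 1, ∃ t ∈ Set.Icc (0:ℝ) 1, dist (γ₁ s) (γ₂ t) ≤ ε := by
  obtain ⟨δ₁, hδ₁, hu₁⟩ := Metric.uniformContinuousOn_iff.mp
    (isCompact_Icc.uniformContinuousOn_of_continuous h₁c) (ε/8) (by linarith)
  obtain ⟨δ₂, hδ₂, hu₂⟩ := Metric.uniformContinuousOn_iff.mp
    (isCompact_Icc.uniformContinuousOn_of_continuous h₂c) (ε/8) (by linarith)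
  obtain ⟨m, hm⟩ := exists_nat_one_div_lt (lt_min hδ₁ hδ₂)
  set N : ℕ := m + 1 with hNdef
  have hN0 : (0:ℝ) < (N:ℝ) := by exact_mod_cast Nat.succ_pos m
  have hN1 : (1:ℝ) ≤ (N:ℝ) := by exact_mod_cast Nat.succ_le_succ (Nat.zero_le m)
  have hmN : (1:ℝ)/(N:ℝ) < min δ₁ δ₂ := by
    have : ((N:ℝ)) = (m:ℝ) + 1 := by push_cast [hNdef]; ring
    rw [this]; exact hm
  set xc : ℕ → ℝ := fun i => (i:ℝ)/(N:ℝ) with hxc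
  have hxmem : ∀ i ≤ N, xc i ∈ Set.Icc (0:ℝ) 1 := by
    intro i hi
    constructor
    · positivity
    · rw [div_le_one hN0]; exact_mod_cast hi
  have hxdist : ∀ (i a : ℕ), a ≤ 1 → dist (xc (i+a)) (xc i) < min δ₁ δ₂ := by
    intro i a ha
    have : xc (i+a) - xc i = (a:ℝ)/(N:ℝ) := by
      simp only [hxc]; push_cast; ring
    rw [Real.dist_eq, this, abs_of_nonneg (by positivity)]
    refine lt_of_le_of_lt ?_ hmN
    gcongr
    exact_mod_cast ha
  have hg₁ : ∀ (i a : ℕ), i + a ≤ N → a ≤ 1 →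
      dist (γ₁ (xc (i+a))) (γ₁ (xc i)) < ε/8 := by
    intro i a hia ha
    exact hu₁ _ (hxmem _ hia) _ (hxmem i (le_trans (Nat.le_add_right i a) hia))
      ((hxdist i a ha).trans_le (min_le_left _ _))
  have hg₂ : ∀ (j b : ℕ), j + b ≤ N → b ≤ 1 →
      dist (γ₂ (xc (j+b))) (γ₂ (xc j)) < ε/8 := by
    intro j b hjb hb
    exact hu₂ _ (hxmem _ hjb) _ (hxmem j (le_trans (Nat.le_add_right j b) hjb))
      ((hxdist j b hb).trans_le (min_le_right _ _))
  have hr₁ : ∀ i ≤ N, a₁ ≤ (γ₁ (xc i)).1 ∧ (γ₁ (xc i)).1 ≤ a₂ ∧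
      b₁ ≤ (γ₁ (xc i)).2 ∧ (γ₁ (xc i)).2 ≤ b₂ := by
    intro i hi
    have h := h₁r ⟨xc i, hxmem i hi, rfl⟩
    exact ⟨h.1.1, h.2.1, h.1.2, h.2.2⟩
  have hr₂ : ∀ j ≤ N, a₁ ≤ (γ₂ (xc j)).1 ∧ (γ₂ (xc j)).1 ≤ a₂ ∧
      b₁ ≤ (γ₂ (xc j)).2 ∧ (γ₂ (xc j)).2 ≤ b₂ := by
    intro j hj
    have h := h₂r ⟨xc j, hxmem j hj, rfl⟩
    exact ⟨h.1.1, h.2.1, h.1.2, h.2.2⟩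
  set g : ℕ → ℕ → ℝ := fun i j =>
    (γ₁ (xc i)).1 - (γ₂ (xc j)).1 + ε/4 * ((2*(i:ℝ) - (N:ℝ))/(N:ℝ)) with hgdef
  set hh : ℕ → ℕ → ℝ := fun i j =>
    (γ₁ (xc i)).2 - (γ₂ (xc j)).2 - ε/4 * ((2*(j:ℝ) - (N:ℝ))/(N:ℝ)) with hhdef
  set S : ℕ → ℕ → Bool := fun i j => decide (0 < g i j) with hSdef
  set T : ℕ → ℕ → Bool := fun i j => decide (0 < hh i j) with hTdef
  clear_value g hh S T
  -- boundary conditions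
  have hx0 : xc 0 = 0 := by simp [hxc]
  have hx1 : xc N = 1 := by
    simp only [hxc]; exact div_self hN0.ne'
  have htilt0 : (2*((0:ℕ):ℝ) - (N:ℝ))/(N:ℝ) = -1 := by
    rw [div_eq_iff hN0.ne']; push_cast; ring
  have htiltN : (2*((N:ℕ):ℝ) - (N:ℝ))/(N:ℝ) = 1 := by
    rw [div_eq_iff hN0.ne']; ring
  have hS0 : ∀ j ≤ N, S 0 j = false := by
    intro j hj
    rw [hSdef]
    apply decide_eq_false
    simp only [hgdef, htilt0]
    have h1 : (γ₁ (xc 0)).1 = a₁ := by rw [hx0]; exact h₁0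
    have h2 := (hr₂ j hj).1
    rw [h1]
    intro hcon
    linarith
  have hSn : ∀ j ≤ N, S N j = true := by
    intro j hj
    rw [hSdef]
    apply decide_eq_true
    simp only [hgdef, htiltN]
    have h1 : (γ₁ (xc N)).1 = a₂ := by rw [hx1]; exact h₁1
    have h2 := (hr₂ j hj).2.1
    rw [h1]
    linarith
  have hT0 : ∀ i ≤ N, T i 0 = true := by
    intro i hi
    rw [hTdef]
    apply decide_eq_true
    simp only [hhdef, htilt0]
    have h1 : (γ₂ (xc 0)).2 = b₁ := by rw [hx0]; exact h₂0
    have h2 := (hr₁ i hi).2.2.1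
    rw [h1]
    linarith
  have hTn : ∀ i ≤ N, T i N = false := by
    intro i hi
    rw [hTdef]
    apply decide_eq_false
    simp only [hhdef, htiltN]
    have h1 : (γ₂ (xc N)).2 = b₂ := by rw [hx1]; exact h₂1
    have h2 := (hr₁ i hi).2.2.2
    rw [h1]
    intro hcon
    linarith
  obtain ⟨i, j, hi, hj, hSnc, hTnc⟩ := discrete_miranda N S T hS0 hSn hT0 hTn
  have hiN : i + 1 ≤ N := hi
  have hjN : j + 1 ≤ N := hj
  -- variation bounds over the cell
  have habs1 : ∀ (p q : ℝ × ℝ), |p.1 - q.1| ≤ dist p q := by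
    intro p q
    rw [← Real.dist_eq, Prod.dist_eq]
    exact le_max_left _ _
  have habs2 : ∀ (p q : ℝ × ℝ), |p.2 - q.2| ≤ dist p q := by
    intro p q
    rw [← Real.dist_eq, Prod.dist_eq]
    exact le_max_right _ _
  have htiltvar : ∀ (k a : ℕ), a ≤ 1 →
      |ε/4 * ((2*((k+a:ℕ):ℝ) - (N:ℝ))/(N:ℝ)) - ε/4 * ((2*(k:ℝ) - (N:ℝ))/(N:ℝ))| ≤ ε/2 := by
    intro k a ha
    have heq : ε/4 * ((2*((k+a:ℕ):ℝ) - (N:ℝ))/(N:ℝ)) - ε/4 * ((2*(k:ℝ) - (N:ℝ))/(N:ℝ))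
        = ε/2 * ((a:ℝ)/(N:ℝ)) := by push_cast; field_simp; ring
    rw [heq, abs_of_nonneg (by positivity)]
    have haN : (a:ℝ)/(N:ℝ) ≤ 1 := by
      rw [div_le_one hN0]
      calc (a:ℝ) ≤ 1 := by exact_mod_cast ha
        _ ≤ (N:ℝ) := hN1
    nlinarith
  have hvarg : ∀ (a b : ℕ), a ≤ 1 → b ≤ 1 → |g (i+a) (j+b) - g i j| < 3*ε/4 := by
    intro a b ha hb
    have hX := (habs1 _ _).trans_lt (hg₁ i a (le_trans (by omega) hiN) ha)
    have hY := (habs1 _ _).trans_lt (hg₂ j b (le_trans (by omega) hjN) hb)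
    have hZ := htiltvar i a ha
    have heq : g (i+a) (j+b) - g i j
        = ((γ₁ (xc (i+a))).1 - (γ₁ (xc i)).1) - ((γ₂ (xc (j+b))).1 - (γ₂ (xc j)).1)
          + (ε/4 * ((2*((i+a:ℕ):ℝ) - (N:ℝ))/(N:ℝ)) - ε/4 * ((2*(i:ℝ) - (N:ℝ))/(N:ℝ))) := by
      simp only [hgdef]; ring
    rw [heq, abs_lt] at *
    rw [abs_le] at hZ
    constructor <;> linarith [hX.1, hX.2, hY.1, hY.2, hZ.1, hZ.2]
  have hvarh : ∀ (a b : ℕ), a ≤ 1 → b ≤ 1 → |hh (i+a) (j+b) - hh i j| < 3*ε/4 := by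
    intro a b ha hb
    have hX := (habs2 _ _).trans_lt (hg₁ i a (le_trans (by omega) hiN) ha)
    have hY := (habs2 _ _).trans_lt (hg₂ j b (le_trans (by omega) hjN) hb)
    have hZ := htiltvar j b hb
    have heq : hh (i+a) (j+b) - hh i j
        = ((γ₁ (xc (i+a))).2 - (γ₁ (xc i)).2) - ((γ₂ (xc (j+b))).2 - (γ₂ (xc j)).2)
          - (ε/4 * ((2*((j+b:ℕ):ℝ) - (N:ℝ))/(N:ℝ)) - ε/4 * ((2*(j:ℝ) - (N:ℝ))/(N:ℝ))) := by
      simp only [hhdef]; ring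
    rw [heq, abs_lt] at *
    rw [abs_le] at hZ
    constructor <;> linarith [hX.1, hX.2, hY.1, hY.2, hZ.1, hZ.2]
  -- from sign changes to smallness
  have hsmallg : |g i j| ≤ 3*ε/4 := by
    obtain ⟨a, b, ha, hb, hne⟩ : ∃ a b, a ≤ 1 ∧ b ≤ 1 ∧ S (i+a) (j+b) ≠ S i j := by
      by_contra hc
      push_neg at hc
      refine hSnc ⟨?_, ?_, ?_⟩
      · simpa using (hc 1 0 le_rfl (Nat.zero_le 1)).symm
      · simpa using (hc 0 1 (Nat.zero_le 1) le_rfl).symm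
      · simpa using (hc 1 1 le_rfl le_rfl).symm
    have hvar := hvarg a b ha hb
    rw [abs_lt] at hvar
    cases hSij : S i j with
    | false =>
      have h1 : ¬ (0 < g i j) := by
        have := hSij
        rw [hSdef] at this
        exact of_decide_eq_false this
      have h2 : 0 < g (i+a) (j+b) := by
        have : S (i+a) (j+b) = true := by
          cases hval : S (i+a) (j+b)
          · rw [hval, hSij] at hne; exact absurd rfl hne
          · rfl
        rw [hSdef] at this
        exact of_decide_eq_true this
      have h1' : g i j ≤ 0 := le_of_not_gt h1
      rw [abs_le]
      exact ⟨by linarith [hvar.2, h2], by linarith [h1']⟩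
    | true =>
      have h1 : 0 < g i j := by
        have := hSij
        rw [hSdef] at this
        exact of_decide_eq_true this
      have h2 : ¬ (0 < g (i+a) (j+b)) := by
        have : S (i+a) (j+b) = false := by
          cases hval : S (i+a) (j+b)
          · rfl
          · rw [hval, hSij] at hne; exact absurd rfl hne
        rw [hSdef] at this
        exact of_decide_eq_false this
      have h2' : g (i+a) (j+b) ≤ 0 := le_of_not_gt h2
      rw [abs_le]
      exact ⟨by linarith [h1], by linarith [hvar.1, h2']⟩
  have hsmallh : |hh i j| ≤ 3*ε/4 := by
    obtain ⟨a, b, ha, hb, hne⟩ : ∃ a b, a ≤ 1 ∧ b ≤ 1 ∧ T (i+a) (j+b) ≠ T i j := by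
      by_contra hc
      push_neg at hc
      refine hTnc ⟨?_, ?_, ?_⟩
      · simpa using (hc 1 0 le_rfl (Nat.zero_le 1)).symm
      · simpa using (hc 0 1 (Nat.zero_le 1) le_rfl).symm
      · simpa using (hc 1 1 le_rfl le_rfl).symm
    have hvar := hvarh a b ha hb
    rw [abs_lt] at hvar
    cases hTij : T i j with
    | false =>
      have h1 : ¬ (0 < hh i j) := by
        have := hTij; rw [hTdef] at this; exact of_decide_eq_false this
      have h2 : 0 < hh (i+a) (j+b) := by
        have h3 : T (i+a) (j+b) = true := by
          cases hval : T (i+a) (j+b)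
          · rw [hval, hTij] at hne; exact absurd rfl hne
          · rfl
        rw [hTdef] at h3
        exact of_decide_eq_true h3
      have h1' : hh i j ≤ 0 := le_of_not_gt h1
      rw [abs_le]
      exact ⟨by linarith [hvar.2, h2], by linarith [h1']⟩
    | true =>
      have h1 : 0 < hh i j := by
        have := hTij; rw [hTdef] at this; exact of_decide_eq_true this
      have h2 : ¬ (0 < hh (i+a) (j+b)) := by
        have h3 : T (i+a) (j+b) = false := by
          cases hval : T (i+a) (j+b)
          · rfl
          · rw [hval, hTij] at hne; exact absurd rfl hne
        rw [hTdef] at h3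
        exact of_decide_eq_false h3
      have h2' : hh (i+a) (j+b) ≤ 0 := le_of_not_gt h2
      rw [abs_le]
      exact ⟨by linarith [h1], by linarith [hvar.1, h2']⟩
  -- conclusion
  refine ⟨xc i, hxmem i (le_of_lt hi), xc j, hxmem j (le_of_lt hj), ?_⟩
  have htb : ∀ k : ℕ, k ≤ N → |ε/4 * ((2*(k:ℝ) - (N:ℝ))/(N:ℝ))| ≤ ε/4 := by
    intro k hk
    have hk' : (k:ℝ) ≤ (N:ℝ) := by exact_mod_cast hk
    have h1 : |(2*(k:ℝ) - (N:ℝ))/(N:ℝ)| ≤ 1 := by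
      rw [abs_div, abs_of_pos hN0, div_le_one hN0, abs_le]
      constructor <;> [linarith [Nat.cast_nonneg (α := ℝ) k]; linarith]
    calc |ε/4 * ((2*(k:ℝ) - (N:ℝ))/(N:ℝ))|
        = ε/4 * |(2*(k:ℝ) - (N:ℝ))/(N:ℝ)| := by
          rw [abs_mul, abs_of_pos (by linarith : (0:ℝ) < ε/4)]
      _ ≤ ε/4 * 1 := by nlinarith [abs_nonneg ((2*(k:ℝ) - (N:ℝ))/(N:ℝ))]
      _ = ε/4 := by ring
  rw [Prod.dist_eq]
  apply max_le
  · rw [Real.dist_eq]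
    have e1 : (γ₁ (xc i)).1 - (γ₂ (xc j)).1 = g i j - ε/4 * ((2*(i:ℝ) - (N:ℝ))/(N:ℝ)) := by
      simp only [hgdef]; ring
    rw [e1]
    have h1 := htb i (le_of_lt hi)
    rw [abs_le] at *
    constructor <;> linarith [hsmallg.1, hsmallg.2, h1.1, h1.2]
  · rw [Real.dist_eq]
    have e1 : (γ₁ (xc i)).2 - (γ₂ (xc j)).2 = hh i j + ε/4 * ((2*(j:ℝ) - (N:ℝ))/(N:ℝ)) := by
      simp only [hhdef]; ring
    rw [e1]
    have h1 := htb j (le_of_lt hj)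
    rw [abs_le] at *
    constructor <;> linarith [hsmallh.1, hsmallh.2, h1.1, h1.2]

end CrossAux

/-- Planar crossing lemma: a left–right path and a bottom–top path of the rectangle
`[a₁,a₂] × [b₁,b₂]`, both contained in the rectangle, must intersect. -/
theorem crossings_intersect
    (a₁ a₂ b₁ b₂ : ℝ) (ha : a₁ < a₂) (hb : b₁ < b₂)
    (γ₁ γ₂ : ℝ → ℝ × ℝ)
    (h₁c : ContinuousOn γ₁ (Set.Icc 0 1)) (h₂c : ContinuousOn γ₂ (Set.Icc 0 1))
    (h₁r : γ₁ '' Set.Icc 0 1 ⊆ Set.Icc (a₁, b₁) (a₂, b₂))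
    (h₂r : γ₂ '' Set.Icc 0 1 ⊆ Set.Icc (a₁, b₁) (a₂, b₂))
    (h₁0 : (γ₁ 0).1 = a₁) (h₁1 : (γ₁ 1).1 = a₂)
    (h₂0 : (γ₂ 0).2 = b₁) (h₂1 : (γ₂ 1).2 = b₂) :
    (γ₁ '' Set.Icc 0 1 ∩ γ₂ '' Set.Icc 0 1).Nonempty := by
  have key := CrossAux.approx a₁ a₂ b₁ b₂ γ₁ γ₂ h₁c h₂c h₁r h₂r h₁0 h₁1 h₂0 h₂1
  set K : Set (ℝ × ℝ) := Set.Icc (0:ℝ) 1 ×ˢ Set.Icc (0:ℝ) 1 with hK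
  have hKc : IsCompact K := isCompact_Icc.prod isCompact_Icc
  have hKne : K.Nonempty := ⟨(0, 0), ⟨⟨le_refl _, zero_le_one⟩, ⟨le_refl _, zero_le_one⟩⟩⟩
  have hfc : ContinuousOn (fun p : ℝ × ℝ => dist (γ₁ p.1) (γ₂ p.2)) K := by
    have c1 : ContinuousOn (fun p : ℝ × ℝ => γ₁ p.1) K :=
      h₁c.comp continuous_fst.continuousOn (fun p hp => hp.1)
    have c2 : ContinuousOn (fun p : ℝ × ℝ => γ₂ p.2) K :=
      h₂c.comp continuous_snd.continuousOn (fun p hp => hp.2)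
    exact continuous_dist.comp_continuousOn (c1.prodMk c2)
  obtain ⟨p₀, hp₀, hmin⟩ := hKc.exists_isMinOn hKne hfc
  have h0 : dist (γ₁ p₀.1) (γ₂ p₀.2) ≤ 0 := by
    by_contra hpos
    push_neg at hpos
    obtain ⟨s, hs, t, ht, hd⟩ := key (dist (γ₁ p₀.1) (γ₂ p₀.2) / 2) (by linarith)
    have hmem : (s, t) ∈ K := ⟨hs, ht⟩
    have hle : dist (γ₁ p₀.1) (γ₂ p₀.2) ≤ dist (γ₁ s) (γ₂ t) := hmin hmem
    linarith
  have heq : γ₁ p₀.1 = γ₂ p₀.2 := by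
    rw [← dist_le_zero]
    exact h0
  exact ⟨γ₁ p₀.1, ⟨p₀.1, hp₀.1, rfl⟩, ⟨p₀.2, hp₀.2, heq.symm⟩⟩
end

section
/- Let n > 0 and for r > 0 write Q(r) = [-r,r]² ⊆ ℝ². Consider the four rectangles R_b = [-3n,3n] × [-3n,-n], R_t = [-3n,3n] × [n,3n], R_l = [-3n,-n] × [-3n,3n], R_r = [n,3n] × [-3n,3n], whose union is the annulus Q(3n) \ interior(Q(n)). Let V ⊆ ℝ². Suppose there exist continuous paths in V ∩ R_b and in V ∩ R_t joining the left edge to the right edge of R_b and R_t respectively, and continuous paths in V ∩ R_l and in V ∩ R_r joining the bottom edge to the top edge of R_l and R_r respectively. Then there is no continuous path γ : [0,1] → ℝ² \ V with γ(0) ∈ Q(n) and γ(1) ∉ Q(3n). -/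
def AC_e : Fin 3 → Fin 3 → ZMod 2 := fun a b =>
  if (a = 0 ∧ b = 1) ∨ (a = 1 ∧ b = 0) then 1 else 0

lemma AC_e_self (a : Fin 3) : AC_e a a = 0 := by revert a; decide
lemma AC_e_no0 (a b : Fin 3) (ha : a ≠ 0) (hb : b ≠ 0) : AC_e a b = 0 := by revert a b; decide
lemma AC_e_no1 (a b : Fin 3) (ha : a ≠ 1) (hb : b ≠ 1) : AC_e a b = 0 := by revert a b; decide
lemma AC_e_chain (a b c : Fin 3) (ha : a ≠ 2) (hb : b ≠ 2) (hc : c ≠ 2) :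
    AC_e a b + AC_e b c = AC_e a c := by revert a b c; decide
lemma AC_e_tri (x y z : Fin 3) (h : AC_e x y + AC_e y z + AC_e x z ≠ 0) :
    (x = 0 ∨ y = 0 ∨ z = 0) ∧ (x = 1 ∨ y = 1 ∨ z = 1) ∧ (x = 2 ∨ y = 2 ∨ z = 2) := by
  revert x y z; decide
lemma AC_tele (g : ℕ → ZMod 2) (N : ℕ) :
    ∑ j ∈ Finset.range N, (g j + g (j + 1)) = g 0 + g N := by
  induction N with
  | zero => simp [CharTwo.add_self_eq_zero]
  | succ N ih =>
    rw [Finset.sum_range_succ, ih]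
    have : g N + g N = 0 := CharTwo.add_self_eq_zero _
    linear_combination this

/-- Sperner-type lemma on an `N × N` grid. -/
lemma AC_sperner (N : ℕ) (ℓ : ℕ → ℕ → Fin 3)
    (hb : ∀ i ≤ N, ℓ i 0 ≠ 2) (hb0 : ℓ 0 0 = 0) (hbN : ℓ N 0 = 1)
    (ht : ∀ i ≤ N, ℓ i N ≠ 0) (hl : ∀ j ≤ N, ℓ 0 j ≠ 1) (hr : ∀ j ≤ N, ℓ N j = 1) :
    ∃ i j, i < N ∧ j < N ∧
      (∃ p : ℕ × ℕ, (p.1 = i ∨ p.1 = i + 1) ∧ (p.2 = j ∨ p.2 = j + 1) ∧ ℓ p.1 p.2 = 0) ∧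
      (∃ p : ℕ × ℕ, (p.1 = i ∨ p.1 = i + 1) ∧ (p.2 = j ∨ p.2 = j + 1) ∧ ℓ p.1 p.2 = 1) ∧
      (∃ p : ℕ × ℕ, (p.1 = i ∨ p.1 = i + 1) ∧ (p.2 = j ∨ p.2 = j + 1) ∧ ℓ p.1 p.2 = 2) := by
  by_contra hcon
  set H : ℕ → ℕ → ZMod 2 := fun i j => AC_e (ℓ i j) (ℓ (i + 1) j) with hH
  set Vv : ℕ → ℕ → ZMod 2 := fun i j => AC_e (ℓ i j) (ℓ i (j + 1)) with hV
  set D : ℕ → ℕ → ZMod 2 := fun i j => AC_e (ℓ i j) (ℓ (i + 1) (j + 1)) with hD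
  -- every triangle contributes 0
  have hcell : ∀ i j, i < N → j < N →
      (H i j + Vv (i + 1) j + D i j = 0) ∧ (Vv i j + H i (j + 1) + D i j = 0) := by
    intro i j hi hj
    constructor
    · by_contra hd
      have hd' : AC_e (ℓ i j) (ℓ (i + 1) j) + AC_e (ℓ (i + 1) j) (ℓ (i + 1) (j + 1))
          + AC_e (ℓ i j) (ℓ (i + 1) (j + 1)) ≠ 0 := hd
      obtain ⟨h0, h1, h2⟩ := AC_e_tri _ _ _ hd'
      refine hcon ⟨i, j, hi, hj, ?_, ?_, ?_⟩
      · rcases h0 with h | h | h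
        exacts [⟨(i, j), Or.inl rfl, Or.inl rfl, h⟩, ⟨(i + 1, j), Or.inr rfl, Or.inl rfl, h⟩,
          ⟨(i + 1, j + 1), Or.inr rfl, Or.inr rfl, h⟩]
      · rcases h1 with h | h | h
        exacts [⟨(i, j), Or.inl rfl, Or.inl rfl, h⟩, ⟨(i + 1, j), Or.inr rfl, Or.inl rfl, h⟩,
          ⟨(i + 1, j + 1), Or.inr rfl, Or.inr rfl, h⟩]
      · rcases h2 with h | h | h
        exacts [⟨(i, j), Or.inl rfl, Or.inl rfl, h⟩, ⟨(i + 1, j), Or.inr rfl, Or.inl rfl, h⟩,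
          ⟨(i + 1, j + 1), Or.inr rfl, Or.inr rfl, h⟩]
    · by_contra hd
      have hd' : AC_e (ℓ i j) (ℓ i (j + 1)) + AC_e (ℓ i (j + 1)) (ℓ (i + 1) (j + 1))
          + AC_e (ℓ i j) (ℓ (i + 1) (j + 1)) ≠ 0 := by
        intro h; apply hd
        have : Vv i j + H i (j + 1) + D i j
            = AC_e (ℓ i j) (ℓ i (j + 1)) + AC_e (ℓ i (j + 1)) (ℓ (i + 1) (j + 1))
              + AC_e (ℓ i j) (ℓ (i + 1) (j + 1)) := rfl
        rw [this, h]
      obtain ⟨h0, h1, h2⟩ := AC_e_tri _ _ _ hd'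
      refine hcon ⟨i, j, hi, hj, ?_, ?_, ?_⟩
      · rcases h0 with h | h | h
        exacts [⟨(i, j), Or.inl rfl, Or.inl rfl, h⟩, ⟨(i, j + 1), Or.inl rfl, Or.inr rfl, h⟩,
          ⟨(i + 1, j + 1), Or.inr rfl, Or.inr rfl, h⟩]
      · rcases h1 with h | h | h
        exacts [⟨(i, j), Or.inl rfl, Or.inl rfl, h⟩, ⟨(i, j + 1), Or.inl rfl, Or.inr rfl, h⟩,
          ⟨(i + 1, j + 1), Or.inr rfl, Or.inr rfl, h⟩]
      · rcases h2 with h | h | h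
        exacts [⟨(i, j), Or.inl rfl, Or.inl rfl, h⟩, ⟨(i, j + 1), Or.inl rfl, Or.inr rfl, h⟩,
          ⟨(i + 1, j + 1), Or.inr rfl, Or.inr rfl, h⟩]
  -- the total sum is 0
  have hS0 : ∑ i ∈ Finset.range N, ∑ j ∈ Finset.range N,
      ((H i j + Vv (i + 1) j + D i j) + (Vv i j + H i (j + 1) + D i j)) = 0 := by
    refine Finset.sum_eq_zero fun i hi => Finset.sum_eq_zero fun j hj => ?_
    obtain ⟨h1, h2⟩ := hcell i j (Finset.mem_range.mp hi) (Finset.mem_range.mp hj)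
    rw [h1, h2, add_zero]
  -- the total sum is 1
  have hsum : ∑ i ∈ Finset.range N, ∑ j ∈ Finset.range N,
      ((H i j + Vv (i + 1) j + D i j) + (Vv i j + H i (j + 1) + D i j))
      = ∑ i ∈ Finset.range N, ∑ j ∈ Finset.range N, (H i j + H i (j + 1))
        + ∑ i ∈ Finset.range N, ∑ j ∈ Finset.range N, (Vv i j + Vv (i + 1) j) := by
    rw [← Finset.sum_add_distrib]
    refine Finset.sum_congr rfl fun i _ => ?_
    rw [← Finset.sum_add_distrib]
    refine Finset.sum_congr rfl fun j _ => ?_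
    have : D i j + D i j = 0 := CharTwo.add_self_eq_zero _
    linear_combination this
  have hHpart : ∑ i ∈ Finset.range N, ∑ j ∈ Finset.range N, (H i j + H i (j + 1))
      = ∑ i ∈ Finset.range N, H i 0 := by
    refine Finset.sum_congr rfl fun i hi => ?_
    rw [AC_tele (fun j => H i j) N]
    have hi' : i < N := Finset.mem_range.mp hi
    have : H i N = 0 := AC_e_no0 _ _ (ht i (le_of_lt hi')) (ht (i + 1) hi')
    rw [this, add_zero]
  have hVpart : ∑ i ∈ Finset.range N, ∑ j ∈ Finset.range N, (Vv i j + Vv (i + 1) j) = 0 := by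
    rw [Finset.sum_comm]
    refine Finset.sum_eq_zero fun j hj => ?_
    rw [AC_tele (fun i => Vv i j) N]
    have hj' : j < N := Finset.mem_range.mp hj
    have h1 : Vv 0 j = 0 := AC_e_no1 _ _ (hl j (le_of_lt hj')) (hl (j + 1) hj')
    have h2 : Vv N j = 0 := by
      have e1 := hr j (le_of_lt hj')
      have e2 := hr (j + 1) hj'
      show AC_e (ℓ N j) (ℓ N (j + 1)) = 0
      rw [e1, e2]; exact AC_e_self 1
    rw [h1, h2, add_zero]
  have hbsum : ∀ M, M ≤ N → ∑ i ∈ Finset.range M, H i 0 = AC_e (ℓ 0 0) (ℓ M 0) := by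
    intro M
    induction M with
    | zero => intro _; simp [AC_e_self]
    | succ M ih =>
      intro hM
      rw [Finset.sum_range_succ, ih (by omega)]
      exact AC_e_chain _ _ _ (hb 0 (by omega)) (hb M (by omega)) (hb (M + 1) hM)
  have : (0 : ZMod 2) = 1 := by
    rw [← hS0, hsum, hHpart, hVpart, add_zero, hbsum N le_rfl, hb0, hbN]
    decide
  exact absurd this (by decide)

/-- Strict Poincaré–Miranda theorem on the unit square. -/
lemma AC_miranda_strict (F : ℝ × ℝ → ℝ × ℝ)
    (hF : ContinuousOn F (Set.Icc (0, 0) (1, 1)))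
    (hle : ∀ p ∈ Set.Icc ((0 : ℝ), (0 : ℝ)) (1, 1), p.1 = 0 → (F p).1 < 0)
    (hri : ∀ p ∈ Set.Icc ((0 : ℝ), (0 : ℝ)) (1, 1), p.1 = 1 → 0 < (F p).1)
    (hbo : ∀ p ∈ Set.Icc ((0 : ℝ), (0 : ℝ)) (1, 1), p.2 = 0 → (F p).2 < 0)
    (hto : ∀ p ∈ Set.Icc ((0 : ℝ), (0 : ℝ)) (1, 1), p.2 = 1 → 0 < (F p).2) :
    ∃ p ∈ Set.Icc ((0 : ℝ), (0 : ℝ)) (1, 1), F p = 0 := by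
  set S : Set (ℝ × ℝ) := Set.Icc (0, 0) (1, 1) with hSdef
  have hmemS : ∀ (p : ℝ × ℝ), 0 ≤ p.1 → p.1 ≤ 1 → 0 ≤ p.2 → p.2 ≤ 1 → p ∈ S := by
    intro p h1 h2 h3 h4
    exact ⟨⟨h1, h3⟩, ⟨h2, h4⟩⟩
  have key : ∀ k : ℕ, ∃ a b c : ℝ × ℝ, a ∈ S ∧ b ∈ S ∧ c ∈ S ∧
      (F a).1 ≤ 0 ∧ (F a).2 ≤ 0 ∧ 0 < (F b).1 ∧ (F c).1 ≤ 0 ∧ 0 < (F c).2 ∧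
      dist a b ≤ 1 / (k + 1) ∧ dist a c ≤ 1 / (k + 1) := by
    intro k
    set N : ℕ := k + 1 with hN
    have hNpos : (0 : ℝ) < N := by positivity
    set v : ℕ → ℕ → ℝ × ℝ := fun i j => ((i : ℝ) / N, (j : ℝ) / N) with hv
    have hvmem : ∀ i j : ℕ, i ≤ N → j ≤ N → v i j ∈ S := by
      intro i j hi hj
      refine hmemS _ (by positivity) ?_ (by positivity) ?_
      · rw [div_le_one hNpos]; exact_mod_cast hi
      · rw [div_le_one hNpos]; exact_mod_cast hj
    set ℓ : ℕ → ℕ → Fin 3 := fun i j =>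
      if 0 < (F (v i j)).1 then 1 else if 0 < (F (v i j)).2 then 2 else 0 with hℓ
    have hv1 : ∀ j : ℕ, (v N j).1 = 1 := by
      intro j; simp only [hv]; rw [div_self (ne_of_gt hNpos)]
    have hv2 : ∀ i : ℕ, (v i N).2 = 1 := by
      intro i; simp only [hv]; rw [div_self (ne_of_gt hNpos)]
    have hv01 : ∀ j : ℕ, (v 0 j).1 = 0 := by intro j; simp [hv]
    have hv02 : ∀ i : ℕ, (v i 0).2 = 0 := by intro i; simp [hv]
    obtain ⟨i, j, hi, hj, ⟨p0, hp01, hp02, hp0⟩, ⟨p1, hp11, hp12, hp1⟩, ⟨p2, hp21, hp22, hp2⟩⟩ :=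
      AC_sperner N ℓ
        (by intro i hi
            simp only [hℓ]
            split
            · decide
            · rw [if_neg]
              · decide
              · have := hbo (v i 0) (hvmem i 0 hi (Nat.zero_le N)) (hv02 i)
                linarith)
        (by simp only [hℓ]
            rw [if_neg, if_neg]
            · have := hbo (v 0 0) (hvmem 0 0 (Nat.zero_le N) (Nat.zero_le N)) (hv02 0)
              linarith
            · have := hle (v 0 0) (hvmem 0 0 (Nat.zero_le N) (Nat.zero_le N)) (hv01 0)
              linarith)
        (by simp only [hℓ]
            rw [if_pos]
            exact hri (v N 0) (hvmem N 0 le_rfl (Nat.zero_le N)) (hv1 0))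
        (by intro i hi
            simp only [hℓ]
            split
            · decide
            · rw [if_pos]
              · decide
              · exact hto (v i N) (hvmem i N hi le_rfl) (hv2 i))
        (by intro j hj
            simp only [hℓ]
            rw [if_neg]
            · split <;> decide
            · have := hle (v 0 j) (hvmem 0 j (Nat.zero_le N) hj) (hv01 j)
              linarith)
        (by intro j hj
            simp only [hℓ]
            rw [if_pos]
            exact hri (v N j) (hvmem N j le_rfl hj) (hv1 j))
    have hible : ∀ q : ℕ × ℕ, (q.1 = i ∨ q.1 = i + 1) → (q.2 = j ∨ q.2 = j + 1) →
        q.1 ≤ N ∧ q.2 ≤ N := by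
      rintro q (h | h) (h' | h') <;> omega
    have hb' : ∀ (m x y : ℕ), (x = m ∨ x = m + 1) → (y = m ∨ y = m + 1) →
        dist ((x : ℝ) / N) ((y : ℝ) / N) ≤ 1 / (k + 1) := by
      intro m x y hx hy
      rw [Real.dist_eq, div_sub_div_same, abs_div, abs_of_pos hNpos]
      have h1 : |(x : ℝ) - y| ≤ 1 := by
        rw [abs_le]
        rcases hx with rfl | rfl <;> rcases hy with rfl | rfl <;>
          constructor <;> push_cast <;> linarith
      rw [hN]
      push_cast
      rw [div_le_div_iff₀ (by positivity) (by positivity)]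
      nlinarith
    have hdist : ∀ q r : ℕ × ℕ, (q.1 = i ∨ q.1 = i + 1) → (q.2 = j ∨ q.2 = j + 1) →
        (r.1 = i ∨ r.1 = i + 1) → (r.2 = j ∨ r.2 = j + 1) →
        dist (v q.1 q.2) (v r.1 r.2) ≤ 1 / (k + 1) := by
      intro q r hq1 hq2 hr1 hr2
      rw [Prod.dist_eq]
      exact max_le (hb' i q.1 r.1 hq1 hr1) (hb' j q.2 r.2 hq2 hr2)
    refine ⟨v p0.1 p0.2, v p1.1 p1.2, v p2.1 p2.2,
      hvmem _ _ (hible p0 hp01 hp02).1 (hible p0 hp01 hp02).2,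
      hvmem _ _ (hible p1 hp11 hp12).1 (hible p1 hp11 hp12).2,
      hvmem _ _ (hible p2 hp21 hp22).1 (hible p2 hp21 hp22).2, ?_, ?_, ?_, ?_, ?_,
      hdist p0 p1 hp01 hp02 hp11 hp12, hdist p0 p2 hp01 hp02 hp21 hp22⟩
    · by_contra h
      simp only [hℓ, if_pos (lt_of_not_ge h)] at hp0
      exact absurd hp0 (by decide)
    · by_contra h
      by_cases h1 : 0 < (F (v p0.1 p0.2)).1
      · simp only [hℓ, if_pos h1] at hp0; exact absurd hp0 (by decide)
      · simp only [hℓ, if_neg h1, if_pos (lt_of_not_ge h)] at hp0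
        exact absurd hp0 (by decide)
    · by_contra h
      by_cases h1 : 0 < (F (v p1.1 p1.2)).1
      · exact h h1
      · simp only [hℓ, if_neg h1] at hp1
        split at hp1 <;> exact absurd hp1 (by decide)
    · by_contra h
      simp only [hℓ, if_pos (lt_of_not_ge h)] at hp2
      exact absurd hp2 (by decide)
    · by_contra h
      by_cases h1 : 0 < (F (v p2.1 p2.2)).1
      · simp only [hℓ, if_pos h1] at hp2; exact absurd hp2 (by decide)
      · simp only [hℓ, if_neg h1, if_neg h] at hp2
        exact absurd hp2 (by decide)
  choose a b c ha hbS hcS ha1 ha2 hb1 hc1 hc2 hab hac using key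
  obtain ⟨p, hpS, φ, hφ, hφtend⟩ := (isCompact_Icc (α := ℝ × ℝ)).tendsto_subseq ha
  have hlim : ∀ (u : ℕ → ℝ × ℝ), (∀ k, dist (a k) (u k) ≤ 1 / (k + 1)) →
      Filter.Tendsto (u ∘ φ) Filter.atTop (nhds p) := by
    intro u hu
    apply hφtend.congr_dist
    refine squeeze_zero (fun k => dist_nonneg) (fun k => ?_)
      tendsto_one_div_add_atTop_nhds_zero_nat
    refine (hu (φ k)).trans ?_
    apply one_div_le_one_div_of_le (by positivity)
    have : (k : ℝ) ≤ φ k := by exact_mod_cast hφ.le_apply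
    linarith
  have hFtend : ∀ (u : ℕ → ℝ × ℝ), (∀ k, u k ∈ S) →
      Filter.Tendsto (u ∘ φ) Filter.atTop (nhds p) →
      Filter.Tendsto (fun k => F (u (φ k))) Filter.atTop (nhds (F p)) := by
    intro u hu htend
    exact (hF p hpS).tendsto.comp
      (tendsto_nhdsWithin_iff.mpr ⟨htend, Filter.Eventually.of_forall fun k => hu (φ k)⟩)
  have hA := hFtend a ha hφtend
  have hB := hFtend b hbS (hlim b hab)
  have hC := hFtend c hcS (hlim c hac)
  have h1 : (F p).1 ≤ 0 :=
    le_of_tendsto ((continuous_fst.tendsto _).comp hA)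
      (Filter.Eventually.of_forall fun k => ha1 (φ k))
  have h2 : (F p).2 ≤ 0 :=
    le_of_tendsto ((continuous_snd.tendsto _).comp hA)
      (Filter.Eventually.of_forall fun k => ha2 (φ k))
  have h1' : 0 ≤ (F p).1 :=
    ge_of_tendsto ((continuous_fst.tendsto _).comp hB)
      (Filter.Eventually.of_forall fun k => (hb1 (φ k)).le)
  have h2' : 0 ≤ (F p).2 :=
    ge_of_tendsto ((continuous_snd.tendsto _).comp hC)
      (Filter.Eventually.of_forall fun k => (hc2 (φ k)).le)
  exact ⟨p, hpS, Prod.ext (le_antisymm h1 h1') (le_antisymm h2 h2')⟩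

/-- Poincaré–Miranda theorem on the unit square (non-strict boundary signs). -/
lemma AC_miranda (F : ℝ × ℝ → ℝ × ℝ)
    (hF : ContinuousOn F (Set.Icc (0, 0) (1, 1)))
    (hle : ∀ p ∈ Set.Icc ((0 : ℝ), (0 : ℝ)) (1, 1), p.1 = 0 → (F p).1 ≤ 0)
    (hri : ∀ p ∈ Set.Icc ((0 : ℝ), (0 : ℝ)) (1, 1), p.1 = 1 → 0 ≤ (F p).1)
    (hbo : ∀ p ∈ Set.Icc ((0 : ℝ), (0 : ℝ)) (1, 1), p.2 = 0 → (F p).2 ≤ 0)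
    (hto : ∀ p ∈ Set.Icc ((0 : ℝ), (0 : ℝ)) (1, 1), p.2 = 1 → 0 ≤ (F p).2) :
    ∃ p ∈ Set.Icc ((0 : ℝ), (0 : ℝ)) (1, 1), F p = 0 := by
  set S : Set (ℝ × ℝ) := Set.Icc (0, 0) (1, 1) with hSdef
  have hmemS : ∀ p : ℝ × ℝ, p ∈ S → 0 ≤ p.1 ∧ p.1 ≤ 1 ∧ 0 ≤ p.2 ∧ p.2 ≤ 1 := by
    intro p hp
    obtain ⟨⟨h1, h2⟩, h3, h4⟩ := hp
    exact ⟨h1, h3, h2, h4⟩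
  have key : ∀ k : ℕ, ∃ q ∈ S, |(F q).1| ≤ 1 / (k + 1) ∧ |(F q).2| ≤ 1 / (k + 1) := by
    intro k
    set ε : ℝ := 1 / (k + 1) with hε
    have hεpos : 0 < ε := by positivity
    set G : ℝ × ℝ → ℝ × ℝ := fun p => (( F p).1 + ε * (p.1 - 1 / 2), (F p).2 + ε * (p.2 - 1 / 2))
      with hG
    have hGcont : ContinuousOn G S := by
      apply ContinuousOn.prodMk
      · exact (hF.fst).add (Continuous.continuousOn (by fun_prop))
      · exact (hF.snd).add (Continuous.continuousOn (by fun_prop))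
    obtain ⟨q, hq, hGq⟩ := AC_miranda_strict G hGcont
      (by intro p hp h1
          obtain ⟨_, _, _, _⟩ := hmemS p hp
          have := hle p hp h1
          show (F p).1 + ε * (p.1 - 1 / 2) < 0
          rw [h1]; nlinarith)
      (by intro p hp h1
          obtain ⟨_, _, _, _⟩ := hmemS p hp
          have := hri p hp h1
          show 0 < (F p).1 + ε * (p.1 - 1 / 2)
          rw [h1]; nlinarith)
      (by intro p hp h1
          obtain ⟨_, _, _, _⟩ := hmemS p hp
          have := hbo p hp h1
          show (F p).2 + ε * (p.2 - 1 / 2) < 0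
          rw [h1]; nlinarith)
      (by intro p hp h1
          obtain ⟨_, _, _, _⟩ := hmemS p hp
          have := hto p hp h1
          show 0 < (F p).2 + ε * (p.2 - 1 / 2)
          rw [h1]; nlinarith)
    obtain ⟨hq1, hq2, hq3, hq4⟩ := hmemS q hq
    have e1 : (F q).1 + ε * (q.1 - 1 / 2) = 0 := congrArg Prod.fst hGq
    have e2 : (F q).2 + ε * (q.2 - 1 / 2) = 0 := congrArg Prod.snd hGq
    refine ⟨q, hq, ?_, ?_⟩ <;> rw [abs_le] <;> constructor <;> nlinarith
  choose q hq hq1 hq2 using key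
  obtain ⟨p, hpS, φ, hφ, hφtend⟩ := (isCompact_Icc (α := ℝ × ℝ)).tendsto_subseq hq
  have hFtend : Filter.Tendsto (fun k => F (q (φ k))) Filter.atTop (nhds (F p)) :=
    (hF p hpS).tendsto.comp
      (tendsto_nhdsWithin_iff.mpr ⟨hφtend, Filter.Eventually.of_forall fun k => hq (φ k)⟩)
  have hbound : ∀ k, 1 / ((φ k : ℝ) + 1) ≤ 1 / (k + 1) := by
    intro k
    apply one_div_le_one_div_of_le (by positivity)
    have : (k : ℝ) ≤ φ k := by exact_mod_cast hφ.le_apply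
    linarith
  have htend0 : ∀ (g : ℕ → ℝ), (∀ k, |g k| ≤ 1 / (k + 1)) →
      Filter.Tendsto (fun k => g (φ k)) Filter.atTop (nhds 0) := by
    intro g hg
    exact squeeze_zero_norm (fun k => (hg (φ k)).trans (hbound k))
      tendsto_one_div_add_atTop_nhds_zero_nat
  have h1 : (F p).1 = 0 :=
    tendsto_nhds_unique ((continuous_fst.tendsto _).comp hFtend)
      (htend0 (fun k => (F (q k)).1) hq1)
  have h2 : (F p).2 = 0 :=
    tendsto_nhds_unique ((continuous_snd.tendsto _).comp hFtend)
      (htend0 (fun k => (F (q k)).2) hq2)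
  exact ⟨p, hpS, Prod.ext h1 h2⟩

/-- Crossing lemma: a left-right crossing and a bottom-top crossing of the rectangle
`[a,b] × [c,d]` must intersect. -/
lemma AC_crossing (a b c d : ℝ) (f g : ℝ → ℝ × ℝ)
    (hf : ContinuousOn f (Set.Icc 0 1)) (hfI : f '' Set.Icc 0 1 ⊆ Set.Icc (a, c) (b, d))
    (hf0 : (f 0).1 = a) (hf1 : (f 1).1 = b)
    (hg : ContinuousOn g (Set.Icc 0 1)) (hgI : g '' Set.Icc 0 1 ⊆ Set.Icc (a, c) (b, d))
    (hg0 : (g 0).2 = c) (hg1 : (g 1).2 = d) :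
    ∃ s t : ℝ, s ∈ Set.Icc (0 : ℝ) 1 ∧ t ∈ Set.Icc (0 : ℝ) 1 ∧ f s = g t := by
  set F : ℝ × ℝ → ℝ × ℝ := fun p => ((f p.1).1 - (g p.2).1, (g p.2).2 - (f p.1).2) with hFdef
  have hmem : ∀ p : ℝ × ℝ, p ∈ Set.Icc ((0 : ℝ), (0 : ℝ)) (1, 1) →
      p.1 ∈ Set.Icc (0 : ℝ) 1 ∧ p.2 ∈ Set.Icc (0 : ℝ) 1 := by
    intro p hp
    obtain ⟨⟨h1, h2⟩, h3, h4⟩ := hp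
    exact ⟨⟨h1, h3⟩, ⟨h2, h4⟩⟩
  have hfS : ∀ s : ℝ, s ∈ Set.Icc (0 : ℝ) 1 → f s ∈ Set.Icc (a, c) (b, d) := fun s hs =>
    hfI ⟨s, hs, rfl⟩
  have hgS : ∀ t : ℝ, t ∈ Set.Icc (0 : ℝ) 1 → g t ∈ Set.Icc (a, c) (b, d) := fun t ht =>
    hgI ⟨t, ht, rfl⟩
  have hcf : ContinuousOn (fun p : ℝ × ℝ => f p.1) (Set.Icc (0, 0) (1, 1)) :=
    hf.comp continuous_fst.continuousOn (fun p hp => (hmem p hp).1)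
  have hcg : ContinuousOn (fun p : ℝ × ℝ => g p.2) (Set.Icc (0, 0) (1, 1)) :=
    hg.comp continuous_snd.continuousOn (fun p hp => (hmem p hp).2)
  have hFcont : ContinuousOn F (Set.Icc (0, 0) (1, 1)) :=
    ContinuousOn.prodMk (hcf.fst.sub hcg.fst) (hcg.snd.sub hcf.snd)
  obtain ⟨p, hp, hFp⟩ := AC_miranda F hFcont
    (by intro p hp h1
        show (f p.1).1 - (g p.2).1 ≤ 0
        rw [h1, hf0]
        have := (hgS p.2 (hmem p hp).2).1.1
        linarith)
    (by intro p hp h1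
        show 0 ≤ (f p.1).1 - (g p.2).1
        rw [h1, hf1]
        have := (hgS p.2 (hmem p hp).2).2.1
        linarith)
    (by intro p hp h2
        show (g p.2).2 - (f p.1).2 ≤ 0
        rw [h2, hg0]
        have := (hfS p.1 (hmem p hp).1).1.2
        linarith)
    (by intro p hp h2
        show 0 ≤ (g p.2).2 - (f p.1).2
        rw [h2, hg1]
        have := (hfS p.1 (hmem p hp).1).2.2
        linarith)
  refine ⟨p.1, p.2, (hmem p hp).1, (hmem p hp).2, ?_⟩
  have e1 : (f p.1).1 - (g p.2).1 = 0 := congrArg Prod.fst hFp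
  have e2 : (g p.2).2 - (f p.1).2 = 0 := congrArg Prod.snd hFp
  exact Prod.ext (by linarith) (by linarith)

/-- Last crossing of level `c` from below: there is `s` with `f s = c` and `f ≥ c` after `s`. -/
lemma AC_lastCross {f : ℝ → ℝ} {α β c : ℝ} (hαβ : α ≤ β)
    (hf : ContinuousOn f (Set.Icc α β)) (h0 : f α ≤ c) (h1 : c ≤ f β) :
    ∃ s ∈ Set.Icc α β, f s = c ∧ ∀ t ∈ Set.Icc s β, c ≤ f t := by
  set T : Set ℝ := Set.Icc α β ∩ f ⁻¹' Set.Iic c with hT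
  have hTclosed : IsClosed T := hf.preimage_isClosed_of_isClosed isClosed_Icc isClosed_Iic
  have hTne : T.Nonempty := ⟨α, ⟨le_rfl, hαβ⟩, h0⟩
  have hTbdd : BddAbove T := ⟨β, fun t ht => ht.1.2⟩
  set s : ℝ := sSup T with hs
  have hsT : s ∈ T := hTclosed.csSup_mem hTne hTbdd
  have hsIcc : s ∈ Set.Icc α β := hsT.1
  have hnotT : ∀ t ∈ Set.Icc α β, s < t → c < f t := by
    intro t ht hst
    by_contra h
    exact absurd (le_csSup hTbdd ⟨ht, le_of_not_gt h⟩) (not_le.mpr hst)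
  have hfsc : f s = c := by
    have hle2 : f s ≤ c := hsT.2
    rcases eq_or_lt_of_le hle2 with h | h
    · exact h
    · -- f s < c; derive contradiction
      exfalso
      have hsβ : s < β := by
        rcases eq_or_lt_of_le hsIcc.2 with h' | h'
        · exact absurd (h'.symm ▸ h) (not_lt.mpr h1)
        · exact h'
      have hev : ∀ᶠ t in nhdsWithin s (Set.Icc α β), f t < c :=
        (hf s hsIcc).eventually (Filter.Tendsto.eventually_lt_const h Filter.tendsto_id)
      have hle' : nhdsWithin s (Set.Ioc s β) ≤ nhdsWithin s (Set.Icc α β) :=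
        nhdsWithin_mono s (fun t ht => ⟨hsIcc.1.trans ht.1.le, ht.2⟩)
      have hne : (nhdsWithin s (Set.Ioc s β)).NeBot := left_nhdsWithin_Ioc_neBot hsβ
      obtain ⟨t, htf, htIoc⟩ :=
        (((hev.filter_mono hle').and (self_mem_nhdsWithin (s := Set.Ioc s β))).exists)
      have : t ∈ T := ⟨⟨hsIcc.1.trans htIoc.1.le, htIoc.2⟩, le_of_lt htf⟩
      exact absurd (le_csSup hTbdd this) (not_le.mpr htIoc.1)
  refine ⟨s, hsIcc, hfsc, ?_⟩
  intro t ht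
  rcases eq_or_lt_of_le ht.1 with h | h
  · rw [← h, hfsc]
  · exact (hnotT t ⟨hsIcc.1.trans ht.1, ht.2⟩ h).le

/-- First crossing of level `c` from below. -/
lemma AC_firstCross {f : ℝ → ℝ} {α β c : ℝ} (hαβ : α ≤ β)
    (hf : ContinuousOn f (Set.Icc α β)) (h0 : f α ≤ c) (h1 : c ≤ f β) :
    ∃ s ∈ Set.Icc α β, f s = c ∧ ∀ t ∈ Set.Icc α s, f t ≤ c := by
  set T : Set ℝ := Set.Icc α β ∩ f ⁻¹' Set.Ici c with hT
  have hTclosed : IsClosed T := hf.preimage_isClosed_of_isClosed isClosed_Icc isClosed_Ici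
  have hTne : T.Nonempty := ⟨β, ⟨hαβ, le_rfl⟩, h1⟩
  have hTbdd : BddBelow T := ⟨α, fun t ht => ht.1.1⟩
  set s : ℝ := sInf T with hs
  have hsT : s ∈ T := hTclosed.csInf_mem hTne hTbdd
  have hsIcc : s ∈ Set.Icc α β := hsT.1
  have hnotT : ∀ t ∈ Set.Icc α β, t < s → f t < c := by
    intro t ht hst
    by_contra h
    exact absurd (csInf_le hTbdd ⟨ht, le_of_not_gt h⟩) (not_le.mpr hst)
  have hfsc : f s = c := by
    have hle2 : c ≤ f s := hsT.2
    rcases eq_or_lt_of_le hle2 with h | h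
    · exact h.symm
    · exfalso
      have hαs : α < s := by
        rcases eq_or_lt_of_le hsIcc.1 with h' | h'
        · exact absurd (h' ▸ h) (not_lt.mpr h0)
        · exact h'
      have hev : ∀ᶠ t in nhdsWithin s (Set.Icc α β), c < f t :=
        (hf s hsIcc).eventually (Filter.Tendsto.eventually_const_lt h Filter.tendsto_id)
      have hle' : nhdsWithin s (Set.Ico α s) ≤ nhdsWithin s (Set.Icc α β) :=
        nhdsWithin_mono s (fun t ht => ⟨ht.1, ht.2.le.trans hsIcc.2⟩)
      have hne : (nhdsWithin s (Set.Ico α s)).NeBot := right_nhdsWithin_Ico_neBot hαs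
      obtain ⟨t, htf, htIco⟩ :=
        (((hev.filter_mono hle').and (self_mem_nhdsWithin (s := Set.Ico α s))).exists)
      have : t ∈ T := ⟨⟨htIco.1, htIco.2.le.trans hsIcc.2⟩, le_of_lt htf⟩
      exact absurd (csInf_le hTbdd this) (not_le.mpr htIco.2)
  refine ⟨s, hsIcc, hfsc, ?_⟩
  intro t ht
  rcases eq_or_lt_of_le ht.2 with h | h
  · rw [h, hfsc]
  · exact (hnotT t ⟨ht.1, h.le.trans hsIcc.2⟩ h).le

/-- Affine segment reparametrization of a path. -/
lemma AC_seg (γ : ℝ → ℝ × ℝ) (hγc : ContinuousOn γ (Set.Icc 0 1)) (a b : ℝ)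
    (ha : a ∈ Set.Icc (0 : ℝ) 1) (hb : b ∈ Set.Icc (0 : ℝ) 1) :
    ContinuousOn (fun u => γ (a + u * (b - a))) (Set.Icc 0 1) ∧
    ∀ u ∈ Set.Icc (0 : ℝ) 1,
      (a + u * (b - a)) ∈ Set.Icc (0 : ℝ) 1 ∧ a + u * (b - a) ∈ Set.Icc (min a b) (max a b) := by
  have hmem : ∀ u ∈ Set.Icc (0 : ℝ) 1, a + u * (b - a) ∈ Set.Icc (min a b) (max a b) := by
    intro u hu
    obtain ⟨hu0, hu1⟩ := hu
    rcases le_total a b with h | h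
    · rw [min_eq_left h, max_eq_right h]
      constructor <;> nlinarith
    · rw [min_eq_right h, max_eq_left h]
      constructor <;> nlinarith
  have hmem' : ∀ u ∈ Set.Icc (0 : ℝ) 1, (a + u * (b - a)) ∈ Set.Icc (0 : ℝ) 1 := by
    intro u hu
    have h := hmem u hu
    have h1 : (0 : ℝ) ≤ min a b := le_min ha.1 hb.1
    have h2 : max a b ≤ 1 := max_le ha.2 hb.2
    exact ⟨h1.trans h.1, h.2.trans h2⟩
  refine ⟨?_, fun u hu => ⟨hmem' u hu, hmem u hu⟩⟩
  exact hγc.comp (Continuous.continuousOn (by fun_prop)) hmem'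

/-- If a set `V ⊆ ℝ²` crosses the long way each of the four rectangles making up the
annulus `[-3n,3n]² \ (-n,n)²`, then there is no continuous path in the complement of `V`
from the box `[-n,n]²` to the complement of `[-3n,3n]²`. -/
theorem annulus_circuit_blocks
    (n : ℝ) (hn : 0 < n) (V : Set (ℝ × ℝ))
    (hbot : ∃ γ : ℝ → ℝ × ℝ, ContinuousOn γ (Set.Icc 0 1) ∧
      γ '' Set.Icc 0 1 ⊆ V ∩ Set.Icc (-(3 * n), -(3 * n)) (3 * n, -n) ∧
      (γ 0).1 = -(3 * n) ∧ (γ 1).1 = 3 * n)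
    (htop : ∃ γ : ℝ → ℝ × ℝ, ContinuousOn γ (Set.Icc 0 1) ∧
      γ '' Set.Icc 0 1 ⊆ V ∩ Set.Icc (-(3 * n), n) (3 * n, 3 * n) ∧
      (γ 0).1 = -(3 * n) ∧ (γ 1).1 = 3 * n)
    (hleft : ∃ γ : ℝ → ℝ × ℝ, ContinuousOn γ (Set.Icc 0 1) ∧
      γ '' Set.Icc 0 1 ⊆ V ∩ Set.Icc (-(3 * n), -(3 * n)) (-n, 3 * n) ∧
      (γ 0).2 = -(3 * n) ∧ (γ 1).2 = 3 * n)
    (hright : ∃ γ : ℝ → ℝ × ℝ, ContinuousOn γ (Set.Icc 0 1) ∧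
      γ '' Set.Icc 0 1 ⊆ V ∩ Set.Icc (n, -(3 * n)) (3 * n, 3 * n) ∧
      (γ 0).2 = -(3 * n) ∧ (γ 1).2 = 3 * n) :
    ¬ ∃ γ : ℝ → ℝ × ℝ, ContinuousOn γ (Set.Icc 0 1) ∧
      γ '' Set.Icc 0 1 ⊆ Vᶜ ∧
      γ 0 ∈ Set.Icc (-n, -n) (n, n) ∧
      γ 1 ∉ Set.Icc (-(3 * n), -(3 * n)) (3 * n, 3 * n) := by
  rintro ⟨γ, hγc, hγV, hγ0, hγ1⟩
  obtain ⟨⟨h0x, h0y⟩, h0x', h0y'⟩ := hγ0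
  simp only at h0x h0y h0x' h0y'
  -- the sup-norm-like function
  set m : ℝ → ℝ := fun t => max |(γ t).1| |(γ t).2| with hmdef
  have hmc : ContinuousOn m (Set.Icc 0 1) := by
    apply Continuous.comp_continuousOn (g := fun p : ℝ × ℝ => max |p.1| |p.2|) (by fun_prop) hγc
  have hm0 : m 0 ≤ 3 * n := by
    apply max_le <;> rw [abs_le] <;> constructor <;> linarith
  have hm1 : 3 * n ≤ m 1 := by
    by_contra h
    push_neg at h
    have h1 : |(γ 1).1| < 3 * n := lt_of_le_of_lt (le_max_left _ _) h
    have h2 : |(γ 1).2| < 3 * n := lt_of_le_of_lt (le_max_right _ _) h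
    rw [abs_lt] at h1 h2
    exact hγ1 ⟨⟨h1.1.le, h2.1.le⟩, ⟨h1.2.le, h2.2.le⟩⟩
  obtain ⟨t1, ht1, hmt1, hmle⟩ := AC_firstCross (zero_le_one) hmc hm0 hm1
  have htQ : ∀ t ∈ Set.Icc (0 : ℝ) t1, |(γ t).1| ≤ 3 * n ∧ |(γ t).2| ≤ 3 * n := by
    intro t ht
    have := hmle t ht
    exact ⟨(le_max_left _ _).trans this, (le_max_right _ _).trans this⟩
  have hsub : Set.Icc (0 : ℝ) t1 ⊆ Set.Icc (0 : ℝ) 1 := Set.Icc_subset_Icc le_rfl ht1.2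
  -- generic contradiction helper once we have a crossing point
  have hcontra : ∀ (p : ℝ × ℝ), p ∈ V → p ∈ γ '' Set.Icc 0 1 → False := by
    rintro p hpV ⟨t, ht, rfl⟩
    exact hγV ⟨t, ht, rfl⟩ hpV
  -- which side of the box does γ t1 touch?
  rcases le_total |(γ t1).1| |(γ t1).2| with hxy | hxy
  · -- |y| = 3n
    have hy3 : |(γ t1).2| = 3 * n := by
      rw [hmdef] at hmt1; simp only at hmt1
      rw [max_eq_right hxy] at hmt1; exact hmt1
    rcases abs_eq (by linarith : (0:ℝ) ≤ 3 * n) |>.mp hy3 with hy | hy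
    · -- top side: γ t1 has y = 3n; build a vertical crossing of R_t in Vᶜ
      obtain ⟨s1, hs1, hfs1, hfge⟩ := AC_lastCross (f := fun t => (γ t).2) (c := n) ht1.1
        (continuous_snd.comp_continuousOn (hγc.mono hsub)) (by linarith) (by show n ≤ (γ t1).2; linarith)
      obtain ⟨hcont, hmem⟩ := AC_seg γ hγc s1 t1 ⟨hs1.1, hs1.2.trans ht1.2⟩ ht1
      rw [min_eq_left hs1.2, max_eq_right hs1.2] at hmem
      obtain ⟨g, hgc, hgI, hg0, hg1⟩ := htop
      obtain ⟨s, t, hs, ht, heq⟩ := AC_crossing (-(3 * n)) (3 * n) n (3 * n) g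
        (fun u => γ (s1 + u * (t1 - s1))) hgc
        (fun p hp => (hgI hp).2) hg0 hg1 hcont
        (by rintro p ⟨u, hu, rfl⟩
            obtain ⟨hu01, huI⟩ := hmem u hu
            have hb := htQ _ ⟨(hs1.1).trans huI.1, huI.2⟩
            simp only [abs_le] at hb
            exact ⟨⟨(hb.1).1, hfge _ huI⟩, ⟨hb.1.2, hb.2.2⟩⟩)
        (by show (γ (s1 + 0 * (t1 - s1))).2 = n
            have e : s1 + 0 * (t1 - s1) = s1 := by ring
            rw [e]; exact hfs1)
        (by show (γ (s1 + 1 * (t1 - s1))).2 = 3 * n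
            have e : s1 + 1 * (t1 - s1) = t1 := by ring
            rw [e]; exact hy)
      refine hcontra _ ((hgI ⟨s, hs, rfl⟩).1) ⟨s1 + t * (t1 - s1), (hmem t ht).1, heq.symm⟩
    · -- bottom side: γ t1 has y = -3n
      obtain ⟨s1, hs1, hfs1, hfge⟩ := AC_lastCross (f := fun t => -(γ t).2) (c := n) ht1.1
        ((continuous_snd.comp_continuousOn (hγc.mono hsub)).neg) (by show -(γ 0).2 ≤ n; linarith)
        (by show n ≤ -(γ t1).2; linarith)
      obtain ⟨hcont, hmem⟩ := AC_seg γ hγc t1 s1 ht1 ⟨hs1.1, hs1.2.trans ht1.2⟩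
      rw [min_eq_right hs1.2, max_eq_left hs1.2] at hmem
      obtain ⟨g, hgc, hgI, hg0, hg1⟩ := hbot
      obtain ⟨s, t, hs, ht, heq⟩ := AC_crossing (-(3 * n)) (3 * n) (-(3 * n)) (-n) g
        (fun u => γ (t1 + u * (s1 - t1))) hgc
        (fun p hp => (hgI hp).2) hg0 hg1 hcont
        (by rintro p ⟨u, hu, rfl⟩
            obtain ⟨hu01, huI⟩ := hmem u hu
            have hb := htQ _ ⟨(hs1.1).trans huI.1, huI.2⟩
            simp only [abs_le] at hb
            have h5 : n ≤ -(γ (t1 + u * (s1 - t1))).2 := hfge _ huI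
            exact ⟨⟨(hb.1).1, hb.2.1⟩,
              ⟨hb.1.2, show (γ (t1 + u * (s1 - t1))).2 ≤ -n by linarith⟩⟩)
        (by show (γ (t1 + 0 * (s1 - t1))).2 = -(3 * n)
            have e : t1 + 0 * (s1 - t1) = t1 := by ring
            rw [e]; exact hy)
        (by show (γ (t1 + 1 * (s1 - t1))).2 = -n
            have e : t1 + 1 * (s1 - t1) = s1 := by ring
            rw [e]
            have : -(γ s1).2 = n := hfs1
            linarith)
      refine hcontra _ ((hgI ⟨s, hs, rfl⟩).1) ⟨t1 + t * (s1 - t1), (hmem t ht).1, heq.symm⟩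
  · -- |x| = 3n
    have hx3 : |(γ t1).1| = 3 * n := by
      rw [hmdef] at hmt1; simp only at hmt1
      rw [max_eq_left hxy] at hmt1; exact hmt1
    rcases abs_eq (by linarith : (0:ℝ) ≤ 3 * n) |>.mp hx3 with hx | hx
    · -- right side
      obtain ⟨s1, hs1, hfs1, hfge⟩ := AC_lastCross (f := fun t => (γ t).1) (c := n) ht1.1
        (continuous_fst.comp_continuousOn (hγc.mono hsub)) (by linarith) (by show n ≤ (γ t1).1; linarith)
      obtain ⟨hcont, hmem⟩ := AC_seg γ hγc s1 t1 ⟨hs1.1, hs1.2.trans ht1.2⟩ ht1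
      rw [min_eq_left hs1.2, max_eq_right hs1.2] at hmem
      obtain ⟨g, hgc, hgI, hg0, hg1⟩ := hright
      obtain ⟨s, t, hs, ht, heq⟩ := AC_crossing n (3 * n) (-(3 * n)) (3 * n)
        (fun u => γ (s1 + u * (t1 - s1))) g hcont
        (by rintro p ⟨u, hu, rfl⟩
            obtain ⟨hu01, huI⟩ := hmem u hu
            have hb := htQ _ ⟨(hs1.1).trans huI.1, huI.2⟩
            simp only [abs_le] at hb
            exact ⟨⟨hfge _ huI, hb.2.1⟩, ⟨hb.1.2, hb.2.2⟩⟩)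
        (by show (γ (s1 + 0 * (t1 - s1))).1 = n
            have e : s1 + 0 * (t1 - s1) = s1 := by ring
            rw [e]; exact hfs1)
        (by show (γ (s1 + 1 * (t1 - s1))).1 = 3 * n
            have e : s1 + 1 * (t1 - s1) = t1 := by ring
            rw [e]; exact hx)
        hgc (fun p hp => (hgI hp).2) hg0 hg1
      refine hcontra _ ((hgI ⟨t, ht, rfl⟩).1) ⟨s1 + s * (t1 - s1), (hmem s hs).1, heq⟩
    · -- left side
      obtain ⟨s1, hs1, hfs1, hfge⟩ := AC_lastCross (f := fun t => -(γ t).1) (c := n) ht1.1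
        ((continuous_fst.comp_continuousOn (hγc.mono hsub)).neg) (by show -(γ 0).1 ≤ n; linarith)
        (by show n ≤ -(γ t1).1; linarith)
      obtain ⟨hcont, hmem⟩ := AC_seg γ hγc t1 s1 ht1 ⟨hs1.1, hs1.2.trans ht1.2⟩
      rw [min_eq_right hs1.2, max_eq_left hs1.2] at hmem
      obtain ⟨g, hgc, hgI, hg0, hg1⟩ := hleft
      obtain ⟨s, t, hs, ht, heq⟩ := AC_crossing (-(3 * n)) (-n) (-(3 * n)) (3 * n)
        (fun u => γ (t1 + u * (s1 - t1))) g hcont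
        (by rintro p ⟨u, hu, rfl⟩
            obtain ⟨hu01, huI⟩ := hmem u hu
            have hb := htQ _ ⟨(hs1.1).trans huI.1, huI.2⟩
            simp only [abs_le] at hb
            have h5 : n ≤ -(γ (t1 + u * (s1 - t1))).1 := hfge _ huI
            exact ⟨⟨hb.1.1, hb.2.1⟩,
              ⟨show (γ (t1 + u * (s1 - t1))).1 ≤ -n by linarith, hb.2.2⟩⟩)
        (by show (γ (t1 + 0 * (s1 - t1))).1 = -(3 * n)
            have e : t1 + 0 * (s1 - t1) = t1 := by ring
            rw [e]; exact hx)
        (by show (γ (t1 + 1 * (s1 - t1))).1 = -n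
            have e : t1 + 1 * (s1 - t1) = s1 := by ring
            rw [e]
            have : -(γ s1).1 = n := hfs1
            linarith)
        hgc (fun p hp => (hgI hp).2) hg0 hg1
      refine hcontra _ ((hgI ⟨t, ht, rfl⟩).1) ⟨t1 + s * (s1 - t1), (hmem s hs).1, heq⟩
end

section
/- Let b > 0. For each n ≥ 1 define the rectangle Sₙ ⊆ ℝ² centred at the origin by: Sₙ = [-5·10ⁿb, 5·10ⁿb] × [-10ⁿb/2, 10ⁿb/2] if n is odd (horizontal), and Sₙ = [-10ⁿb/2, 10ⁿb/2] × [-5·10ⁿb, 5·10ⁿb] if n is even (vertical). Let V ⊆ ℝ² and suppose that for each n ≥ 1 there is a continuous path γₙ : [0,1] → Sₙ ∩ V crossing Sₙ the long way (for horizontal Sₙ: γₙ(0) on the left edge and γₙ(1) on the right edge; for vertical Sₙ: γₙ(0) on the bottom edge and γₙ(1) on the top edge). Then the union of the ranges of the γₙ is a connected unbounded subset of V; in particular V has an unbounded connected subset. -/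
open Bornology

/-- The strip `Sₙ` at scale `10ⁿ b`: horizontal (a `10·10ⁿb × 10ⁿb` rectangle centred
at the origin) when `n` is odd, vertical when `n` is even. -/
def strip (b : ℝ) (n : ℕ) : Set (ℝ × ℝ) :=
  if Odd n then
    Set.Icc (-(5 * 10 ^ n * b), -(10 ^ n * b / 2)) (5 * 10 ^ n * b, 10 ^ n * b / 2)
  else
    Set.Icc (-(10 ^ n * b / 2), -(5 * 10 ^ n * b)) (10 ^ n * b / 2, 5 * 10 ^ n * b)

open Set Complex

namespace StripAux

lemma re_div_pos {a b : ℂ} (hb : b ≠ 0) (h : ‖a - b‖ < ‖b‖) :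
    0 < (a / b).re := by
  have hb' : 0 < ‖b‖ := norm_pos_iff.mpr hb
  have h2 : ‖(a - b) / b‖ < 1 := by
    rw [norm_div, div_lt_one hb']; exact h
  have h3 : -‖(a - b) / b‖ ≤ ((a - b) / b).re :=
    (abs_le.1 (Complex.abs_re_le_norm _)).1
  have h1 : a / b = 1 + (a - b) / b := by field_simp; ring
  rw [h1, Complex.add_re, Complex.one_re]
  linarith

/-- partial argument-lift sum along a subdivision of `[0,1]` into `N` pieces. -/
noncomputable def Lsum (w : ℝ → ℂ) (N : ℕ) (t : ℝ) : ℝ :=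
  ∑ k ∈ Finset.range N,
    Complex.arg (w (max ((k : ℝ) / N) (min (((k : ℝ) + 1) / N) t)) / w ((k : ℝ) / N))

lemma exp_arg_mul_I (z : ℂ) (hz : z ≠ 0) :
    Complex.exp ((Complex.arg z : ℝ) * Complex.I) = z / (‖z‖ : ℝ) := by
  rw [eq_div_iff (by exact_mod_cast (norm_ne_zero_iff.mpr hz)), mul_comm]
  exact Complex.norm_mul_exp_arg_mul_I z

lemma Lsum_exp (w : ℝ → ℂ) (hw : ∀ x, w x ≠ 0) (N : ℕ) (hN : 0 < N) {t : ℝ}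
    (ht : t ∈ Set.Icc (0 : ℝ) 1) :
    Complex.exp ((Complex.arg (w 0) + Lsum w N t : ℝ) * Complex.I)
      = w t / (‖w t‖ : ℝ) := by
  have hNR : (0 : ℝ) < N := by exact_mod_cast hN
  have aux : ∀ K : ℕ,
      Complex.exp ((Complex.arg (w 0) + ∑ k ∈ Finset.range K,
        Complex.arg (w (max ((k : ℝ) / N) (min (((k : ℝ) + 1) / N) t)) / w ((k : ℝ) / N)) : ℝ)
          * Complex.I)
      = w (min ((K : ℝ) / N) t) / (‖w (min ((K : ℝ) / N) t)‖ : ℝ) := by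
    intro K
    induction K with
    | zero =>
      simp only [Finset.range_zero, Finset.sum_empty, add_zero, Nat.cast_zero, zero_div]
      rw [min_eq_left ht.1]
      exact exp_arg_mul_I (w 0) (hw 0)
    | succ K ih =>
      rw [Finset.sum_range_succ]
      set d : ℝ := (K : ℝ) / N with hd
      set d1 : ℝ := ((K : ℝ) + 1) / N with hd1
      have hdd1 : d ≤ d1 := by
        rw [hd, hd1, div_le_div_iff_of_pos_right hNR]; linarith
      have hcast : ((K + 1 : ℕ) : ℝ) / N = d1 := by push_cast; rfl
      have hstep : ((Complex.arg (w 0) + (∑ k ∈ Finset.range K,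
          Complex.arg (w (max ((k : ℝ) / N) (min (((k : ℝ) + 1) / N) t)) / w ((k : ℝ) / N))
          + Complex.arg (w (max d (min d1 t)) / w d)) : ℝ) * Complex.I)
          = ((Complex.arg (w 0) + ∑ k ∈ Finset.range K,
          Complex.arg (w (max ((k : ℝ) / N) (min (((k : ℝ) + 1) / N) t)) / w ((k : ℝ) / N)) : ℝ)
          * Complex.I)
          + ((Complex.arg (w (max d (min d1 t)) / w d) : ℝ) * Complex.I) := by
        push_cast; ring
      rw [hstep, Complex.exp_add, ih, hcast]
      rcases le_total t d with h1 | h1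
      · have e1 : min d t = t := min_eq_right h1
        have e2 : min d1 t = t := min_eq_right (h1.trans hdd1)
        have e3 : max d (min d1 t) = d := by rw [e2]; exact max_eq_left h1
        rw [e3, e1, e2, div_self (hw d), Complex.arg_one]
        simp
      · have e1 : min d t = d := min_eq_left h1
        have e3 : max d (min d1 t) = min d1 t := max_eq_right (le_min hdd1 h1)
        rw [e1, e3, exp_arg_mul_I _ (div_ne_zero (hw _) (hw d)), norm_div]
        push_cast
        have h4 : (‖w d‖ : ℂ) ≠ 0 := by
          exact_mod_cast norm_ne_zero_iff.mpr (hw d)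
        have h5 : (‖w (min d1 t)‖ : ℂ) ≠ 0 := by
          exact_mod_cast norm_ne_zero_iff.mpr (hw _)
        have key : ∀ (z1 z2 r1 r2 : ℂ), z1 ≠ 0 → r1 ≠ 0 → r2 ≠ 0 →
            z1 / r1 * (z2 / z1 / (r2 / r1)) = z2 / r2 := by
          intros z1 z2 r1 r2 h1 h2 h3
          field_simp
        exact key _ _ _ _ (hw d) h4 h5
  have h := aux N
  rw [div_self (ne_of_gt hNR), min_eq_right ht.2] at h
  simpa only [Lsum] using h

end StripAux

namespace StripAux

lemma Lsum_cont {X : Type*} [TopologicalSpace X] (v : X → ℝ → ℂ) (τ : X → ℝ) (N : ℕ)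
    (hN : 0 < N) (m : ℝ)
    (hv : Continuous fun q : X × ℝ => v q.1 q.2) (hτ : Continuous τ)
    (hlb : ∀ x t, m ≤ ‖v x t‖)
    (hmod : ∀ (x : X) (t t' : ℝ), |t - t'| ≤ 1 / (N : ℝ) → ‖v x t - v x t'‖ < m) :
    Continuous fun x : X => Lsum (v x) N (τ x) := by
  simp only [Lsum]
  apply continuous_finset_sum
  intro k _
  have hNR : (0 : ℝ) < N := by exact_mod_cast hN
  set c : ℝ → ℝ := fun t => max ((k : ℝ) / N) (min (((k : ℝ) + 1) / N) t) with hc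
  have hcc : Continuous c := continuous_const.max (continuous_const.min continuous_id)
  have hnum : Continuous fun x : X => v x (c (τ x)) :=
    hv.comp (continuous_id.prodMk (hcc.comp hτ))
  have hden : Continuous fun x : X => v x ((k : ℝ) / N) :=
    hv.comp (continuous_id.prodMk continuous_const)
  have hden0 : ∀ (x : X), v x ((k : ℝ) / N) ≠ 0 := by
    intro x h0
    have h1 := hlb x ((k : ℝ) / N)
    rw [h0, norm_zero] at h1
    have h2 := hmod x 0 0 (by rw [sub_self, abs_zero]; positivity)
    simp only [sub_self, norm_zero] at h2
    linarith
  have hdist : ∀ x t, ‖v x (c t) - v x ((k : ℝ) / N)‖ < m := by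
    intro x t
    apply hmod
    have h1 : (k : ℝ) / N ≤ c t := le_max_left _ _
    have h2 : c t ≤ ((k : ℝ) + 1) / N :=
      max_le (by rw [div_le_div_iff_of_pos_right hNR]; linarith) (min_le_left _ _)
    have h3 : ((k : ℝ) + 1) / N - (k : ℝ) / N = 1 / N := by ring
    rw [abs_le]
    constructor
    · have : (0 : ℝ) ≤ 1 / N := by positivity
      linarith
    · linarith
  have hr : Continuous fun x : X => v x (c (τ x)) / v x ((k : ℝ) / N) :=
    hnum.div hden fun x => hden0 x
  rw [continuous_iff_continuousAt]
  intro x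
  have harg : ContinuousAt Complex.arg (v x (c (τ x)) / v x ((k : ℝ) / N)) :=
    Complex.continuousAt_arg (Complex.mem_slitPlane_iff.mpr (Or.inl (re_div_pos
      (hden0 x) (lt_of_lt_of_le (hdist x (τ x)) (hlb x _)))))
  exact ContinuousAt.comp (g := Complex.arg)
    (f := fun x : X => v x (c (τ x)) / v x ((k : ℝ) / N)) harg hr.continuousAt

end StripAux

namespace StripAux

open Real

lemma window (y : ℝ) (n : ℤ) (h1 : |y - 2 * π * n| ≤ π) (h2 : 0 ≤ Real.cos y) :
    |y - 2 * π * n| ≤ π / 2 := by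
  by_contra hcon
  push_neg at hcon
  have hcos : Real.cos y = Real.cos (y - 2 * π * n) := by
    rw [← Real.cos_add_int_mul_two_pi (y - 2 * π * n) n]; ring_nf
  have hneg : Real.cos (y - 2 * π * n) < 0 := by
    rw [← Real.cos_abs]
    apply Real.cos_neg_of_pi_div_two_lt_of_lt hcon
    have := Real.pi_pos
    linarith
  rw [hcos] at h2; linarith

lemma cos_nonneg_confine (h : ℝ → ℝ) (hc : Continuous h)
    (hpos : ∀ x ∈ Set.Icc (0 : ℝ) 1, 0 ≤ Real.cos (h x)) :
    ∃ m : ℤ, ∀ x ∈ Set.Icc (0 : ℝ) 1, h x ∈ Set.Icc (2 * π * m - π / 2) (2 * π * m + π / 2) := by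
  have hπ := Real.pi_pos
  set m : ℤ := round (h 0 / (2 * π)) with hm
  have h0mem : (0 : ℝ) ∈ Set.Icc (0 : ℝ) 1 := by constructor <;> norm_num
  have hbase : |h 0 - 2 * π * m| ≤ π := by
    have h1 : |h 0 / (2 * π) - m| ≤ 1 / 2 := abs_sub_round _
    have h2 : h 0 - 2 * π * m = 2 * π * (h 0 / (2 * π) - m) := by field_simp
    rw [h2, abs_mul, abs_of_pos (by linarith : (0:ℝ) < 2 * π)]
    nlinarith
  have hbase2 : |h 0 - 2 * π * m| ≤ π / 2 := window _ _ hbase (hpos 0 h0mem)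
  refine ⟨m, fun x hx => ?_⟩
  rw [abs_le] at hbase2
  by_contra hcon
  simp only [Set.mem_Icc, not_and_or, not_le] at hcon
  have hivt : ∀ c : ℝ, Real.cos c < 0 → c ∈ Set.uIcc (h 0) (h x) → False := by
    intro c hcneg hcmem
    obtain ⟨y, hy, hyc⟩ := intermediate_value_uIcc (hc.continuousOn (s := Set.uIcc 0 x)) hcmem
    have hy1 : y ∈ Set.Icc (0 : ℝ) 1 := by
      rw [Set.uIcc_of_le hx.1] at hy
      exact ⟨hy.1, hy.2.trans hx.2⟩
    have := hpos y hy1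
    rw [hyc] at this; linarith
  rcases hcon with hlow | hhigh
  · -- h x < 2πm - π/2
    rcases le_or_gt (h x) (2 * π * m - π) with hfar | hnear
    · refine hivt (2 * π * m - π) ?_ ?_
      · have : Real.cos (2 * π * m - π) = -1 := by
          have := Real.cos_int_mul_two_pi_sub_pi m
          rw [← this]; ring_nf
        rw [this]; norm_num
      · apply Set.Icc_subset_uIcc'
        constructor <;> linarith
    · have hw : |h x - 2 * π * m| ≤ π := by rw [abs_le]; constructor <;> linarith
      have := window _ _ hw (hpos x hx)
      rw [abs_le] at this; linarith
  · -- 2πm + π/2 < h x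
    rcases le_or_gt (2 * π * m + π) (h x) with hfar | hnear
    · refine hivt (2 * π * m + π) ?_ ?_
      · have : Real.cos (2 * π * m + π) = -1 := by
          have := Real.cos_int_mul_two_pi_add_pi m
          rw [← this]; ring_nf
        rw [this]; norm_num
      · apply Set.Icc_subset_uIcc
        constructor <;> linarith
    · have hw : |h x - 2 * π * m| ≤ π := by rw [abs_le]; constructor <;> linarith
      have := window _ _ hw (hpos x hx)
      rw [abs_le] at this; linarith

end StripAux

namespace StripAux

open Real

lemma int_eq {a b : ℤ} (h1 : 2 * π * (a : ℝ) ≤ 2 * π * (b : ℝ) + 3 * π / 2)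
    (h2 : 2 * π * (b : ℝ) ≤ 2 * π * (a : ℝ) + 3 * π / 2) : a = b := by
  have hπ := Real.pi_pos
  have hm1 : (2 * π) * (a : ℝ) ≤ (2 * π) * ((b : ℝ) + 3 / 4) := by ring_nf; ring_nf at h1; linarith
  have hm2 : (2 * π) * (b : ℝ) ≤ (2 * π) * ((a : ℝ) + 3 / 4) := by ring_nf; ring_nf at h2; linarith
  have ha : (a : ℝ) ≤ (b : ℝ) + 3 / 4 := le_of_mul_le_mul_left hm1 (by linarith)
  have hb : (b : ℝ) ≤ (a : ℝ) + 3 / 4 := le_of_mul_le_mul_left hm2 (by linarith)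
  have ha' : a < b + 1 := by exact_mod_cast ha.trans_lt (by linarith : (b : ℝ) + 3 / 4 < (b : ℝ) + 1)
  have hb' : b < a + 1 := by exact_mod_cast hb.trans_lt (by linarith : (a : ℝ) + 3 / 4 < (a : ℝ) + 1)
  omega

lemma quad (Θ : ℝ → ℝ → ℝ) (hc : Continuous fun p : ℝ × ℝ => Θ p.1 p.2)
    (h1 : ∀ s ∈ Set.Icc (0 : ℝ) 1, 0 < Real.sin (Θ s 0))
    (h2 : ∀ s ∈ Set.Icc (0 : ℝ) 1, Real.sin (Θ s 1) < 0)
    (h3 : ∀ t ∈ Set.Icc (0 : ℝ) 1, Real.cos (Θ 0 t) ≤ 0)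
    (h4 : ∀ t ∈ Set.Icc (0 : ℝ) 1, 0 ≤ Real.cos (Θ 1 t)) : False := by
  have hπ := Real.pi_pos
  have hm0 : (0 : ℝ) ∈ Set.Icc (0 : ℝ) 1 := by norm_num
  have hm1 : (1 : ℝ) ∈ Set.Icc (0 : ℝ) 1 := by norm_num
  have hbot : Continuous fun s : ℝ => Θ s 0 := hc.comp (continuous_id.prodMk continuous_const)
  have htop : Continuous fun s : ℝ => Θ s 1 := hc.comp (continuous_id.prodMk continuous_const)
  have hlft : Continuous fun t : ℝ => Θ 0 t := hc.comp (continuous_const.prodMk continuous_id)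
  have hrgt : Continuous fun t : ℝ => Θ 1 t := hc.comp (continuous_const.prodMk continuous_id)
  obtain ⟨k, hk⟩ := cos_nonneg_confine (fun s => Θ s 0 - π / 2) (hbot.sub continuous_const)
    (fun s hs => by rw [Real.cos_sub_pi_div_two]; exact le_of_lt (h1 s hs))
  obtain ⟨l, hl⟩ := cos_nonneg_confine (fun s => Θ s 1 + π / 2) (htop.add continuous_const)
    (fun s hs => by rw [Real.cos_add_pi_div_two]; linarith [h2 s hs])
  obtain ⟨j, hj⟩ := cos_nonneg_confine (fun t => Θ 0 t + π) (hlft.add continuous_const)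
    (fun t ht => by rw [Real.cos_add_pi]; linarith [h3 t ht])
  obtain ⟨m, hmm⟩ := cos_nonneg_confine (fun t => Θ 1 t) hrgt h4
  obtain ⟨hP1, hP2⟩ := hk 0 hm0
  obtain ⟨hQ1, hQ2⟩ := hk 1 hm1
  obtain ⟨hR1, hR2⟩ := hl 1 hm1
  obtain ⟨hS1, hS2⟩ := hl 0 hm0
  obtain ⟨hP3, hP4⟩ := hj 0 hm0
  obtain ⟨hS3, hS4⟩ := hj 1 hm1
  obtain ⟨hQ3, hQ4⟩ := hmm 0 hm0
  obtain ⟨hR3, hR4⟩ := hmm 1 hm1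

  have hjk : j = k + 1 := by
    apply int_eq <;> push_cast <;> linarith
  have hmk : m = k := by
    apply int_eq <;> push_cast <;> linarith
  have hmkR : (m : ℝ) = (k : ℝ) := by exact_mod_cast hmk
  have hjkR : (j : ℝ) = (k : ℝ) + 1 := by exact_mod_cast hjk
  rw [hmkR] at hR3 hR4
  have hlk : l = k := by
    apply int_eq <;> push_cast <;> linarith
  have hlkR : (l : ℝ) = (k : ℝ) := by exact_mod_cast hlk
  rw [hlkR] at hS1 hS2
  rw [hjkR] at hS3 hS4
  linarith

end StripAux

namespace StripAux

open Real Complex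

set_option maxHeartbeats 1000000 in
/-- Two paths crossing a rectangle in perpendicular directions must intersect. -/
lemma crossing {A B B' : ℝ} (hB : B' < B)
    {f g : ℝ → ℝ × ℝ} (hf : ContinuousOn f (Set.Icc 0 1)) (hg : ContinuousOn g (Set.Icc 0 1))
    (hf2 : ∀ s ∈ Set.Icc (0 : ℝ) 1, |(f s).2| ≤ B')
    (hg1 : ∀ t ∈ Set.Icc (0 : ℝ) 1, |(g t).1| ≤ A)
    (hf0 : (f 0).1 = -A) (hf1 : (f 1).1 = A)
    (hg0 : (g 0).2 = -B) (hgB : (g 1).2 = B) :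
    ∃ s ∈ Set.Icc (0 : ℝ) 1, ∃ t ∈ Set.Icc (0 : ℝ) 1, f s = g t := by
  by_contra hcon
  push_neg at hcon
  have h01 : (0 : ℝ) ∈ Set.Icc (0 : ℝ) 1 := by norm_num
  have h11 : (1 : ℝ) ∈ Set.Icc (0 : ℝ) 1 := by norm_num
  -- the clamp function
  set cl : ℝ → ℝ := fun x => max (min 1 x) 0 with hcl
  have hclmem : ∀ x, cl x ∈ Set.Icc (0 : ℝ) 1 :=
    fun x => ⟨le_max_right _ _, max_le (min_le_left _ _) (by norm_num)⟩
  have hclid : ∀ x ∈ Set.Icc (0 : ℝ) 1, cl x = x := by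
    intro x hx
    rw [hcl]
    simp only
    rw [min_eq_right hx.2, max_eq_left hx.1]
  have hclc : Continuous cl := (continuous_const.min continuous_id).max continuous_const
  have hcllip : ∀ a b2 : ℝ, |cl a - cl b2| ≤ |a - b2| := by
    intro a b2
    refine (abs_max_sub_max_le_abs _ _ _).trans ?_
    refine (abs_min_sub_min_le_max 1 a 1 b2).trans ?_
    simp
  have hcl0 : cl 0 = 0 := hclid 0 h01
  have hcl1 : cl 1 = 1 := hclid 1 h11
  -- the complex-valued paths and their difference
  set vF : ℝ → ℂ := fun s => ((f (cl s)).1 : ℂ) + ((f (cl s)).2 : ℂ) * Complex.I with hvF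
  set w : ℝ → ℂ := fun t => ((g (cl t)).1 : ℂ) + ((g (cl t)).2 : ℂ) * Complex.I with hw
  set u : ℝ → ℝ → ℂ := fun s t => vF s - w t with hu
  have hre : ∀ p : ℝ × ℝ, ((p.1 : ℂ) + (p.2 : ℂ) * Complex.I).re = p.1 := by intro p; simp
  have him : ∀ p : ℝ × ℝ, ((p.1 : ℂ) + (p.2 : ℂ) * Complex.I).im = p.2 := by intro p; simp
  have hFc : Continuous fun s => f (cl s) := hf.comp_continuous hclc hclmem
  have hGc : Continuous fun t => g (cl t) := hg.comp_continuous hclc hclmem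
  have hvFc : Continuous vF := by
    apply Continuous.add
    · exact Complex.continuous_ofReal.comp (continuous_fst.comp hFc)
    · exact (Complex.continuous_ofReal.comp (continuous_snd.comp hFc)).mul continuous_const
  have hwc : Continuous w := by
    apply Continuous.add
    · exact Complex.continuous_ofReal.comp (continuous_fst.comp hGc)
    · exact (Complex.continuous_ofReal.comp (continuous_snd.comp hGc)).mul continuous_const
  have hune : ∀ s t, u s t ≠ 0 := by
    intro s t h0
    have h1 : vF s = w t := by rwa [hu, sub_eq_zero] at h0
    have h2 : f (cl s) = g (cl t) := by
      have hr := congrArg Complex.re h1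
      have hi := congrArg Complex.im h1
      rw [hvF, hw] at hr hi
      simp only at hr hi
      rw [hre ((f (cl s)).1, (f (cl s)).2), hre ((g (cl t)).1, (g (cl t)).2)] at hr
      rw [him ((f (cl s)).1, (f (cl s)).2), him ((g (cl t)).1, (g (cl t)).2)] at hi
      exact Prod.ext hr hi
    exact hcon (cl s) (hclmem s) (cl t) (hclmem t) h2
  -- the minimum of |u| over the square
  have hKc : IsCompact ((Set.Icc (0:ℝ) 1) ×ˢ (Set.Icc (0:ℝ) 1)) := isCompact_Icc.prod isCompact_Icc
  have hφc : Continuous fun p : ℝ × ℝ => ‖u p.1 p.2‖ :=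
    continuous_norm.comp ((hvFc.comp continuous_fst).sub (hwc.comp continuous_snd))
  obtain ⟨p0, hp0K, hmin'⟩ := hKc.exists_isMinOn ⟨(0, 0), by constructor <;> exact h01⟩
    hφc.continuousOn
  have hmin : ∀ p ∈ (Set.Icc (0:ℝ) 1) ×ˢ (Set.Icc (0:ℝ) 1),
      ‖u p0.1 p0.2‖ ≤ ‖u p.1 p.2‖ := fun p hp => hmin' hp
  set m := ‖u p0.1 p0.2‖ with hm'
  have hm : 0 < m := norm_pos_iff.mpr (hune _ _)
  have hucl : ∀ s t, u s t = u (cl s) (cl t) := by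
    intro s t
    rw [hu]
    simp only [hvF, hw]
    rw [hclid _ (hclmem s), hclid _ (hclmem t)]
  have hlb : ∀ s t, m ≤ ‖u s t‖ := by
    intro s t
    rw [hucl s t]
    exact hmin (cl s, cl t) ⟨hclmem s, hclmem t⟩
  -- uniform continuity, choice of N
  have hucw := Metric.uniformContinuousOn_iff.mp
    ((isCompact_Icc : IsCompact (Set.Icc (0:ℝ) 1)).uniformContinuousOn_of_continuous
      hwc.continuousOn) m hm
  obtain ⟨δ1, hδ1, hw1⟩ := hucw
  have hucv := Metric.uniformContinuousOn_iff.mp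
    ((isCompact_Icc : IsCompact (Set.Icc (0:ℝ) 1)).uniformContinuousOn_of_continuous
      hvFc.continuousOn) m hm
  obtain ⟨δ2, hδ2, hv2⟩ := hucv
  obtain ⟨N0, hN0⟩ := exists_nat_one_div_lt (lt_min hδ1 hδ2)
  set N : ℕ := N0 + 1 with hN'
  have hN : 0 < N := Nat.succ_pos _
  have hNcast : (1 : ℝ) / N = 1 / (N0 + 1 : ℝ) := by rw [hN']; push_cast; ring
  have hmodw : ∀ t t' : ℝ, |t - t'| ≤ 1 / (N : ℝ) → ‖w t - w t'‖ < m := by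
    intro t t' hdist
    have e1 : w t = w (cl t) := by rw [hw]; simp only; rw [hclid _ (hclmem t)]
    have e2 : w t' = w (cl t') := by rw [hw]; simp only; rw [hclid _ (hclmem t')]
    rw [e1, e2, ← Complex.dist_eq]
    apply hw1 (cl t) (hclmem t) (cl t') (hclmem t')
    rw [Real.dist_eq]
    calc |cl t - cl t'| ≤ |t - t'| := hcllip t t'
    _ ≤ 1 / (N : ℝ) := hdist
    _ < δ1 := by rw [hNcast]; exact hN0.trans_le (min_le_left _ _)
  have hmodv : ∀ s s' : ℝ, |s - s'| ≤ 1 / (N : ℝ) → ‖vF s - vF s'‖ < m := by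
    intro s s' hdist
    have e1 : vF s = vF (cl s) := by rw [hvF]; simp only; rw [hclid _ (hclmem s)]
    have e2 : vF s' = vF (cl s') := by rw [hvF]; simp only; rw [hclid _ (hclmem s')]
    rw [e1, e2, ← Complex.dist_eq]
    apply hv2 (cl s) (hclmem s) (cl s') (hclmem s')
    rw [Real.dist_eq]
    calc |cl s - cl s'| ≤ |s - s'| := hcllip s s'
    _ ≤ 1 / (N : ℝ) := hdist
    _ < δ2 := by rw [hNcast]; exact hN0.trans_le (min_le_right _ _)
  -- the lifted angle
  set Θ : ℝ × ℝ → ℝ := fun p =>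
    Complex.arg (u 0 0) + Lsum (fun x => u x 0) N p.1 + Lsum (u p.1) N p.2 with hΘ
  have huv : Continuous fun q : ℝ × ℝ => u q.1 q.2 := by
    rw [hu]
    exact (hvFc.comp continuous_fst).sub (hwc.comp continuous_snd)
  have hmod2 : ∀ (x : ℝ) (t t' : ℝ), |t - t'| ≤ 1 / (N : ℝ) →
      ‖u x t - u x t'‖ < m := by
    intro x t t' hd
    have heq : u x t - u x t' = w t' - w t := by rw [hu]; ring
    rw [heq]
    rw [abs_sub_comm] at hd
    exact hmodw t' t hd
  have huv' : Continuous fun q : (ℝ × ℝ) × ℝ => u q.1.1 q.2 := by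
    rw [hu]
    exact (hvFc.comp (continuous_fst.comp continuous_fst)).sub (hwc.comp continuous_snd)
  have hL2 : Continuous fun q : ℝ × ℝ => Lsum (u q.1) N q.2 :=
    Lsum_cont (fun p : ℝ × ℝ => u p.1) Prod.snd N hN m huv' continuous_snd
      (fun x t => hlb x.1 t) (fun x => hmod2 x.1)
  have hmod1 : ∀ (x : ℝ × ℝ) (t t' : ℝ), |t - t'| ≤ 1 / (N : ℝ) →
      ‖u t 0 - u t' 0‖ < m := by
    intro x t t' hd
    have heq : u t 0 - u t' 0 = vF t - vF t' := by rw [hu]; ring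
    rw [heq]
    exact hmodv t t' hd
  have huv1 : Continuous fun q : (ℝ × ℝ) × ℝ => (fun (_ : ℝ × ℝ) (x : ℝ) => u x 0) q.1 q.2 := by
    simp only
    rw [hu]
    exact (hvFc.comp continuous_snd).sub continuous_const
  have hL1 : Continuous fun p : ℝ × ℝ => Lsum (fun x => u x 0) N p.1 :=
    Lsum_cont (fun (_ : ℝ × ℝ) (x : ℝ) => u x 0) Prod.fst N hN m huv1 continuous_fst
      (fun x t => hlb t 0) hmod1
  have hΘc : Continuous Θ := (continuous_const.add hL1).add hL2
  -- the key identity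
  have hkey : ∀ s ∈ Set.Icc (0:ℝ) 1, ∀ t ∈ Set.Icc (0:ℝ) 1,
      u s t = (‖u s t‖ : ℝ) * Complex.exp ((Θ (s, t) : ℝ) * Complex.I) := by
    intro s hs t ht
    have e1 := Lsum_exp (fun x => u x 0) (fun x => hune x 0) N hN hs
    have e2 := Lsum_exp (u s) (fun x => hune s x) N hN ht
    have e0 := exp_arg_mul_I (u s 0) (hune s 0)
    have hsplit : ((Θ (s, t) : ℝ) : ℂ) * Complex.I =
        ((Complex.arg ((fun x => u x 0) 0) + Lsum (fun x => u x 0) N s : ℝ) : ℂ) * Complex.I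
        + ((Complex.arg (u s 0) + Lsum (u s) N t : ℝ) : ℂ) * Complex.I
        - ((Complex.arg (u s 0) : ℝ) : ℂ) * Complex.I := by
      rw [hΘ]
      push_cast
      ring
    rw [hsplit, Complex.exp_sub, Complex.exp_add, e1, e2, e0]
    have ha1 : ((‖u s 0‖ : ℝ) : ℂ) ≠ 0 := by
      exact_mod_cast norm_ne_zero_iff.mpr (hune s 0)
    have ha2 : ((‖u s t‖ : ℝ) : ℂ) ≠ 0 := by
      exact_mod_cast norm_ne_zero_iff.mpr (hune s t)
    field_simp [hune s 0]
  -- edge sign conditions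
  have hbounds : ∀ s t : ℝ,
      (u s t).re = (f (cl s)).1 - (g (cl t)).1 ∧ (u s t).im = (f (cl s)).2 - (g (cl t)).2 := by
    intro s t
    rw [hu]
    simp only [hvF, hw, Complex.sub_re, Complex.sub_im]
    rw [hre ((f (cl s)).1, (f (cl s)).2), hre ((g (cl t)).1, (g (cl t)).2),
      him ((f (cl s)).1, (f (cl s)).2), him ((g (cl t)).1, (g (cl t)).2)]
    exact ⟨rfl, rfl⟩
  have hsin : ∀ s t : ℝ, s ∈ Set.Icc (0:ℝ) 1 → t ∈ Set.Icc (0:ℝ) 1 →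
      (u s t).im = ‖u s t‖ * Real.sin (Θ (s, t)) := by
    intro s t hs ht
    have := congrArg Complex.im (hkey s hs t ht)
    rwa [Complex.im_ofReal_mul, Complex.exp_ofReal_mul_I_im] at this
  have hcos : ∀ s t : ℝ, s ∈ Set.Icc (0:ℝ) 1 → t ∈ Set.Icc (0:ℝ) 1 →
      (u s t).re = ‖u s t‖ * Real.cos (Θ (s, t)) := by
    intro s t hs ht
    have := congrArg Complex.re (hkey s hs t ht)
    rwa [Complex.re_ofReal_mul, Complex.exp_ofReal_mul_I_re] at this
  -- apply quad
  apply quad (fun a b2 => Θ (a, b2)) hΘc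
  · -- bottom: sin > 0
    intro s hs
    have him' := (hbounds s 0).2
    rw [hcl0, hg0] at him'
    have h2 : -B' ≤ (f (cl s)).2 := (abs_le.mp (hf2 _ (hclmem s))).1
    have hpos : 0 < (u s 0).im := by rw [him']; linarith
    rw [hsin s 0 hs h01] at hpos
    by_contra hneg
    push_neg at hneg
    nlinarith [hlb s 0, hm]
  · -- top: sin < 0
    intro s hs
    have him' := (hbounds s 1).2
    rw [hcl1, hgB] at him'
    have h2 : (f (cl s)).2 ≤ B' := (abs_le.mp (hf2 _ (hclmem s))).2
    have hneg' : (u s 1).im < 0 := by rw [him']; linarith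
    rw [hsin s 1 hs h11] at hneg'
    by_contra hpos
    push_neg at hpos
    nlinarith [hlb s 1, hm]
  · -- left: cos ≤ 0
    intro t ht
    have hre' := (hbounds 0 t).1
    rw [hcl0, hf0] at hre'
    have h2 : -A ≤ (g (cl t)).1 := (abs_le.mp (hg1 _ (hclmem t))).1
    have hnp : (u 0 t).re ≤ 0 := by rw [hre']; linarith
    rw [hcos 0 t h01 ht] at hnp
    by_contra hpos
    push_neg at hpos
    nlinarith [hlb 0 t, hm]
  · -- right: cos ≥ 0
    intro t ht
    have hre' := (hbounds 1 t).1
    rw [hcl1, hf1] at hre'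
    have h2 : (g (cl t)).1 ≤ A := (abs_le.mp (hg1 _ (hclmem t))).2
    have hnn : 0 ≤ (u 1 t).re := by rw [hre']; linarith
    rw [hcos 1 t h11 ht] at hnn
    by_contra hneg
    push_neg at hneg
    nlinarith [hlb 1 t, hm]

end StripAux

namespace StripAux

lemma strip_bounds_odd {b : ℝ} {n : ℕ} (hn : Odd n) {p : ℝ × ℝ} (hp : p ∈ strip b n) :
    |p.1| ≤ 5 * 10 ^ n * b ∧ |p.2| ≤ 10 ^ n * b / 2 := by
  rw [strip, if_pos hn, Set.mem_Icc, Prod.le_def, Prod.le_def] at hp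
  obtain ⟨⟨h1, h2⟩, h3, h4⟩ := hp
  exact ⟨abs_le.mpr ⟨h1, h3⟩, abs_le.mpr ⟨h2, h4⟩⟩

lemma strip_bounds_even {b : ℝ} {n : ℕ} (hn : ¬ Odd n) {p : ℝ × ℝ} (hp : p ∈ strip b n) :
    |p.1| ≤ 10 ^ n * b / 2 ∧ |p.2| ≤ 5 * 10 ^ n * b := by
  rw [strip, if_neg hn, Set.mem_Icc, Prod.le_def, Prod.le_def] at hp
  obtain ⟨⟨h1, h2⟩, h3, h4⟩ := hp
  exact ⟨abs_le.mpr ⟨h1, h3⟩, abs_le.mpr ⟨h2, h4⟩⟩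

end StripAux

/-- If `V ⊆ ℝ²` contains, for every `n ≥ 1`, a long-way crossing `γₙ` of the strip `Sₙ`
(alternating horizontal/vertical, with lengths growing like `10ⁿ b`), then the union of
the ranges of the `γₙ` is a connected unbounded subset of `V`. -/
theorem union_of_strip_crossings_unbounded_connected
    (b : ℝ) (hb : 0 < b) (V : Set (ℝ × ℝ)) (γ : ℕ → ℝ → ℝ × ℝ)
    (hc : ∀ n, 1 ≤ n → ContinuousOn (γ n) (Set.Icc 0 1))
    (hr : ∀ n, 1 ≤ n → γ n '' Set.Icc 0 1 ⊆ strip b n ∩ V)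
    (hodd : ∀ n, 1 ≤ n → Odd n →
      (γ n 0).1 = -(5 * 10 ^ n * b) ∧ (γ n 1).1 = 5 * 10 ^ n * b)
    (heven : ∀ n, 1 ≤ n → Even n →
      (γ n 0).2 = -(5 * 10 ^ n * b) ∧ (γ n 1).2 = 5 * 10 ^ n * b) :
    IsConnected (⋃ n : ℕ, γ (n + 1) '' Set.Icc 0 1) ∧
      ¬ IsBounded (⋃ n : ℕ, γ (n + 1) '' Set.Icc 0 1) ∧
      (⋃ n : ℕ, γ (n + 1) '' Set.Icc 0 1) ⊆ V := by
  have h01 : (0 : ℝ) ∈ Set.Icc (0 : ℝ) 1 := by norm_num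
  have h11 : (1 : ℝ) ∈ Set.Icc (0 : ℝ) 1 := by norm_num
  -- chain intersections
  have chain : ∀ n : ℕ, 1 ≤ n →
      ((γ n '' Set.Icc 0 1) ∩ (γ (n + 1) '' Set.Icc 0 1)).Nonempty := by
    intro n hn
    have hpow : (0 : ℝ) < (10 : ℝ) ^ n := by positivity
    have hBB : 10 ^ n * b / 2 < 5 * 10 ^ (n + 1) * b := by
      rw [pow_succ]
      nlinarith
    have hA : (10 : ℝ) ^ (n + 1) * b / 2 = 5 * 10 ^ n * b := by
      rw [pow_succ]; ring
    rcases Nat.even_or_odd n with hne | hno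
    · -- n even, n+1 odd
      have hno' : ¬ Odd n := Nat.not_odd_iff_even.mpr hne
      have hn1o : Odd (n + 1) := Even.add_one hne
      obtain ⟨hf0, hf1⟩ := heven n hn hne
      obtain ⟨hg0, hg1⟩ := hodd (n + 1) (by omega) hn1o
      have hfc : ContinuousOn (fun s => ((γ n s).2, (γ n s).1)) (Set.Icc (0:ℝ) 1) :=
        ((continuous_snd.comp_continuousOn (hc n hn)).prodMk
          (continuous_fst.comp_continuousOn (hc n hn)))
      have hgc : ContinuousOn (fun t => ((γ (n+1) t).2, (γ (n+1) t).1)) (Set.Icc (0:ℝ) 1) :=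
        ((continuous_snd.comp_continuousOn (hc (n+1) (by omega))).prodMk
          (continuous_fst.comp_continuousOn (hc (n+1) (by omega))))
      have hfs : ∀ s ∈ Set.Icc (0:ℝ) 1, |((fun s => ((γ n s).2, (γ n s).1)) s).2| ≤
          10 ^ n * b / 2 := by
        intro s hs
        exact (StripAux.strip_bounds_even hno' ((hr n hn (Set.mem_image_of_mem _ hs)).1)).1
      have hgs : ∀ t ∈ Set.Icc (0:ℝ) 1, |((fun t => ((γ (n+1) t).2, (γ (n+1) t).1)) t).1| ≤
          5 * 10 ^ n * b := by
        intro t ht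
        have h2 := (StripAux.strip_bounds_odd hn1o
          ((hr (n+1) (by omega) (Set.mem_image_of_mem _ ht)).1)).2
        rwa [hA] at h2
      obtain ⟨s, hs, t, ht, hst⟩ := StripAux.crossing hBB hfc hgc hfs hgs hf0 hf1 hg0 hg1
      refine ⟨γ n s, Set.mem_image_of_mem _ hs, ?_⟩
      have e1 : (γ n s).1 = (γ (n+1) t).1 := congrArg Prod.snd hst
      have e2 : (γ n s).2 = (γ (n+1) t).2 := congrArg Prod.fst hst
      rw [show γ n s = γ (n+1) t from Prod.ext e1 e2]
      exact Set.mem_image_of_mem _ ht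
    · -- n odd, n+1 even
      have hn1e : Even (n + 1) := Odd.add_one hno
      have hn1no : ¬ Odd (n + 1) := Nat.not_odd_iff_even.mpr hn1e
      obtain ⟨hf0, hf1⟩ := hodd n hn hno
      obtain ⟨hg0, hg1⟩ := heven (n + 1) (by omega) hn1e
      have hfs : ∀ s ∈ Set.Icc (0:ℝ) 1, |(γ n s).2| ≤ 10 ^ n * b / 2 := by
        intro s hs
        exact (StripAux.strip_bounds_odd hno ((hr n hn (Set.mem_image_of_mem _ hs)).1)).2
      have hgs : ∀ t ∈ Set.Icc (0:ℝ) 1, |(γ (n+1) t).1| ≤ 5 * 10 ^ n * b := by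
        intro t ht
        have h2 := (StripAux.strip_bounds_even hn1no
          ((hr (n+1) (by omega) (Set.mem_image_of_mem _ ht)).1)).1
        rwa [hA] at h2
      obtain ⟨s, hs, t, ht, hst⟩ := StripAux.crossing hBB (hc n hn) (hc (n+1) (by omega))
        hfs hgs hf0 hf1 hg0 hg1
      refine ⟨γ n s, Set.mem_image_of_mem _ hs, ?_⟩
      rw [hst]
      exact Set.mem_image_of_mem _ ht
  refine ⟨?_, ?_, ?_⟩
  · apply IsConnected.iUnion_of_chain
    · intro n
      exact (isConnected_Icc (by norm_num : (0:ℝ) ≤ 1)).image _ (hc (n+1) (by omega))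
    · intro n
      have h := chain (n+1) (by omega)
      simpa [Order.succ_eq_add_one] using h
  · intro hbdd
    obtain ⟨C, hC⟩ := isBounded_iff_forall_norm_le.mp hbdd
    obtain ⟨n, hn⟩ := pow_unbounded_of_one_lt (C / (5 * b)) (by norm_num : (1:ℝ) < 10)
    have hx : γ (n+1) 1 ∈ ⋃ k : ℕ, γ (k + 1) '' Set.Icc 0 1 :=
      Set.mem_iUnion.mpr ⟨n, Set.mem_image_of_mem _ h11⟩
    have hnorm := hC _ hx
    have hcoord : (5 * 10 ^ (n+1) * b) ≤ ‖γ (n+1) 1‖ := by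
      have hpos : (0:ℝ) < 5 * 10 ^ (n+1) * b := by positivity
      rcases Nat.even_or_odd (n+1) with he | ho
      · have h2 := (heven (n+1) (by omega) he).2
        calc 5 * 10 ^ (n+1) * b = |(γ (n+1) 1).2| := by rw [h2, abs_of_pos hpos]
        _ = ‖(γ (n+1) 1).2‖ := (Real.norm_eq_abs _).symm
        _ ≤ ‖γ (n+1) 1‖ := norm_snd_le _
      · have h2 := (hodd (n+1) (by omega) ho).2
        calc 5 * 10 ^ (n+1) * b = |(γ (n+1) 1).1| := by rw [h2, abs_of_pos hpos]
        _ = ‖(γ (n+1) 1).1‖ := (Real.norm_eq_abs _).symm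
        _ ≤ ‖γ (n+1) 1‖ := norm_fst_le _
    have hlt : C < 5 * 10 ^ (n+1) * b := by
      rw [div_lt_iff₀ (by positivity : (0:ℝ) < 5 * b)] at hn
      have hp : (0:ℝ) < (10:ℝ) ^ n := by positivity
      rw [pow_succ]
      nlinarith
    linarith
  · intro x hx
    obtain ⟨n, hxn⟩ := Set.mem_iUnion.mp hx
    exact (hr (n+1) (by omega) hxn).2
end
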